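/- arXiv:0803.0800 — 3 statements merged into one kernel-verified Lean document; each statement's English description precedes it below -/
import Mathlib

section
/- Suppose r and q satisfy conditions (1.2) and additionally ∫_{-∞}^0 dt/r(t) = ∫_0^∞ dt/r(t) = ∞ (condition (1.4)). If for some p ∈ [1,∞) the equation -(r(x)y'(x))' + q(x)y(x) = f(x) is correctly solvable in L_p(ℝ), then: (i) ∫_{-∞}^x q(t)dt > 0 and ∫_x^∞ q(t)dt > 0 for every x ∈ ℝ (condition (1.5)); and (ii) for every x ∈ ℝ, (∫_{x-d}^x dt/r(t))·(∫_{x-d}^x q(t)dt) → ∞ as |d| → ∞, where for d < 0 the integrals are taken over [x, x-d] (condition (1.6)). -/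
open MeasureTheory Set Filter
open scoped ENNReal

noncomputable section

/-- Conditions (1.2): `r > 0`, `q ≥ 0`, `1/r ∈ L¹loc(ℝ)`, `q ∈ L¹loc(ℝ)`. -/
def Cond12 (r q : ℝ → ℝ) : Prop :=
  (∀ x : ℝ, 0 < r x) ∧ (∀ x : ℝ, 0 ≤ q x) ∧
    LocallyIntegrable (fun x : ℝ => (r x)⁻¹) volume ∧ LocallyIntegrable q volume

/-- Condition (1.4): `∫_{-∞}^0 dt/r(t) = ∫_0^∞ dt/r(t) = ∞`. -/
def Cond14 (r : ℝ → ℝ) : Prop :=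
  (∫⁻ t in Iic (0 : ℝ), ENNReal.ofReal (r t)⁻¹) = ⊤ ∧
  (∫⁻ t in Ici (0 : ℝ), ENNReal.ofReal (r t)⁻¹) = ⊤

/-- Condition (1.5): `∫_{-∞}^x q > 0` and `∫_x^∞ q > 0` for all `x`. -/
def Cond15 (q : ℝ → ℝ) : Prop :=
  ∀ x : ℝ, (0 < ∫⁻ t in Iic x, ENNReal.ofReal (q t)) ∧
           (0 < ∫⁻ t in Ici x, ENNReal.ofReal (q t))

/-- Condition (1.6): `(∫_{x-d}^x 1/r)·(∫_{x-d}^x q) → ∞` as `|d| → ∞` (for `d < 0` the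
integrals are taken over `[x, x-d]`; the set `uIoc (x-d) x` covers both orientations). -/
def Cond16 (r q : ℝ → ℝ) : Prop :=
  ∀ x : ℝ, Tendsto (fun d : ℝ =>
      (∫ t in uIoc (x - d) x, (r t)⁻¹) * ∫ t in uIoc (x - d) x, q t)
    (atTop ⊔ atBot) atTop

/-- `y` is a solution of `-(r y')' + q y = f` with (a.e.) derivative `y'`:
`y` and `r·y'` are (locally) absolutely continuous, expressed via the integral
characterization, and the equation holds. -/
def IsSolutionWith (r q f y y' : ℝ → ℝ) : Prop :=
  (∀ a b : ℝ, IntervalIntegrable y' volume a b) ∧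
  (∀ x : ℝ, y x = y 0 + ∫ t in (0:ℝ)..x, y' t) ∧
  (∀ a b : ℝ, IntervalIntegrable (fun t => q t * y t - f t) volume a b) ∧
  (∀ x : ℝ, r x * y' x = r 0 * y' 0 + ∫ t in (0:ℝ)..x, (q t * y t - f t))

/-- `y` is a solution of `-(r y')' + q y = f`. -/
def IsSolution (r q f y : ℝ → ℝ) : Prop := ∃ y' : ℝ → ℝ, IsSolutionWith r q f y y'

/-- `z` is a solution of the homogeneous equation `(r z')' = q z` with derivative `z'`. -/
def IsSolutionHom (r q z z' : ℝ → ℝ) : Prop := IsSolutionWith r q (fun _ => 0) z z'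

/-- Membership in `L_p(ℝ)`. -/
def MemLP (f : ℝ → ℝ) (p : ℝ) : Prop := MemLp f (ENNReal.ofReal p) volume

/-- The `L_p(ℝ)` norm. -/
def lpNorm (f : ℝ → ℝ) (p : ℝ) : ℝ≥0∞ := eLpNorm f (ENNReal.ofReal p) volume

/-- The equation `-(r y')' + q y = f` is correctly solvable in `L_p(ℝ)`: for every
`f ∈ L_p` there is a unique solution `y ∈ L_p`, and `‖y‖_p ≤ c(p)‖f‖_p` with an
absolute constant `c(p) > 0`. -/
def CorrectlySolvable (r q : ℝ → ℝ) (p : ℝ) : Prop :=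
  (∀ f : ℝ → ℝ, MemLP f p → ∃! y : ℝ → ℝ, IsSolution r q f y ∧ MemLP y p) ∧
  ∃ c : ℝ, 0 < c ∧ ∀ f y : ℝ → ℝ, MemLP f p → IsSolution r q f y → MemLP y p →
    lpNorm y p ≤ ENNReal.ofReal c * lpNorm f p

/-- `{u, v}` (with derivatives `u'`, `v'`) is the fundamental system of solutions of
`(r z')' = q z` with properties (1.8)-(1.11). -/
def IsFSS (r q u u' v v' : ℝ → ℝ) : Prop :=
  IsSolutionHom r q u u' ∧ IsSolutionHom r q v v' ∧
  (∀ x : ℝ, 0 < u x) ∧ (∀ x : ℝ, 0 < v x) ∧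
  (∀ x : ℝ, 0 ≤ v' x) ∧ (∀ x : ℝ, u' x ≤ 0) ∧
  (∀ x : ℝ, r x * (v' x * u x - u' x * v x) = 1) ∧
  Tendsto (fun x => v x / u x) atBot (nhds 0) ∧
  Tendsto (fun x => u x / v x) atTop (nhds 0) ∧
  (∫⁻ t in Iic (0 : ℝ), ENNReal.ofReal (r t * (v t) ^ 2)⁻¹) = ⊤ ∧
  (∫⁻ t in Ici (0 : ℝ), ENNReal.ofReal (r t * (u t) ^ 2)⁻¹) = ⊤ ∧
  (∫⁻ t in Ici (0 : ℝ), ENNReal.ofReal (r t * (v t) ^ 2)⁻¹) < ⊤ ∧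
  (∫⁻ t in Iic (0 : ℝ), ENNReal.ofReal (r t * (u t) ^ 2)⁻¹) < ⊤

/-- The Green function `G(x,t)` of (1.12). -/
def greenK (u v : ℝ → ℝ) (x t : ℝ) : ℝ := if t ≤ x then u x * v t else u t * v x

/-- `(G₁ f)(x) = u(x) ∫_{-∞}^x v f`. -/
def G1op (u v f : ℝ → ℝ) (x : ℝ) : ℝ := u x * ∫ t in Iic x, v t * f t

/-- `(G₂ f)(x) = v(x) ∫_x^∞ u f`. -/
def G2op (u v f : ℝ → ℝ) (x : ℝ) : ℝ := v x * ∫ t in Ici x, u t * f t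

/-- The Green integral operator `(G f)(x) = ∫_ℝ G(x,t) f(t) dt`. -/
def greenOp (u v f : ℝ → ℝ) (x : ℝ) : ℝ := G1op u v f x + G2op u v f x

/-- The operator norm of a map `T` acting on `L_p(ℝ)`: the least constant `C` such
that `‖T f‖_p ≤ C ‖f‖_p` for all `f ∈ L_p`. -/
def opNormLp (T : (ℝ → ℝ) → ℝ → ℝ) (p : ℝ) : ℝ≥0∞ :=
  sInf {C : ℝ≥0∞ | ∀ f : ℝ → ℝ, MemLP f p → lpNorm (T f) p ≤ C * lpNorm f p}

/-- The Green operator is bounded as an operator from `L_p(ℝ)` to `L_p(ℝ)`: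
it is well defined on `L_p` (the defining integrals converge), maps into `L_p`,
and its operator norm is finite. -/
def GreenBounded (u v : ℝ → ℝ) (p : ℝ) : Prop :=
  (∀ f : ℝ → ℝ, MemLP f p →
    (∀ x : ℝ, IntegrableOn (fun t => v t * f t) (Iic x) volume ∧
              IntegrableOn (fun t => u t * f t) (Ici x) volume) ∧
    MemLP (greenOp u v f) p) ∧
  opNormLp (greenOp u v) p < ⊤

/-- `F₁(x,d) = (∫_{x-d}^x dt/r)·(∫_{x-d}^x q dt)`. -/
def F1 (r q : ℝ → ℝ) (x d : ℝ) : ℝ :=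
  (∫ t in (x - d)..x, (r t)⁻¹) * ∫ t in (x - d)..x, q t

/-- `F₂(x,d) = (∫_x^{x+d} dt/r)·(∫_x^{x+d} q dt)`. -/
def F2 (r q : ℝ → ℝ) (x d : ℝ) : ℝ :=
  (∫ t in x..(x + d), (r t)⁻¹) * ∫ t in x..(x + d), q t

/-- `φ(x) = ∫_{x-d₁(x)}^x dt/r(t)`. -/
def phiF (r d1 : ℝ → ℝ) (x : ℝ) : ℝ := ∫ t in (x - d1 x)..x, (r t)⁻¹

/-- `ψ(x) = ∫_x^{x+d₂(x)} dt/r(t)`. -/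
def psiF (r d2 : ℝ → ℝ) (x : ℝ) : ℝ := ∫ t in x..(x + d2 x), (r t)⁻¹

/-- `h(x) = φ(x)ψ(x)/(φ(x)+ψ(x))`. -/
def hF (r d1 d2 : ℝ → ℝ) (x : ℝ) : ℝ :=
  phiF r d1 x * psiF r d2 x / (phiF r d1 x + psiF r d2 x)

/-- `d₁` solves the first equation of (1.15). -/
def IsD1 (r q d1 : ℝ → ℝ) : Prop := ∀ x : ℝ, 0 < d1 x ∧ F1 r q x (d1 x) = 1

/-- `d₂` solves the second equation of (1.15). -/
def IsD2 (r q d2 : ℝ → ℝ) : Prop := ∀ x : ℝ, 0 < d2 x ∧ F2 r q x (d2 x) = 1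

/-- `d` solves equation (1.18): `∫_{x-d(x)}^{x+d(x)} dt/(r(t)h(t)) = 1`. -/
def IsD (r h d : ℝ → ℝ) : Prop :=
  ∀ x : ℝ, 0 < d x ∧ (∫ t in (x - d x)..(x + d x), (r t * h t)⁻¹) = 1

/-- The Hardy-type operator `(𝒦 f)(t) = μ(t) ∫_t^∞ θ(ξ) f(ξ) dξ`. -/
def hardyOp (μ θ f : ℝ → ℝ) (t : ℝ) : ℝ := μ t * ∫ ξ in Ici t, θ ξ * f ξ

/-- `H_p = sup_x (∫_{-∞}^x μ^p)^{1/p} (∫_x^∞ θ^{p'})^{1/p'}` with `p' = p/(p-1)`. -/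
def HardyHp (μ θ : ℝ → ℝ) (p : ℝ) : ℝ≥0∞ :=
  ⨆ x : ℝ, (∫⁻ t in Iic x, ENNReal.ofReal (μ t ^ p)) ^ (1 / p) *
           (∫⁻ t in Ici x, ENNReal.ofReal (θ t ^ (p / (p - 1)))) ^ (1 - 1 / p)


namespace Stmt0Aux

lemma indicator_mono_set {s t : Set ℝ} (hst : s ⊆ t) (h : ℝ → ℝ≥0∞) (x : ℝ) :
    s.indicator h x ≤ t.indicator h x := by
  by_cases hx : x ∈ s
  · rw [Set.indicator_of_mem hx, Set.indicator_of_mem (hst hx)]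
  · simp [Set.indicator_of_notMem hx]

lemma lint_Iic_eq_iSup (h : ℝ → ℝ≥0∞) (hm : AEMeasurable h volume) (x : ℝ) :
    (∫⁻ t in Iic x, h t) = ⨆ n : ℕ, ∫⁻ t in Ioc (x - n) x, h t := by
  have key : ∀ t, (Iic x).indicator h t = ⨆ n : ℕ, (Ioc (x - (n:ℝ)) x).indicator h t := by
    intro t
    by_cases ht : t ∈ Iic x
    · obtain ⟨n, hn⟩ : ∃ n : ℕ, x - (n:ℝ) < t := by
        obtain ⟨n, hn⟩ := exists_nat_gt (x - t); exact ⟨n, by linarith⟩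
      refine le_antisymm ?_ (iSup_le fun n => ?_)
      · rw [Set.indicator_of_mem ht]
        have hmem : t ∈ Ioc (x - (n:ℝ)) x := ⟨hn, ht⟩
        exact le_iSup_of_le n (le_of_eq (Set.indicator_of_mem hmem h).symm)
      · rw [Set.indicator_of_mem ht]
        exact Set.indicator_le_self _ _ t
    · have h0 : ∀ n : ℕ, (Ioc (x - (n:ℝ)) x).indicator h t = 0 :=
        fun n => Set.indicator_of_notMem (fun hmem => ht hmem.2) _
      simp [Set.indicator_of_notMem ht, h0]
  calc (∫⁻ t in Iic x, h t) = ∫⁻ t, (Iic x).indicator h t :=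
        (lintegral_indicator measurableSet_Iic h).symm
    _ = ∫⁻ t, ⨆ n : ℕ, (Ioc (x - (n:ℝ)) x).indicator h t := lintegral_congr key
    _ = ⨆ n : ℕ, ∫⁻ t, (Ioc (x - (n:ℝ)) x).indicator h t := by
        refine lintegral_iSup' (fun n => hm.indicator measurableSet_Ioc)
          (ae_of_all _ fun t m n hmn => indicator_mono_set ?_ h t)
        exact Ioc_subset_Ioc_left (sub_le_sub_left (by exact_mod_cast hmn) x)
    _ = ⨆ n : ℕ, ∫⁻ t in Ioc (x - (n:ℝ)) x, h t := by
        simp_rw [lintegral_indicator measurableSet_Ioc]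

lemma lint_Ioi_eq_iSup (h : ℝ → ℝ≥0∞) (hm : AEMeasurable h volume) (x : ℝ) :
    (∫⁻ t in Ioi x, h t) = ⨆ n : ℕ, ∫⁻ t in Ioc x (x + n), h t := by
  have key : ∀ t, (Ioi x).indicator h t = ⨆ n : ℕ, (Ioc x (x + (n:ℝ))).indicator h t := by
    intro t
    by_cases ht : t ∈ Ioi x
    · obtain ⟨n, hn⟩ : ∃ n : ℕ, t ≤ x + (n:ℝ) := by
        obtain ⟨n, hn⟩ := exists_nat_gt (t - x); exact ⟨n, by linarith⟩
      refine le_antisymm ?_ (iSup_le fun n => ?_)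
      · rw [Set.indicator_of_mem ht]
        have hmem : t ∈ Ioc x (x + (n:ℝ)) := ⟨ht, hn⟩
        exact le_iSup_of_le n (le_of_eq (Set.indicator_of_mem hmem h).symm)
      · rw [Set.indicator_of_mem ht]
        exact Set.indicator_le_self _ _ t
    · have h0 : ∀ n : ℕ, (Ioc x (x + (n:ℝ))).indicator h t = 0 :=
        fun n => Set.indicator_of_notMem (fun hmem => ht hmem.1) _
      simp [Set.indicator_of_notMem ht, h0]
  calc (∫⁻ t in Ioi x, h t) = ∫⁻ t, (Ioi x).indicator h t :=
        (lintegral_indicator measurableSet_Ioi h).symm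
    _ = ∫⁻ t, ⨆ n : ℕ, (Ioc x (x + (n:ℝ))).indicator h t := lintegral_congr key
    _ = ⨆ n : ℕ, ∫⁻ t, (Ioc x (x + (n:ℝ))).indicator h t := by
        refine lintegral_iSup' (fun n => hm.indicator measurableSet_Ioc)
          (ae_of_all _ fun t m n hmn => indicator_mono_set ?_ h t)
        exact Ioc_subset_Ioc_right (by have : (m:ℝ) ≤ n := Nat.cast_le.mpr hmn; linarith)
    _ = ⨆ n : ℕ, ∫⁻ t in Ioc x (x + (n:ℝ)), h t := by
        simp_rw [lintegral_indicator measurableSet_Ioc]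

lemma lint_fin_Icc {f : ℝ → ℝ} (hloc : LocallyIntegrable f volume) (u v : ℝ) :
    (∫⁻ t in Icc u v, ENNReal.ofReal (f t)) < ⊤ := by
  have hint : IntegrableOn f (Icc u v) volume := hloc.integrableOn_isCompact isCompact_Icc
  calc (∫⁻ t in Icc u v, ENNReal.ofReal (f t)) ≤ ∫⁻ t in Icc u v, (‖f t‖₊ : ℝ≥0∞) :=
        lintegral_mono fun t => Real.ofReal_le_enorm _
    _ < ⊤ := hint.2

lemma lint_fin_Ioc {f : ℝ → ℝ} (hloc : LocallyIntegrable f volume) (u v : ℝ) :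
    (∫⁻ t in Ioc u v, ENNReal.ofReal (f t)) < ⊤ :=
  lt_of_le_of_lt (lintegral_mono_set Ioc_subset_Icc_self) (lint_fin_Icc hloc u v)

lemma real_setIntegral_eq {f : ℝ → ℝ} (hf : ∀ t, 0 ≤ f t)
    (hm : AEStronglyMeasurable f volume) (s : Set ℝ) :
    (∫ t in s, f t) = (∫⁻ t in s, ENNReal.ofReal (f t)).toReal :=
  integral_eq_lintegral_of_nonneg_ae (ae_of_all _ hf) hm.restrict

lemma tail_right {f : ℝ → ℝ} (hf : ∀ t, 0 ≤ f t) (hloc : LocallyIntegrable f volume)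
    (htop : (∫⁻ t in Ici (0:ℝ), ENNReal.ofReal (f t)) = ⊤) (u M : ℝ) :
    ∃ v : ℝ, u + 1 ≤ v ∧ M ≤ ∫ t in Ioc u v, f t := by
  have hm : AEMeasurable (fun t => ENNReal.ofReal (f t)) volume :=
    ENNReal.measurable_ofReal.comp_aemeasurable hloc.aestronglyMeasurable.aemeasurable
  have hIoi : (∫⁻ t in Ioi u, ENNReal.ofReal (f t)) = ⊤ := by
    rcases lt_or_ge u 0 with hu | hu
    · exact top_le_iff.mp
        (htop ▸ lintegral_mono_set (fun t (ht : (0:ℝ) ≤ t) => lt_of_lt_of_le hu ht))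
    · by_contra hne
      have hlt : (∫⁻ t in Ioi u, ENNReal.ofReal (f t)) < ⊤ := lt_top_iff_ne_top.mpr hne
      have hfin : (∫⁻ t in Ici (0:ℝ), ENNReal.ofReal (f t)) < ⊤ := by
        calc (∫⁻ t in Ici (0:ℝ), ENNReal.ofReal (f t))
            = ∫⁻ t in Icc 0 u ∪ Ioi u, ENNReal.ofReal (f t) := by
              rw [Icc_union_Ioi_eq_Ici hu]
          _ ≤ (∫⁻ t in Icc 0 u, ENNReal.ofReal (f t)) + ∫⁻ t in Ioi u, ENNReal.ofReal (f t) :=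
              lintegral_union_le _ _ _
          _ < ⊤ := ENNReal.add_lt_top.mpr ⟨lint_fin_Icc hloc 0 u, hlt⟩
      exact absurd htop hfin.ne
  obtain ⟨n, hn⟩ : ∃ n : ℕ, ENNReal.ofReal M < ∫⁻ t in Ioc u (u + (n:ℝ)), ENNReal.ofReal (f t) := by
    by_contra hc; push_neg at hc
    have hle : (∫⁻ t in Ioi u, ENNReal.ofReal (f t)) ≤ ENNReal.ofReal M := by
      rw [lint_Ioi_eq_iSup _ hm u]; exact iSup_le hc
    rw [hIoi] at hle; exact absurd hle (by simp)
  have hn0 : (0:ℝ) ≤ (n:ℝ) := Nat.cast_nonneg n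
  refine ⟨u + (n:ℝ) + 1, by linarith, ?_⟩
  have hsub : Ioc u (u + (n:ℝ)) ⊆ Ioc u (u + (n:ℝ) + 1) := Ioc_subset_Ioc_right (by linarith)
  have hge : ENNReal.ofReal M ≤ ∫⁻ t in Ioc u (u + (n:ℝ) + 1), ENNReal.ofReal (f t) :=
    le_trans hn.le (lintegral_mono_set hsub)
  have hfin := lint_fin_Ioc hloc u (u + (n:ℝ) + 1)
  have heq := real_setIntegral_eq hf hloc.aestronglyMeasurable (Ioc u (u + (n:ℝ) + 1))
  rcases le_total M 0 with hM | hM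
  · exact le_trans hM (by rw [heq]; exact ENNReal.toReal_nonneg)
  · rw [heq]
    calc M = (ENNReal.ofReal M).toReal := (ENNReal.toReal_ofReal hM).symm
      _ ≤ _ := ENNReal.toReal_mono hfin.ne hge

lemma tail_left {f : ℝ → ℝ} (hf : ∀ t, 0 ≤ f t) (hloc : LocallyIntegrable f volume)
    (htop : (∫⁻ t in Iic (0:ℝ), ENNReal.ofReal (f t)) = ⊤) (v M : ℝ) :
    ∃ u : ℝ, u ≤ v - 1 ∧ M ≤ ∫ t in Ioc u v, f t := by
  have hm : AEMeasurable (fun t => ENNReal.ofReal (f t)) volume :=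
    ENNReal.measurable_ofReal.comp_aemeasurable hloc.aestronglyMeasurable.aemeasurable
  have hIic : (∫⁻ t in Iic v, ENNReal.ofReal (f t)) = ⊤ := by
    rcases le_or_gt 0 v with hv | hv
    · exact top_le_iff.mp (htop ▸ lintegral_mono_set (Iic_subset_Iic.mpr hv))
    · by_contra hne
      have hlt : (∫⁻ t in Iic v, ENNReal.ofReal (f t)) < ⊤ := lt_top_iff_ne_top.mpr hne
      have hfin : (∫⁻ t in Iic (0:ℝ), ENNReal.ofReal (f t)) < ⊤ := by
        calc (∫⁻ t in Iic (0:ℝ), ENNReal.ofReal (f t))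
            = ∫⁻ t in Iic v ∪ Ioc v 0, ENNReal.ofReal (f t) := by
              rw [Iic_union_Ioc_eq_Iic hv.le]
          _ ≤ (∫⁻ t in Iic v, ENNReal.ofReal (f t)) + ∫⁻ t in Ioc v 0, ENNReal.ofReal (f t) :=
              lintegral_union_le _ _ _
          _ < ⊤ := ENNReal.add_lt_top.mpr ⟨hlt, lint_fin_Ioc hloc v 0⟩
      exact absurd htop hfin.ne
  obtain ⟨n, hn⟩ : ∃ n : ℕ, ENNReal.ofReal M < ∫⁻ t in Ioc (v - (n:ℝ)) v, ENNReal.ofReal (f t) := by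
    by_contra hc; push_neg at hc
    have hle : (∫⁻ t in Iic v, ENNReal.ofReal (f t)) ≤ ENNReal.ofReal M := by
      rw [lint_Iic_eq_iSup _ hm v]; exact iSup_le hc
    rw [hIic] at hle; exact absurd hle (by simp)
  have hn0 : (0:ℝ) ≤ (n:ℝ) := Nat.cast_nonneg n
  refine ⟨v - (n:ℝ) - 1, by linarith, ?_⟩
  have hsub : Ioc (v - (n:ℝ)) v ⊆ Ioc (v - (n:ℝ) - 1) v := Ioc_subset_Ioc_left (by linarith)
  have hge : ENNReal.ofReal M ≤ ∫⁻ t in Ioc (v - (n:ℝ) - 1) v, ENNReal.ofReal (f t) :=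
    le_trans hn.le (lintegral_mono_set hsub)
  have hfin := lint_fin_Ioc hloc (v - (n:ℝ) - 1) v
  have heq := real_setIntegral_eq hf hloc.aestronglyMeasurable (Ioc (v - (n:ℝ) - 1) v)
  rcases le_total M 0 with hM | hM
  · exact le_trans hM (by rw [heq]; exact ENNReal.toReal_nonneg)
  · rw [heq]
    calc M = (ENNReal.ofReal M).toReal := (ENNReal.toReal_ofReal hM).symm
      _ ≤ _ := ENNReal.toReal_mono hfin.ne hge

lemma toReal_ofReal_max (z : ℝ) : (ENNReal.ofReal z).toReal = max 0 z := by
  rcases le_total z 0 with h | h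
  · simp [ENNReal.ofReal_of_nonpos h, max_eq_left h]
  · simp [ENNReal.toReal_ofReal h, max_eq_right h]

/-- The ramp function: `0` for `x ≤ u`, rises linearly to `1` on `[u, u+1]`. -/
def ramp (u x : ℝ) : ℝ := max 0 (min 1 (x - u))

lemma ramp_nonneg (u x : ℝ) : 0 ≤ ramp u x := le_max_left _ _

lemma ramp_le_one (u x : ℝ) : ramp u x ≤ 1 :=
  max_le zero_le_one (min_le_left _ _)

lemma ramp_of_le {u x : ℝ} (h : x ≤ u) : ramp u x = 0 :=
  max_eq_left (le_trans (min_le_right _ _) (by linarith))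

lemma ramp_of_ge {u x : ℝ} (h : u + 1 ≤ x) : ramp u x = 1 := by
  have : min 1 (x - u) = 1 := min_eq_left (by linarith)
  rw [ramp, this]; exact max_eq_right zero_le_one

lemma ramp_anti {u v : ℝ} (h : u ≤ v) (x : ℝ) : ramp v x ≤ ramp u x :=
  max_le_max le_rfl (min_le_min le_rfl (by linarith))

lemma ramp_continuous (u : ℝ) : Continuous (ramp u) := by
  unfold ramp; fun_prop

lemma ind_integrable (u w A : ℝ) :
    Integrable ((Ioc u w).indicator (fun _ => A)) volume :=
  (integrable_indicator_iff measurableSet_Ioc).2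
    (integrableOn_const measure_Ioc_lt_top.ne)

lemma integral_ind (u A s x : ℝ) (hau : s ≤ u) :
    (∫ t in s..x, (Ioc u (u+1)).indicator (fun _ => A) t) = A * ramp u x := by
  rcases le_total s x with h | h
  · rw [intervalIntegral.integral_of_le h, setIntegral_indicator measurableSet_Ioc,
      setIntegral_const, Ioc_inter_Ioc, measureReal_def, Real.volume_Ioc, smul_eq_mul, mul_comm]
    congr 1
    rw [toReal_ofReal_max, sup_eq_right.mpr hau]
    unfold ramp
    rcases le_total x (u+1) with h1 | h1
    · rw [inf_eq_left.mpr h1]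
      congr 1
      exact (min_eq_right (by linarith)).symm
    · rw [inf_eq_right.mpr h1]
      have : min 1 (x - u) = 1 := min_eq_left (by linarith)
      rw [this]; norm_num
  · rw [intervalIntegral.integral_of_ge h, setIntegral_indicator measurableSet_Ioc,
      Ioc_inter_Ioc]
    have hemp : Ioc (x ⊔ u) (s ⊓ (u+1)) = (∅ : Set ℝ) := by
      apply Ioc_eq_empty
      have h1 : s ⊓ (u+1) ≤ u := le_trans inf_le_left hau
      exact not_lt.mpr (le_trans h1 le_sup_right)
    rcases le_total x u with h2 | h2
    · rw [hemp, ramp_of_le h2]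
      simp
    · have : x = u := le_antisymm (le_trans h hau) h2
      subst this
      rw [hemp, ramp_of_le le_rfl]
      simp

/-- The step function (a.e. derivative of `r y'`). -/
def stepf (a b c e k1 k2 : ℝ) : ℝ → ℝ := fun t =>
  (Ioc a (a+1)).indicator (fun _ => k1) t - (Ioc b (b+1)).indicator (fun _ => k1) t
  - (Ioc c (c+1)).indicator (fun _ => k2) t + (Ioc e (e+1)).indicator (fun _ => k2) t

/-- `g = r·y'`, the primitive of the step function. -/
def gfun (a b c e k1 k2 : ℝ) : ℝ → ℝ := fun x =>
  k1 * ramp a x - k1 * ramp b x - k2 * ramp c x + k2 * ramp e x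

lemma stepf_measurable (a b c e k1 k2 : ℝ) : Measurable (stepf a b c e k1 k2) := by
  unfold stepf
  exact ((((measurable_const.indicator measurableSet_Ioc).sub
    (measurable_const.indicator measurableSet_Ioc)).sub
    (measurable_const.indicator measurableSet_Ioc)).add
    (measurable_const.indicator measurableSet_Ioc))

lemma stepf_intervalIntegrable (a b c e k1 k2 : ℝ) (s t : ℝ) :
    IntervalIntegrable (stepf a b c e k1 k2) volume s t := by
  unfold stepf
  exact ((((ind_integrable a (a+1) k1).sub (ind_integrable b (b+1) k1)).sub
    (ind_integrable c (c+1) k2)).add (ind_integrable e (e+1) k2)).intervalIntegrable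

lemma gfun_eq_integral {a b c e : ℝ} (k1 k2 : ℝ) (hab : a ≤ b) (hbc : b ≤ c) (hce : c ≤ e)
    (x : ℝ) : gfun a b c e k1 k2 x = ∫ t in a..x, stepf a b c e k1 k2 t := by
  have hA : IntervalIntegrable (fun t => (Ioc a (a+1)).indicator (fun _ => k1) t) volume a x :=
    (ind_integrable a (a+1) k1).intervalIntegrable
  have hB : IntervalIntegrable (fun t => (Ioc b (b+1)).indicator (fun _ => k1) t) volume a x :=
    (ind_integrable b (b+1) k1).intervalIntegrable
  have hC : IntervalIntegrable (fun t => (Ioc c (c+1)).indicator (fun _ => k2) t) volume a x :=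
    (ind_integrable c (c+1) k2).intervalIntegrable
  have hD : IntervalIntegrable (fun t => (Ioc e (e+1)).indicator (fun _ => k2) t) volume a x :=
    (ind_integrable e (e+1) k2).intervalIntegrable
  unfold stepf
  rw [intervalIntegral.integral_add ((hA.sub hB).sub hC) hD,
      intervalIntegral.integral_sub (hA.sub hB) hC,
      intervalIntegral.integral_sub hA hB,
      integral_ind a k1 a x le_rfl, integral_ind b k1 a x hab,
      integral_ind c k2 a x (hab.trans hbc), integral_ind e k2 a x ((hab.trans hbc).trans hce)]
  rfl

section Construction

variable {r : ℝ → ℝ} {a b c e k1 k2 : ℝ}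

lemma gfun_continuous (a b c e k1 k2 : ℝ) : Continuous (gfun a b c e k1 k2) := by
  unfold gfun
  exact (((continuous_const.mul (ramp_continuous a)).sub
    (continuous_const.mul (ramp_continuous b))).sub
    (continuous_const.mul (ramp_continuous c))).add
    (continuous_const.mul (ramp_continuous e))

lemma gfun_left (hab : a ≤ b) (hbc : b ≤ c) (hce : c ≤ e) {x : ℝ} (hx : x ≤ a) :
    gfun a b c e k1 k2 x = 0 := by
  unfold gfun
  rw [ramp_of_le hx, ramp_of_le (hx.trans hab), ramp_of_le ((hx.trans hab).trans hbc),
    ramp_of_le (((hx.trans hab).trans hbc).trans hce)]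
  ring

lemma gfun_le_c (hbc : b ≤ c) (hce : c ≤ e) {x : ℝ} (hx : x ≤ c) :
    gfun a b c e k1 k2 x = k1 * (ramp a x - ramp b x) := by
  unfold gfun
  rw [ramp_of_le hx, ramp_of_le (hx.trans hce)]
  ring

lemma gfun_ge_b1 (hab : a ≤ b) {x : ℝ} (hx : b + 1 ≤ x) :
    gfun a b c e k1 k2 x = -(k2 * (ramp c x - ramp e x)) := by
  unfold gfun
  rw [ramp_of_ge hx, ramp_of_ge (le_trans (by linarith) hx)]
  ring

lemma gfun_plateau (hab : a ≤ b) (hce : c ≤ e) {x : ℝ} (hx1 : b + 1 ≤ x) (hx2 : x ≤ c) :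
    gfun a b c e k1 k2 x = 0 := by
  rw [gfun_ge_b1 hab hx1, ramp_of_le hx2, ramp_of_le (hx2.trans hce)]
  ring

lemma gfun_right (hab : a ≤ b) (hbc : b ≤ c) {x : ℝ} (hce : c ≤ e) (hx : e + 1 ≤ x) :
    gfun a b c e k1 k2 x = 0 := by
  rw [gfun_ge_b1 hab (by linarith), ramp_of_ge (by linarith), ramp_of_ge hx]
  ring

lemma gfun_abs_le (hab : a ≤ b) (hbc : b + 1 ≤ c) (hce : c ≤ e)
    (hk1 : 0 ≤ k1) (hk1' : k1 ≤ 1) (hk2 : 0 ≤ k2) (hk2' : k2 ≤ 1) (x : ℝ) :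
    |gfun a b c e k1 k2 x| ≤ 1 := by
  rcases le_total x c with hx | hx
  · rw [gfun_le_c (by linarith) hce hx, abs_le]
    have h1 : ramp b x ≤ ramp a x := ramp_anti hab x
    have h2 : ramp a x ≤ 1 := ramp_le_one a x
    have h3 : 0 ≤ ramp b x := ramp_nonneg b x
    constructor <;> nlinarith
  · rw [gfun_ge_b1 hab (by linarith), abs_le]
    have h1 : ramp e x ≤ ramp c x := ramp_anti hce x
    have h2 : ramp c x ≤ 1 := ramp_le_one c x
    have h3 : 0 ≤ ramp e x := ramp_nonneg e x
    constructor <;> nlinarith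

/-- Interval integrability of `φ/r` for bounded measurable `φ`. -/
lemma mul_rinv_intervalIntegrable (hr : ∀ x, 0 < r x)
    (hrl : LocallyIntegrable (fun x : ℝ => (r x)⁻¹) volume)
    {φ : ℝ → ℝ} (hφm : AEStronglyMeasurable φ volume) (hφb : ∀ t, |φ t| ≤ 1) (s t : ℝ) :
    IntervalIntegrable (fun t => φ t * (r t)⁻¹) volume s t := by
  rw [intervalIntegrable_iff]
  have hrint : IntegrableOn (fun t => (r t)⁻¹) (uIoc s t) volume :=
    (hrl.integrableOn_isCompact isCompact_uIcc).mono_set Ioc_subset_Icc_self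
  refine Integrable.mono' hrint ((hφm.mul hrl.aestronglyMeasurable).restrict)
    (ae_of_all _ fun u => ?_)
  have h1 : (0:ℝ) ≤ (r u)⁻¹ := (inv_nonneg).mpr (hr u).le
  calc ‖φ u * (r u)⁻¹‖ = |φ u| * |(r u)⁻¹| := abs_mul _ _
    _ ≤ 1 * (r u)⁻¹ := by
        rw [abs_of_nonneg h1]; exact mul_le_mul_of_nonneg_right (hφb u) h1
    _ = (r u)⁻¹ := one_mul _

/-- The up-bump integral `∫_u^{v+1} (ramp u - ramp v)/r`. -/
def upInt (r : ℝ → ℝ) (u v : ℝ) : ℝ := ∫ t in u..(v+1), (ramp u t - ramp v t) * (r t)⁻¹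

/-- The candidate solution. -/
def yfun (r : ℝ → ℝ) (a b c e k1 k2 : ℝ) (x : ℝ) : ℝ :=
  ∫ t in a..x, gfun a b c e k1 k2 t * (r t)⁻¹

lemma diff_ramp_abs_le {u v : ℝ} (h : u ≤ v) (t : ℝ) : |ramp u t - ramp v t| ≤ 1 := by
  rw [abs_le]
  have h1 : ramp v t ≤ ramp u t := ramp_anti h t
  have h2 : ramp u t ≤ 1 := ramp_le_one u t
  have h3 : 0 ≤ ramp v t := ramp_nonneg v t
  constructor <;> linarith

lemma diff_ramp_intervalIntegrable (hr : ∀ x, 0 < r x)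
    (hrl : LocallyIntegrable (fun x : ℝ => (r x)⁻¹) volume) {u v : ℝ} (h : u ≤ v) (s t : ℝ) :
    IntervalIntegrable (fun t => (ramp u t - ramp v t) * (r t)⁻¹) volume s t :=
  mul_rinv_intervalIntegrable hr hrl
    ((ramp_continuous u).sub (ramp_continuous v)).aestronglyMeasurable
    (diff_ramp_abs_le h) s t

lemma upInt_nonneg (hr : ∀ x, 0 < r x) {u v : ℝ} (h : u ≤ v) : 0 ≤ upInt r u v := by
  refine intervalIntegral.integral_nonneg (by linarith) (fun t _ => ?_)
  exact mul_nonneg (sub_nonneg.2 (ramp_anti h t)) (inv_nonneg.mpr (hr t).le)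

section YLemmas

variable (hr : ∀ x, 0 < r x) (hrl : LocallyIntegrable (fun x : ℝ => (r x)⁻¹) volume)
variable (hab : a + 1 ≤ b) (hbc : b + 1 ≤ c) (hce : c + 1 ≤ e)
variable (hk1 : 0 ≤ k1) (hk1' : k1 ≤ 1) (hk2 : 0 ≤ k2) (hk2' : k2 ≤ 1)

include hr hrl hab hbc hce hk1 hk1' hk2 hk2'

lemma yder_intervalIntegrable (s t : ℝ) :
    IntervalIntegrable (fun t => gfun a b c e k1 k2 t * (r t)⁻¹) volume s t :=
  mul_rinv_intervalIntegrable hr hrl (gfun_continuous a b c e k1 k2).aestronglyMeasurable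
    (gfun_abs_le (by linarith) hbc (by linarith) hk1 hk1' hk2 hk2') s t

lemma yfun_add (x₀ x : ℝ) :
    yfun r a b c e k1 k2 x
      = yfun r a b c e k1 k2 x₀ + ∫ t in x₀..x, gfun a b c e k1 k2 t * (r t)⁻¹ := by
  unfold yfun
  rw [intervalIntegral.integral_add_adjacent_intervals
    (yder_intervalIntegrable hr hrl hab hbc hce hk1 hk1' hk2 hk2' a x₀)
    (yder_intervalIntegrable hr hrl hab hbc hce hk1 hk1' hk2 hk2' x₀ x)]

lemma yfun_left {x : ℝ} (hx : x ≤ a) : yfun r a b c e k1 k2 x = 0 := by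
  unfold yfun
  have heq : EqOn (fun t => gfun a b c e k1 k2 t * (r t)⁻¹) (fun _ => (0:ℝ)) (uIcc a x) := by
    intro t ht
    rw [uIcc_of_ge hx] at ht
    simp only
    rw [gfun_left (by linarith) (by linarith) (by linarith) ht.2, zero_mul]
  rw [intervalIntegral.integral_congr heq, intervalIntegral.integral_zero]

lemma yfun_at_b1 : yfun r a b c e k1 k2 (b+1) = k1 * upInt r a b := by
  unfold yfun upInt
  rw [← intervalIntegral.integral_const_mul]
  apply intervalIntegral.integral_congr
  intro t ht
  rw [uIcc_of_le (by linarith)] at ht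
  simp only
  rw [gfun_le_c (by linarith) (by linarith) (ht.2.trans (by linarith))]
  ring

lemma yfun_plateau {x : ℝ} (hx1 : b + 1 ≤ x) (hx2 : x ≤ c) :
    yfun r a b c e k1 k2 x = k1 * upInt r a b := by
  rw [yfun_add hr hrl hab hbc hce hk1 hk1' hk2 hk2' (b+1) x,
    yfun_at_b1 hr hrl hab hbc hce hk1 hk1' hk2 hk2']
  have heq : EqOn (fun t => gfun a b c e k1 k2 t * (r t)⁻¹) (fun _ => (0:ℝ))
      (uIcc (b+1) x) := by
    intro t ht
    rw [uIcc_of_le hx1] at ht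
    simp only
    rw [gfun_plateau (by linarith) (by linarith) ht.1 (ht.2.trans hx2), zero_mul]
  rw [intervalIntegral.integral_congr heq, intervalIntegral.integral_zero, add_zero]

lemma yfun_down {x : ℝ} (hx1 : c ≤ x) :
    yfun r a b c e k1 k2 x
      = k1 * upInt r a b - k2 * ∫ t in c..x, (ramp c t - ramp e t) * (r t)⁻¹ := by
  rw [yfun_add hr hrl hab hbc hce hk1 hk1' hk2 hk2' c x,
    yfun_plateau hr hrl hab hbc hce hk1 hk1' hk2 hk2' (by linarith) le_rfl]
  have heq : EqOn (fun t => gfun a b c e k1 k2 t * (r t)⁻¹)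
      (fun t => -(k2 * ((ramp c t - ramp e t) * (r t)⁻¹))) (uIcc c x) := by
    intro t ht
    rw [uIcc_of_le hx1] at ht
    have ht1 := ht.1
    simp only
    rw [gfun_ge_b1 (by linarith) (by linarith : b + 1 ≤ t)]
    ring
  rw [intervalIntegral.integral_congr heq, intervalIntegral.integral_neg,
    intervalIntegral.integral_const_mul]
  ring

lemma yfun_right (hbal : k1 * upInt r a b = k2 * upInt r c e) {x : ℝ} (hx : e + 1 ≤ x) :
    yfun r a b c e k1 k2 x = 0 := by
  rw [yfun_add hr hrl hab hbc hce hk1 hk1' hk2 hk2' (e+1) x]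
  have h1 : yfun r a b c e k1 k2 (e+1) = 0 := by
    rw [yfun_down hr hrl hab hbc hce hk1 hk1' hk2 hk2' (by linarith : c ≤ e + 1), hbal]
    unfold upInt
    ring
  have heq : EqOn (fun t => gfun a b c e k1 k2 t * (r t)⁻¹) (fun _ => (0:ℝ))
      (uIcc (e+1) x) := by
    intro t ht
    rw [uIcc_of_le hx] at ht
    simp only
    rw [gfun_right (by linarith) (by linarith) (by linarith) ht.1, zero_mul]
  rw [h1, intervalIntegral.integral_congr heq, intervalIntegral.integral_zero, add_zero]

lemma yfun_bounds (hbal : k1 * upInt r a b = k2 * upInt r c e) (x : ℝ) :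
    0 ≤ yfun r a b c e k1 k2 x ∧ yfun r a b c e k1 k2 x ≤ k1 * upInt r a b := by
  have hP : 0 ≤ k1 * upInt r a b := mul_nonneg hk1 (upInt_nonneg hr (by linarith))
  rcases le_total x a with hx | hx
  · rw [yfun_left hr hrl hab hbc hce hk1 hk1' hk2 hk2' hx]; exact ⟨le_rfl, hP⟩
  rcases le_total x (b+1) with hx2 | hx2
  · have hnn : ∀ s t : ℝ, a ≤ s → t ≤ b + 1 → s ≤ t →
        0 ≤ ∫ u in s..t, gfun a b c e k1 k2 u * (r u)⁻¹ := by
      intro s t hs ht hst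
      refine intervalIntegral.integral_nonneg hst (fun u hu => ?_)
      have hu1 := hu.1
      have hu2 := hu.2
      rw [gfun_le_c (by linarith) (by linarith) (by linarith : u ≤ c)]
      have := ramp_anti (by linarith : a ≤ b) u
      exact mul_nonneg (mul_nonneg hk1 (by linarith)) (inv_nonneg.mpr (hr u).le)
    constructor
    · have := yfun_left hr hrl hab hbc hce hk1 hk1' hk2 hk2' (le_rfl : a ≤ a)
      rw [yfun_add hr hrl hab hbc hce hk1 hk1' hk2 hk2' a x, this, zero_add]
      exact hnn a x le_rfl hx2 hx
    · have h1 := yfun_add hr hrl hab hbc hce hk1 hk1' hk2 hk2' x (b+1)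
      rw [yfun_at_b1 hr hrl hab hbc hce hk1 hk1' hk2 hk2'] at h1
      have h2 := hnn x (b+1) hx le_rfl hx2
      linarith
  rcases le_total x c with hx3 | hx3
  · rw [yfun_plateau hr hrl hab hbc hce hk1 hk1' hk2 hk2' hx2 hx3]; exact ⟨hP, le_rfl⟩
  rcases le_total x (e+1) with hx4 | hx4
  · rw [yfun_down hr hrl hab hbc hce hk1 hk1' hk2 hk2' hx3]
    have hdnn : ∀ s t : ℝ, s ≤ t →
        0 ≤ ∫ u in s..t, (ramp c u - ramp e u) * (r u)⁻¹ := by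
      intro s t hst
      refine intervalIntegral.integral_nonneg hst (fun u _ => ?_)
      exact mul_nonneg (sub_nonneg.2 (ramp_anti (by linarith) u)) (inv_nonneg.mpr (hr u).le)
    have hsplit : (∫ u in c..x, (ramp c u - ramp e u) * (r u)⁻¹)
        + ∫ u in x..(e+1), (ramp c u - ramp e u) * (r u)⁻¹ = upInt r c e :=
      intervalIntegral.integral_add_adjacent_intervals
        (diff_ramp_intervalIntegrable hr hrl (by linarith) c x)
        (diff_ramp_intervalIntegrable hr hrl (by linarith) x (e+1))
    have h5 : k2 * (∫ u in c..x, (ramp c u - ramp e u) * (r u)⁻¹) ≤ k2 * upInt r c e := by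
      have := hdnn x (e+1) hx4
      have := hdnn c x hx3
      nlinarith
    have h6 : 0 ≤ k2 * ∫ u in c..x, (ramp c u - ramp e u) * (r u)⁻¹ :=
      mul_nonneg hk2 (hdnn c x hx3)
    constructor
    · rw [← hbal] at h5; linarith
    · linarith
  · rw [yfun_right hr hrl hab hbc hce hk1 hk1' hk2 hk2' hbal hx4]; exact ⟨le_rfl, hP⟩

end YLemmas

end Construction

section UpIntFacts

variable {r : ℝ → ℝ}

lemma upInt_pos (hr : ∀ x, 0 < r x) (hrl : LocallyIntegrable (fun x : ℝ => (r x)⁻¹) volume)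
    {u v : ℝ} (huv : u + 1 ≤ v) : 0 < upInt r u v := by
  unfold upInt
  rw [intervalIntegral.integral_of_le (by linarith : u ≤ v + 1)]
  have hint : IntegrableOn (fun t => (ramp u t - ramp v t) * (r t)⁻¹) (Ioc u (v+1)) volume := by
    have h := diff_ramp_intervalIntegrable hr hrl (by linarith : u ≤ v) u (v+1)
    rw [intervalIntegrable_iff, uIoc_of_le (by linarith : u ≤ v+1)] at h
    exact h
  have hnn : 0 ≤ᶠ[ae (volume.restrict (Ioc u (v+1)))]
      fun t => (ramp u t - ramp v t) * (r t)⁻¹ :=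
    ae_of_all _ fun t =>
      mul_nonneg (sub_nonneg.2 (ramp_anti (by linarith) t)) (inv_nonneg.mpr (hr t).le)
  refine (setIntegral_pos_iff_support_of_nonneg_ae hnn hint).mpr ?_
  refine lt_of_lt_of_le ?_ (measure_mono (?_ : Ioo u (u+1) ⊆ _))
  · rw [Real.volume_Ioo]; norm_num
  · intro t ht
    have ht1 := ht.1
    have ht2 := ht.2
    constructor
    · have h1 : ramp v t = 0 := ramp_of_le (by linarith : t ≤ v)
      have h2 : 0 < ramp u t :=
        lt_of_lt_of_le (lt_min (by norm_num) (by linarith : (0:ℝ) < t - u)) (le_max_right _ _)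
      have : 0 < (ramp u t - ramp v t) * (r t)⁻¹ := by
        rw [h1, sub_zero]; exact mul_pos h2 (inv_pos.mpr (hr t))
      exact ne_of_gt this
    · exact ⟨ht1, by linarith⟩

lemma upInt_ge_middle (hr : ∀ x, 0 < r x)
    (hrl : LocallyIntegrable (fun x : ℝ => (r x)⁻¹) volume)
    {u v : ℝ} (huv : u + 1 ≤ v) :
    (∫ t in Ioc (u+1) v, (r t)⁻¹) ≤ upInt r u v := by
  have hsplit1 : (∫ t in u..(u+1), (ramp u t - ramp v t) * (r t)⁻¹)
      + (∫ t in (u+1)..(v+1), (ramp u t - ramp v t) * (r t)⁻¹) = upInt r u v :=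
    intervalIntegral.integral_add_adjacent_intervals
      (diff_ramp_intervalIntegrable hr hrl (by linarith) u (u+1))
      (diff_ramp_intervalIntegrable hr hrl (by linarith) (u+1) (v+1))
  have hsplit2 : (∫ t in (u+1)..v, (ramp u t - ramp v t) * (r t)⁻¹)
      + (∫ t in v..(v+1), (ramp u t - ramp v t) * (r t)⁻¹)
      = ∫ t in (u+1)..(v+1), (ramp u t - ramp v t) * (r t)⁻¹ :=
    intervalIntegral.integral_add_adjacent_intervals
      (diff_ramp_intervalIntegrable hr hrl (by linarith) (u+1) v)
      (diff_ramp_intervalIntegrable hr hrl (by linarith) v (v+1))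
  have hmid : (∫ t in (u+1)..v, (ramp u t - ramp v t) * (r t)⁻¹)
      = ∫ t in Ioc (u+1) v, (r t)⁻¹ := by
    rw [show (∫ t in (u+1)..v, (ramp u t - ramp v t) * (r t)⁻¹)
        = ∫ t in (u+1)..v, (r t)⁻¹ from intervalIntegral.integral_congr ?_ ,
      intervalIntegral.integral_of_le (by linarith : u + 1 ≤ v)]
    intro t ht
    rw [uIcc_of_le (by linarith : u + 1 ≤ v)] at ht
    simp only
    rw [ramp_of_ge ht.1, ramp_of_le ht.2, sub_zero, one_mul]
  have hnn1 : 0 ≤ ∫ t in u..(u+1), (ramp u t - ramp v t) * (r t)⁻¹ :=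
    intervalIntegral.integral_nonneg (by linarith) fun t _ =>
      mul_nonneg (sub_nonneg.2 (ramp_anti (by linarith) t)) (inv_nonneg.mpr (hr t).le)
  have hnn2 : 0 ≤ ∫ t in v..(v+1), (ramp u t - ramp v t) * (r t)⁻¹ :=
    intervalIntegral.integral_nonneg (by linarith) fun t _ =>
      mul_nonneg (sub_nonneg.2 (ramp_anti (by linarith) t)) (inv_nonneg.mpr (hr t).le)
  linarith

end UpIntFacts

section SolutionFacts

variable {r q : ℝ → ℝ} {a b c e k1 k2 p : ℝ}

variable (hr : ∀ x, 0 < r x) (hrl : LocallyIntegrable (fun x : ℝ => (r x)⁻¹) volume)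
variable (hab : a + 1 ≤ b) (hbc : b + 1 ≤ c) (hce : c + 1 ≤ e)
variable (hk1 : 0 ≤ k1) (hk1' : k1 ≤ 1) (hk2 : 0 ≤ k2) (hk2' : k2 ≤ 1)
variable (hbal : k1 * upInt r a b = k2 * upInt r c e)

include hr hrl hab hbc hce hk1 hk1' hk2 hk2' hbal

lemma qy_ae (hq0 : ∀ᵐ t ∂(volume : Measure ℝ), t ∈ Ioc a (e+1) → q t = 0) :
    ∀ᵐ t ∂(volume : Measure ℝ),
      q t * yfun r a b c e k1 k2 t - (-(stepf a b c e k1 k2 t)) = stepf a b c e k1 k2 t := by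
  filter_upwards [hq0] with t ht
  have hy : q t * yfun r a b c e k1 k2 t = 0 := by
    by_cases hmem : t ∈ Ioc a (e+1)
    · rw [ht hmem, zero_mul]
    · rcases le_or_gt t a with h | h
      · rw [yfun_left hr hrl hab hbc hce hk1 hk1' hk2 hk2' h, mul_zero]
      · have h2 : e + 1 ≤ t := by
          by_contra h2
          push_neg at h2
          exact hmem ⟨h, h2.le⟩
        rw [yfun_right hr hrl hab hbc hce hk1 hk1' hk2 hk2' hbal h2, mul_zero]
  rw [hy]; ring

lemma construction_isSolution (hq0 : ∀ᵐ t ∂(volume : Measure ℝ), t ∈ Ioc a (e+1) → q t = 0) :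
    IsSolution r q (fun t => -(stepf a b c e k1 k2 t)) (yfun r a b c e k1 k2) := by
  have hae := qy_ae hr hrl hab hbc hce hk1 hk1' hk2 hk2' hbal (q := q) hq0
  refine ⟨fun t => gfun a b c e k1 k2 t * (r t)⁻¹, ?_, ?_, ?_, ?_⟩
  · exact yder_intervalIntegrable hr hrl hab hbc hce hk1 hk1' hk2 hk2'
  · intro x; exact yfun_add hr hrl hab hbc hce hk1 hk1' hk2 hk2' 0 x
  · intro s t
    have hstep := stepf_intervalIntegrable a b c e k1 k2 s t
    have h1 : (stepf a b c e k1 k2) =ᶠ[ae (volume : Measure ℝ)]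
        fun t => q t * yfun r a b c e k1 k2 t - (-(stepf a b c e k1 k2 t)) :=
      hae.mono fun x hx => hx.symm
    exact ⟨hstep.1.congr (ae_restrict_of_ae h1), hstep.2.congr (ae_restrict_of_ae h1)⟩
  · intro x
    have hx0 : r x ≠ 0 := (hr x).ne'
    have h00 : r 0 ≠ 0 := (hr 0).ne'
    have hgx : r x * (gfun a b c e k1 k2 x * (r x)⁻¹) = gfun a b c e k1 k2 x := by
      field_simp
    have hg0 : r 0 * (gfun a b c e k1 k2 0 * (r 0)⁻¹) = gfun a b c e k1 k2 0 := by
      field_simp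
    simp only
    rw [hgx, hg0, intervalIntegral.integral_congr_ae (hae.mono fun t h _ => h)]
    have e1 := gfun_eq_integral k1 k2 (by linarith : a ≤ b) (by linarith : b ≤ c)
      (by linarith : c ≤ e) x
    have e2 := gfun_eq_integral k1 k2 (by linarith : a ≤ b) (by linarith : b ≤ c)
      (by linarith : c ≤ e) 0
    have e3 : (∫ t in a..(0:ℝ), stepf a b c e k1 k2 t)
        + ∫ t in (0:ℝ)..x, stepf a b c e k1 k2 t = ∫ t in a..x, stepf a b c e k1 k2 t :=
      intervalIntegral.integral_add_adjacent_intervals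
        (stepf_intervalIntegrable a b c e k1 k2 a 0) (stepf_intervalIntegrable a b c e k1 k2 0 x)
    rw [e1, e2, ← e3]
    try ring

lemma yfun_continuous' : Continuous (yfun r a b c e k1 k2) := by
  unfold yfun
  exact intervalIntegral.continuous_primitive
    (yder_intervalIntegrable hr hrl hab hbc hce hk1 hk1' hk2 hk2') a

lemma memlp_yfun (hp : 1 ≤ p) : MemLP (yfun r a b c e k1 k2) p := by
  have hP : 0 ≤ k1 * upInt r a b := mul_nonneg hk1 (upInt_nonneg hr (by linarith))
  refine MemLp.of_le
    (memLp_indicator_const (s := Icc a (e+1)) (ENNReal.ofReal p) measurableSet_Icc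
      (k1 * upInt r a b) (Or.inr measure_Icc_lt_top.ne))
    (yfun_continuous' hr hrl hab hbc hce hk1 hk1' hk2 hk2' hbal).aestronglyMeasurable
    (ae_of_all _ fun x => ?_)
  by_cases hx : x ∈ Icc a (e+1)
  · rw [Set.indicator_of_mem hx, Real.norm_eq_abs, Real.norm_eq_abs,
      abs_of_nonneg (yfun_bounds hr hrl hab hbc hce hk1 hk1' hk2 hk2' hbal x).1,
      abs_of_nonneg hP]
    exact (yfun_bounds hr hrl hab hbc hce hk1 hk1' hk2 hk2' hbal x).2
  · have hx' : x < a ∨ e + 1 < x := by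
      rw [Set.mem_Icc] at hx
      push_neg at hx
      rcases lt_or_ge x a with h | h
      · exact Or.inl h
      · exact Or.inr (hx h)
    have hy0 : yfun r a b c e k1 k2 x = 0 := by
      rcases hx' with h | h
      · exact yfun_left hr hrl hab hbc hce hk1 hk1' hk2 hk2' h.le
      · exact yfun_right hr hrl hab hbc hce hk1 hk1' hk2 hk2' hbal h.le
    rw [Set.indicator_of_notMem hx, hy0]
    try simp

lemma lpnorm_yfun_lower (hp : 1 ≤ p) :
    ENNReal.ofReal (k1 * upInt r a b) * ENNReal.ofReal (c - (b+1)) ^ (1/p)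
      ≤ lpNorm (yfun r a b c e k1 k2) p := by
  have hP : 0 ≤ k1 * upInt r a b := mul_nonneg hk1 (upInt_nonneg hr (by linarith))
  have key : ∀ x, ‖(Ioc (b+1) c).indicator (fun _ => k1 * upInt r a b) x‖
      ≤ ‖yfun r a b c e k1 k2 x‖ := by
    intro x
    by_cases hx : x ∈ Ioc (b+1) c
    · rw [Set.indicator_of_mem hx,
        yfun_plateau hr hrl hab hbc hce hk1 hk1' hk2 hk2' hx.1.le hx.2]
    · rw [Set.indicator_of_notMem hx]
      simp
  have hmono := eLpNorm_mono (p := ENNReal.ofReal p) (μ := (volume : Measure ℝ)) key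
  unfold _root_.lpNorm
  refine le_trans (le_of_eq ?_) hmono
  rw [eLpNorm_indicator_const measurableSet_Ioc
      (by positivity : ENNReal.ofReal p ≠ 0) ENNReal.ofReal_ne_top,
    Real.volume_Ioc, ENNReal.toReal_ofReal (by linarith : (0:ℝ) ≤ p),
    Real.enorm_eq_ofReal hP]

end SolutionFacts

section StepNorm

variable {a b c e k1 k2 p : ℝ}

lemma eLpNorm_ind_le (hp : 1 ≤ p) {u A : ℝ} (h0 : 0 ≤ A) (h1 : A ≤ 1) :
    eLpNorm ((Ioc u (u+1)).indicator (fun _ : ℝ => A)) (ENNReal.ofReal p) volume ≤ 1 := by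
  rw [eLpNorm_indicator_const measurableSet_Ioc
      (by positivity : ENNReal.ofReal p ≠ 0) ENNReal.ofReal_ne_top, Real.volume_Ioc]
  have h2 : ENNReal.ofReal (u + 1 - u) = 1 := by norm_num
  rw [h2, ENNReal.one_rpow, mul_one, Real.enorm_eq_ofReal h0]
  exact ENNReal.ofReal_le_one.mpr h1

lemma lpnorm_stepf_le (hp : 1 ≤ p)
    (hk1 : 0 ≤ k1) (hk1' : k1 ≤ 1) (hk2 : 0 ≤ k2) (hk2' : k2 ≤ 1) :
    lpNorm (fun t => -(stepf a b c e k1 k2 t)) p ≤ 4 := by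
  have hone : (1:ℝ≥0∞) ≤ ENNReal.ofReal p := by
    rw [show (1:ℝ≥0∞) = ENNReal.ofReal 1 by norm_num]
    exact ENNReal.ofReal_le_ofReal hp
  have hsm : ∀ u A : ℝ, AEStronglyMeasurable ((Ioc u (u+1)).indicator (fun _ : ℝ => A)) volume :=
    fun u A => (measurable_const.indicator measurableSet_Ioc).aestronglyMeasurable
  set I1 := (Ioc a (a+1)).indicator (fun _ : ℝ => k1) with hI1
  set I2 := (Ioc b (b+1)).indicator (fun _ : ℝ => k1) with hI2
  set I3 := (Ioc c (c+1)).indicator (fun _ : ℝ => k2) with hI3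
  set I4 := (Ioc e (e+1)).indicator (fun _ : ℝ => k2) with hI4
  have hre : (fun t => -(stepf a b c e k1 k2 t)) = -(((I1 - I2) - I3) + I4) := rfl
  unfold _root_.lpNorm
  rw [hre, eLpNorm_neg]
  calc eLpNorm (((I1 - I2) - I3) + I4) (ENNReal.ofReal p) volume
      ≤ eLpNorm ((I1 - I2) - I3) (ENNReal.ofReal p) volume
        + eLpNorm I4 (ENNReal.ofReal p) volume :=
        eLpNorm_add_le (((hsm a k1).sub (hsm b k1)).sub (hsm c k2)) (hsm e k2) hone
    _ ≤ (eLpNorm (I1 - I2) (ENNReal.ofReal p) volume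
        + eLpNorm I3 (ENNReal.ofReal p) volume) + eLpNorm I4 (ENNReal.ofReal p) volume :=
        add_le_add_left (eLpNorm_sub_le ((hsm a k1).sub (hsm b k1)) (hsm c k2) hone) _
    _ ≤ ((eLpNorm I1 (ENNReal.ofReal p) volume + eLpNorm I2 (ENNReal.ofReal p) volume)
        + eLpNorm I3 (ENNReal.ofReal p) volume) + eLpNorm I4 (ENNReal.ofReal p) volume := by
        gcongr
        exact eLpNorm_sub_le (hsm a k1) (hsm b k1) hone
    _ ≤ ((1 + 1) + 1) + 1 := by
        gcongr
        · exact eLpNorm_ind_le hp hk1 hk1'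
        · exact eLpNorm_ind_le hp hk1 hk1'
        · exact eLpNorm_ind_le hp hk2 hk2'
        · exact eLpNorm_ind_le hp hk2 hk2'
    _ = 4 := by norm_num

lemma memlp_stepf (hp : 1 ≤ p)
    (hk1 : 0 ≤ k1) (hk1' : k1 ≤ 1) (hk2 : 0 ≤ k2) (hk2' : k2 ≤ 1) :
    MemLP (fun t => -(stepf a b c e k1 k2 t)) p := by
  refine ⟨((stepf_measurable a b c e k1 k2).neg).aestronglyMeasurable, ?_⟩
  exact lt_of_le_of_lt (lpnorm_stepf_le hp hk1 hk1' hk2 hk2') (by norm_num)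

end StepNorm

/-- Main construction: existence of a solution/rhs pair defeating any a priori bound. -/
lemma core_main {r q : ℝ → ℝ} {p a b c e k1 k2 : ℝ}
    (hr : ∀ x, 0 < r x)
    (hrl : LocallyIntegrable (fun x : ℝ => (r x)⁻¹) volume)
    (hp : 1 ≤ p)
    (hab : a + 1 ≤ b) (hbc : b + 1 ≤ c) (hce : c + 1 ≤ e)
    (hk1 : 0 ≤ k1) (hk1' : k1 ≤ 1) (hk2 : 0 ≤ k2) (hk2' : k2 ≤ 1)
    (hbal : k1 * upInt r a b = k2 * upInt r c e)
    (hq0 : ∀ᵐ t ∂(volume : Measure ℝ), t ∈ Ioc a (e+1) → q t = 0) :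
    ∃ f y : ℝ → ℝ, IsSolution r q f y ∧ MemLP f p ∧ MemLP y p ∧
      lpNorm f p ≤ 4 ∧
      ENNReal.ofReal (k1 * upInt r a b) * ENNReal.ofReal (c - (b+1)) ^ (1/p)
        ≤ lpNorm y p :=
  ⟨fun t => -(stepf a b c e k1 k2 t), yfun r a b c e k1 k2,
    construction_isSolution hr hrl hab hbc hce hk1 hk1' hk2 hk2' hbal hq0,
    memlp_stepf hp hk1 hk1' hk2 hk2',
    memlp_yfun hr hrl hab hbc hce hk1 hk1' hk2 hk2' hbal hp,
    lpnorm_stepf_le hp hk1 hk1' hk2 hk2',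
    lpnorm_yfun_lower hr hrl hab hbc hce hk1 hk1' hk2 hk2' hbal hp⟩

/-- Numeric choice of the plateau length defeating a given a priori constant. -/
lemma defeat {P C p : ℝ} (hp : 1 ≤ p) (hP : 0 < P) (hC : 0 < C) :
    ∃ n : ℝ, 1 ≤ n ∧ ENNReal.ofReal C * 4 < ENNReal.ofReal P * ENNReal.ofReal n ^ (1/p) := by
  have hp0 : (0:ℝ) < p := by linarith
  set x := 4*C/P + 1 with hxdef
  have hx1 : 1 ≤ x := by
    have : 0 < 4*C/P := by positivity
    simp only [hxdef]; linarith
  have hx0 : (0:ℝ) ≤ x := by linarith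
  refine ⟨max 1 (x ^ p), le_max_left _ _, ?_⟩
  have hn0 : (0:ℝ) ≤ max 1 (x ^ p) := by positivity
  have h1 : (x ^ p) ^ (1/p) = x := by
    rw [← Real.rpow_mul hx0, mul_one_div_cancel hp0.ne', Real.rpow_one]
  have h2 : x ≤ (max 1 (x ^ p)) ^ (1/p) :=
    calc x = (x ^ p) ^ (1/p) := h1.symm
      _ ≤ (max 1 (x ^ p)) ^ (1/p) :=
        Real.rpow_le_rpow (Real.rpow_nonneg hx0 p) (le_max_right _ _) (by positivity)
  have key : C * 4 < P * (max 1 (x ^ p)) ^ (1/p) := by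
    have h3 : P * x ≤ P * (max 1 (x ^ p)) ^ (1/p) := mul_le_mul_of_nonneg_left h2 hP.le
    have h4 : P * x = 4*C + P := by
      rw [hxdef, mul_add, mul_one, mul_div_cancel₀ _ hP.ne']
    have h6 : C * 4 < P * x := by rw [h4]; linarith
    exact lt_of_lt_of_le h6 h3
  have h5 : (4:ℝ≥0∞) = ENNReal.ofReal 4 := by norm_num
  rw [h5, ← ENNReal.ofReal_mul hC.le,
    ENNReal.ofReal_rpow_of_nonneg hn0 (by positivity), ← ENNReal.ofReal_mul hP.le]
  exact (ENNReal.ofReal_lt_ofReal_iff (by positivity)).mpr key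

end Stmt0Aux  -- AUXEND

/-- Theorem 1.1: under (1.2) and (1.4), correct solvability in `L_p`,
`p ∈ [1,∞)`, implies conditions (1.5) and (1.6). -/
theorem stmt_0 (r q : ℝ → ℝ) (h12 : Cond12 r q) (h14 : Cond14 r)
    (p : ℝ) (hp : 1 ≤ p) (hcs : CorrectlySolvable r q p) :
    Cond15 q ∧ Cond16 r q := by
  obtain ⟨hrpos, hqpos, hrl, hql⟩ := h12
  obtain ⟨h14l, h14r⟩ := h14
  obtain ⟨C, hCpos, hbound⟩ := hcs.2
  have hrnn : ∀ t : ℝ, 0 ≤ (r t)⁻¹ := fun t => inv_nonneg.mpr (hrpos t).le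
  have hqm : AEMeasurable (fun t => ENNReal.ofReal (q t)) volume :=
    ENNReal.measurable_ofReal.comp_aemeasurable hql.aestronglyMeasurable.aemeasurable
  -- the common contradiction scheme
  have scheme : ∀ a b c e k1 k2 : ℝ, a + 1 ≤ b → b + 1 ≤ c → c + 1 ≤ e →
      0 ≤ k1 → k1 ≤ 1 → 0 ≤ k2 → k2 ≤ 1 →
      k1 * Stmt0Aux.upInt r a b = k2 * Stmt0Aux.upInt r c e →
      (∀ᵐ t ∂(volume : Measure ℝ), t ∈ Ioc a (e+1) → q t = 0) →
      ENNReal.ofReal C * 4 < ENNReal.ofReal (k1 * Stmt0Aux.upInt r a b)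
        * ENNReal.ofReal (c - (b+1)) ^ (1/p) → False := by
    intro a b c e k1 k2 hab hbc hce hk1 hk1' hk2 hk2' hbal hq0 hlt
    obtain ⟨f, y, hsol, hf, hy, hfle, hyge⟩ :=
      Stmt0Aux.core_main hrpos hrl hp hab hbc hce hk1 hk1' hk2 hk2' hbal hq0
    have h1 : lpNorm y p ≤ ENNReal.ofReal C * 4 :=
      le_trans (hbound f y hf hsol hy) (mul_le_mul_right hfle _)
    exact absurd (lt_of_lt_of_le hlt (le_trans hyge h1)) (lt_irrefl _)
  have h15 : Cond15 q := by
    intro x₀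
    constructor
    · -- `∫_{-∞}^{x₀} q > 0`
      by_contra h
      have h0 : (∫⁻ t in Iic x₀, ENNReal.ofReal (q t)) = 0 := le_zero_iff.mp (not_lt.mp h)
      have hq0' : ∀ᵐ t ∂(volume : Measure ℝ), t ∈ Iic x₀ → q t = 0 := by
        have := (ae_restrict_iff' measurableSet_Iic).mp
          ((lintegral_eq_zero_iff' (hqm.restrict)).mp h0)
        filter_upwards [this] with t ht hmem
        have := ht hmem
        have h2 : q t ≤ 0 := by
          by_contra hq
          push_neg at hq
          exact absurd this (ENNReal.ofReal_pos.mpr hq).ne'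
        exact le_antisymm h2 (hqpos t)
      have hce : (x₀ - 3) + 1 ≤ x₀ - 2 := by linarith
      have hSpos : 0 < Stmt0Aux.upInt r (x₀ - 3) (x₀ - 2) := Stmt0Aux.upInt_pos hrpos hrl hce
      obtain ⟨n, hn1, hlt⟩ := Stmt0Aux.defeat hp hSpos hCpos
      obtain ⟨u, hu, hM⟩ := Stmt0Aux.tail_left hrnn hrl h14l (x₀ - 3 - 1 - n)
        (Stmt0Aux.upInt r (x₀ - 3) (x₀ - 2))
      set b := x₀ - 3 - 1 - n with hbdef
      set a := u - 1 with hadef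
      have hab : a + 1 ≤ b := by simp only [hadef]; linarith
      have hH : Stmt0Aux.upInt r (x₀ - 3) (x₀ - 2) ≤ Stmt0Aux.upInt r a b := by
        refine le_trans hM (le_trans (le_of_eq ?_) (Stmt0Aux.upInt_ge_middle hrpos hrl hab))
        congr 1
        simp only [hadef]; ring
      have hHpos : 0 < Stmt0Aux.upInt r a b := lt_of_lt_of_le hSpos hH
      set k1 := Stmt0Aux.upInt r (x₀ - 3) (x₀ - 2) / Stmt0Aux.upInt r a b with hk1def
      have hbal : k1 * Stmt0Aux.upInt r a b
          = (1:ℝ) * Stmt0Aux.upInt r (x₀ - 3) (x₀ - 2) := by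
        rw [one_mul, hk1def, div_mul_cancel₀ _ hHpos.ne']
      refine scheme a b (x₀ - 3) (x₀ - 2) k1 1 hab (by linarith) hce
        (by positivity) ((div_le_one hHpos).mpr hH) zero_le_one le_rfl hbal ?_ ?_
      · filter_upwards [hq0'] with t ht hmem
        exact ht (le_trans hmem.2 (by linarith))
      · rw [hbal, one_mul]
        have hcb : x₀ - 3 - (b + 1) = n := by simp only [hbdef]; ring
        rw [hcb]
        exact hlt
    · -- `∫_{x₀}^{∞} q > 0`
      by_contra h
      have h0 : (∫⁻ t in Ici x₀, ENNReal.ofReal (q t)) = 0 := le_zero_iff.mp (not_lt.mp h)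
      have hq0' : ∀ᵐ t ∂(volume : Measure ℝ), t ∈ Ici x₀ → q t = 0 := by
        have := (ae_restrict_iff' measurableSet_Ici).mp
          ((lintegral_eq_zero_iff' (hqm.restrict)).mp h0)
        filter_upwards [this] with t ht hmem
        have := ht hmem
        have h2 : q t ≤ 0 := by
          by_contra hq
          push_neg at hq
          exact absurd this (ENNReal.ofReal_pos.mpr hq).ne'
        exact le_antisymm h2 (hqpos t)
      have hab : x₀ + 1 ≤ x₀ + 1 := le_rfl
      have hab' : x₀ + 1 ≤ x₀ + 1 + 1 - 1 := by linarith
      have hHpos : 0 < Stmt0Aux.upInt r x₀ (x₀ + 1) :=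
        Stmt0Aux.upInt_pos hrpos hrl le_rfl
      obtain ⟨n, hn1, hlt⟩ := Stmt0Aux.defeat hp hHpos hCpos
      set c := x₀ + 1 + 1 + n with hcdef
      have hbc : (x₀ + 1) + 1 ≤ c := by simp only [hcdef]; linarith
      obtain ⟨v, hv, hM⟩ := Stmt0Aux.tail_right hrnn hrl h14r (c + 1)
        (Stmt0Aux.upInt r x₀ (x₀ + 1))
      have hce : c + 1 ≤ v := by linarith
      have hS : Stmt0Aux.upInt r x₀ (x₀ + 1) ≤ Stmt0Aux.upInt r c v :=
        le_trans hM (Stmt0Aux.upInt_ge_middle hrpos hrl hce)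
      have hSpos : 0 < Stmt0Aux.upInt r c v := lt_of_lt_of_le hHpos hS
      set k2 := Stmt0Aux.upInt r x₀ (x₀ + 1) / Stmt0Aux.upInt r c v with hk2def
      have hbal : (1:ℝ) * Stmt0Aux.upInt r x₀ (x₀ + 1) = k2 * Stmt0Aux.upInt r c v := by
        rw [one_mul, hk2def, div_mul_cancel₀ _ hSpos.ne']
      refine scheme x₀ (x₀ + 1) c v 1 k2 le_rfl hbc hce zero_le_one le_rfl
        (by positivity) ((div_le_one hSpos).mpr hS) hbal ?_ ?_
      · filter_upwards [hq0'] with t ht hmem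
        exact ht (le_of_lt hmem.1)
      · rw [one_mul]
        have hcb : c - (x₀ + 1 + 1) = n := by simp only [hcdef]; ring
        rw [hcb]
        exact hlt
  refine ⟨h15, ?_⟩
  intro x
  rw [Filter.tendsto_sup]
  have hrint : ∀ s t : ℝ, IntegrableOn (fun t => (r t)⁻¹) (Ioc s t) volume := fun s t =>
    (hrl.integrableOn_isCompact isCompact_Icc).mono_set Ioc_subset_Icc_self
  have hqint : ∀ s t : ℝ, IntegrableOn q (Ioc s t) volume := fun s t =>
    (hql.integrableOn_isCompact isCompact_Icc).mono_set Ioc_subset_Icc_self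
  constructor
  · rw [tendsto_atTop]
    intro M
    obtain ⟨n₀, hn₀⟩ : ∃ n₀ : ℕ, 0 < ∫⁻ t in Ioc (x - (n₀:ℝ)) x, ENNReal.ofReal (q t) := by
      by_contra hcon
      push_neg at hcon
      have hz : (∫⁻ t in Iic x, ENNReal.ofReal (q t)) = 0 := by
        rw [Stmt0Aux.lint_Iic_eq_iSup _ hqm x]
        exact le_antisymm (iSup_le fun n => hcon n) zero_le
      exact absurd hz (h15 x).1.ne'
    set β := ∫ t in Ioc (x - (n₀:ℝ)) x, q t with hβdef
    have hβeq : β = (∫⁻ t in Ioc (x - (n₀:ℝ)) x, ENNReal.ofReal (q t)).toReal :=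
      Stmt0Aux.real_setIntegral_eq hqpos hql.aestronglyMeasurable _
    have hβpos : 0 < β := by
      rw [hβeq]
      exact ENNReal.toReal_pos hn₀.ne' (Stmt0Aux.lint_fin_Ioc hql _ _).ne
    obtain ⟨u, hu, hM'⟩ := Stmt0Aux.tail_left hrnn hrl h14l x (max 1 (M / β))
    rw [eventually_atTop]
    refine ⟨max (n₀:ℝ) (x - u), fun d hd => ?_⟩
    have hd1 : (n₀:ℝ) ≤ d := le_trans (le_max_left _ _) hd
    have hd2 : x - u ≤ d := le_trans (le_max_right _ _) hd
    have hd0 : 0 ≤ d := le_trans (Nat.cast_nonneg n₀) hd1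
    rw [uIoc_of_le (by linarith : x - d ≤ x)]
    have hA : max 1 (M / β) ≤ ∫ t in Ioc (x - d) x, (r t)⁻¹ :=
      le_trans hM' (setIntegral_mono_set (hrint _ _) (ae_of_all _ hrnn)
        (HasSubset.Subset.eventuallyLE (Ioc_subset_Ioc_left (by linarith))))
    have hB : β ≤ ∫ t in Ioc (x - d) x, q t :=
      setIntegral_mono_set (hqint _ _) (ae_of_all _ hqpos)
        (HasSubset.Subset.eventuallyLE (Ioc_subset_Ioc_left (by linarith)))
    have hApos : (0:ℝ) ≤ ∫ t in Ioc (x - d) x, (r t)⁻¹ :=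
      le_trans (le_trans zero_le_one (le_max_left _ _)) hA
    calc M = (M / β) * β := (div_mul_cancel₀ _ hβpos.ne').symm
      _ ≤ max 1 (M / β) * β := mul_le_mul_of_nonneg_right (le_max_right _ _) hβpos.le
      _ ≤ (∫ t in Ioc (x - d) x, (r t)⁻¹) * ∫ t in Ioc (x - d) x, q t :=
        mul_le_mul hA hB hβpos.le hApos
  · rw [tendsto_atTop]
    intro M
    have hIci : (∫⁻ t in Ioi x, ENNReal.ofReal (q t))
        = ∫⁻ t in Ici x, ENNReal.ofReal (q t) := setLIntegral_congr Ioi_ae_eq_Ici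
    obtain ⟨n₀, hn₀⟩ : ∃ n₀ : ℕ, 0 < ∫⁻ t in Ioc x (x + (n₀:ℝ)), ENNReal.ofReal (q t) := by
      by_contra hcon
      push_neg at hcon
      have hz : (∫⁻ t in Ici x, ENNReal.ofReal (q t)) = 0 := by
        rw [← hIci, Stmt0Aux.lint_Ioi_eq_iSup _ hqm x]
        exact le_antisymm (iSup_le fun n => hcon n) zero_le
      exact absurd hz (h15 x).2.ne'
    set β := ∫ t in Ioc x (x + (n₀:ℝ)), q t with hβdef
    have hβeq : β = (∫⁻ t in Ioc x (x + (n₀:ℝ)), ENNReal.ofReal (q t)).toReal :=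
      Stmt0Aux.real_setIntegral_eq hqpos hql.aestronglyMeasurable _
    have hβpos : 0 < β := by
      rw [hβeq]
      exact ENNReal.toReal_pos hn₀.ne' (Stmt0Aux.lint_fin_Ioc hql _ _).ne
    obtain ⟨v, hv, hM'⟩ := Stmt0Aux.tail_right hrnn hrl h14r x (max 1 (M / β))
    rw [eventually_atBot]
    refine ⟨min (-(n₀:ℝ)) (x - v), fun d hd => ?_⟩
    have hd1 : d ≤ -(n₀:ℝ) := le_trans hd (min_le_left _ _)
    have hd2 : d ≤ x - v := le_trans hd (min_le_right _ _)
    have hd0 : d ≤ 0 := le_trans hd1 (by simp [Nat.cast_nonneg])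
    rw [uIoc_of_ge (by linarith : x ≤ x - d)]
    have hA : max 1 (M / β) ≤ ∫ t in Ioc x (x - d), (r t)⁻¹ :=
      le_trans hM' (setIntegral_mono_set (hrint _ _) (ae_of_all _ hrnn)
        (HasSubset.Subset.eventuallyLE (Ioc_subset_Ioc_right (by linarith))))
    have hB : β ≤ ∫ t in Ioc x (x - d), q t :=
      setIntegral_mono_set (hqint _ _) (ae_of_all _ hqpos)
        (HasSubset.Subset.eventuallyLE (Ioc_subset_Ioc_right (by linarith)))
    have hApos : (0:ℝ) ≤ ∫ t in Ioc x (x - d), (r t)⁻¹ :=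
      le_trans (le_trans zero_le_one (le_max_left _ _)) hA
    calc M = (M / β) * β := (div_mul_cancel₀ _ hβpos.ne').symm
      _ ≤ max 1 (M / β) * β := mul_le_mul_of_nonneg_right (le_max_right _ _) hβpos.le
      _ ≤ (∫ t in Ioc x (x - d), (r t)⁻¹) * ∫ t in Ioc x (x - d), q t :=
        mul_le_mul hA hB hβpos.le hApos

end
end

section
/- Suppose conditions (1.2) and (1.5) hold and the equation -(r(x)y'(x))' + q(x)y(x) = f(x) is correctly solvable in L_p(ℝ) for some p ∈ [1,∞). Then for every f ∈ L_p(ℝ), the unique solution y ∈ L_p(ℝ) is given by y(x) = ∫_{-∞}^∞ G(x,t)f(t)dt for x ∈ ℝ. -/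
open MeasureTheory Set Filter
open scoped ENNReal

noncomputable section

lemma core_fubini (a b : ℝ) (hab : a ≤ b) (φ ψ : ℝ → ℝ)
    (hφ : IntegrableOn φ (Ioc a b)) (hψ : IntegrableOn ψ (Ioc a b)) :
    (∫ s in a..b, φ s) * (∫ t in a..b, ψ t) =
      (∫ t in a..b, ψ t * ∫ s in a..t, φ s) + ∫ t in a..b, φ t * ∫ s in a..t, ψ s := by
  set μ := volume.restrict (Ioc a b) with hμ
  have hfull : Integrable (fun p : ℝ × ℝ => ψ p.1 * φ p.2) (μ.prod μ) := hψ.mul_prod hφ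
  have hSle : MeasurableSet {p : ℝ × ℝ | p.2 ≤ p.1} := measurableSet_le measurable_snd measurable_fst
  have hSlt : MeasurableSet {p : ℝ × ℝ | p.1 < p.2} := measurableSet_lt measurable_fst measurable_snd
  have hg1 : Integrable (fun p : ℝ × ℝ => if p.2 ≤ p.1 then ψ p.1 * φ p.2 else 0) (μ.prod μ) := by
    have := hfull.indicator hSle
    refine this.congr (Eventually.of_forall fun p => ?_)
    simp [Set.indicator_apply]
  have hg2 : Integrable (fun p : ℝ × ℝ => if p.1 < p.2 then ψ p.1 * φ p.2 else 0) (μ.prod μ) := by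
    have := hfull.indicator hSlt
    refine this.congr (Eventually.of_forall fun p => ?_)
    simp [Set.indicator_apply]
  have key : (∫ s in Ioc a b, ψ s) * (∫ s in Ioc a b, φ s) =
      (∫ p : ℝ × ℝ, (if p.2 ≤ p.1 then ψ p.1 * φ p.2 else 0) ∂(μ.prod μ)) +
      (∫ p : ℝ × ℝ, (if p.1 < p.2 then ψ p.1 * φ p.2 else 0) ∂(μ.prod μ)) := by
    rw [← integral_prod_mul ψ φ, hμ]
    rw [show (fun p : ℝ × ℝ => ψ p.1 * φ p.2) =
      (fun p : ℝ × ℝ => (if p.2 ≤ p.1 then ψ p.1 * φ p.2 else 0) +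
        (if p.1 < p.2 then ψ p.1 * φ p.2 else 0)) from funext fun p => by
          rcases le_or_gt p.2 p.1 with h | h
          · simp [h, not_lt.mpr h]
          · simp [h, not_le.mpr h]]
    exact integral_add hg1 hg2
  -- first term
  have T1 : (∫ p : ℝ × ℝ, (if p.2 ≤ p.1 then ψ p.1 * φ p.2 else 0) ∂(μ.prod μ)) =
      ∫ t in a..b, ψ t * ∫ s in a..t, φ s := by
    rw [integral_prod _ hg1]
    rw [intervalIntegral.integral_of_le hab]
    refine setIntegral_congr_fun measurableSet_Ioc fun t ht => ?_
    have : (fun s => if s ≤ t then ψ t * φ s else 0) = (Iic t).indicator (fun s => ψ t * φ s) := by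
      funext s; simp [Set.indicator_apply, mem_Iic]
    rw [this, integral_indicator measurableSet_Iic, hμ,
      Measure.restrict_restrict measurableSet_Iic]
    have hset : Iic t ∩ Ioc a b = Ioc a t := by
      ext s; simp only [mem_inter_iff, mem_Iic, mem_Ioc] at *
      exact ⟨fun ⟨h1, h2, _⟩ => ⟨h2, h1⟩, fun ⟨h1, h2⟩ => ⟨h2, h1, h2.trans ht.2⟩⟩
    rw [hset, integral_const_mul, intervalIntegral.integral_of_le ht.1.le]
  -- second term
  have T2 : (∫ p : ℝ × ℝ, (if p.1 < p.2 then ψ p.1 * φ p.2 else 0) ∂(μ.prod μ)) =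
      ∫ t in a..b, φ t * ∫ s in a..t, ψ s := by
    rw [integral_prod _ hg2]
    have swap := integral_integral_swap (f := fun t s => if t < s then ψ t * φ s else 0)
      (μ := μ) (ν := μ) hg2
    rw [swap]
    rw [intervalIntegral.integral_of_le hab]
    refine setIntegral_congr_fun measurableSet_Ioc fun s hs => ?_
    have : (fun t => if t < s then ψ t * φ s else 0) = (Iio s).indicator (fun t => ψ t * φ s) := by
      funext u; simp [Set.indicator_apply, mem_Iio]
    rw [this, integral_indicator measurableSet_Iio, hμ,
      Measure.restrict_restrict measurableSet_Iio]
    have hset : Iio s ∩ Ioc a b = Ioo a s := by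
      ext t; simp only [mem_inter_iff, mem_Iio, mem_Ioc, mem_Ioo] at *
      exact ⟨fun ⟨h1, h2, _⟩ => ⟨h2, h1⟩, fun ⟨h1, h2⟩ => ⟨h2, h1, h2.le.trans hs.2⟩⟩
    rw [hset, integral_mul_const, ← integral_Ioc_eq_integral_Ioo,
      intervalIntegral.integral_of_le hs.1.le]
    ring
  rw [intervalIntegral.integral_of_le hab, intervalIntegral.integral_of_le hab, mul_comm, key, T1, T2]

lemma primitive_mul (φ ψ : ℝ → ℝ) (hφ : ∀ a b : ℝ, IntervalIntegrable φ volume a b)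
    (hψ : ∀ a b : ℝ, IntervalIntegrable ψ volume a b) (x : ℝ) :
    (∫ s in (0:ℝ)..x, φ s) * (∫ s in (0:ℝ)..x, ψ s) =
      ∫ t in (0:ℝ)..x, (φ t * (∫ s in (0:ℝ)..t, ψ s) + ψ t * (∫ s in (0:ℝ)..t, φ s)) := by
  have hΦc : Continuous (fun t => ∫ s in (0:ℝ)..t, φ s) := intervalIntegral.continuous_primitive hφ 0
  have hΨc : Continuous (fun t => ∫ s in (0:ℝ)..t, ψ s) := intervalIntegral.continuous_primitive hψ 0
  have hint1 : ∀ a b : ℝ, IntervalIntegrable (fun t => φ t * ∫ s in (0:ℝ)..t, ψ s) volume a b :=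
    fun a b => (hφ a b).mul_continuousOn (hΨc.continuousOn)
  have hint2 : ∀ a b : ℝ, IntervalIntegrable (fun t => ψ t * ∫ s in (0:ℝ)..t, φ s) volume a b :=
    fun a b => (hψ a b).mul_continuousOn (hΦc.continuousOn)
  rcases le_total 0 x with hx | hx
  · have core := core_fubini 0 x hx φ ψ ((hφ 0 x).1) ((hψ 0 x).1)
    rw [intervalIntegral.integral_add (hint1 0 x) (hint2 0 x)]
    linarith [core]
  · have core := core_fubini x 0 hx φ ψ ((hφ x 0).1) ((hψ x 0).1)
    have hsplitφ : ∀ t : ℝ, (∫ s in x..t, φ s) = (∫ s in x..(0:ℝ), φ s) + ∫ s in (0:ℝ)..t, φ s :=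
      fun t => (intervalIntegral.integral_add_adjacent_intervals (hφ x 0) (hφ 0 t)).symm
    have hsplitψ : ∀ t : ℝ, (∫ s in x..t, ψ s) = (∫ s in x..(0:ℝ), ψ s) + ∫ s in (0:ℝ)..t, ψ s :=
      fun t => (intervalIntegral.integral_add_adjacent_intervals (hψ x 0) (hψ 0 t)).symm
    set A := ∫ s in x..(0:ℝ), φ s with hA
    set B := ∫ s in x..(0:ℝ), ψ s with hB
    have e1 : (∫ t in x..(0:ℝ), ψ t * ∫ s in x..t, φ s) =
        (∫ t in x..(0:ℝ), ψ t) * A + ∫ t in x..(0:ℝ), ψ t * ∫ s in (0:ℝ)..t, φ s := by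
      rw [← intervalIntegral.integral_mul_const, ← intervalIntegral.integral_add
        ((hψ x 0).mul_const A) (hint2 x 0)]
      refine intervalIntegral.integral_congr fun t _ => ?_
      rw [hsplitφ t]; ring
    have e2 : (∫ t in x..(0:ℝ), φ t * ∫ s in x..t, ψ s) =
        (∫ t in x..(0:ℝ), φ t) * B + ∫ t in x..(0:ℝ), φ t * ∫ s in (0:ℝ)..t, ψ s := by
      rw [← intervalIntegral.integral_mul_const, ← intervalIntegral.integral_add
        ((hφ x 0).mul_const B) (hint1 x 0)]
      refine intervalIntegral.integral_congr fun t _ => ?_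
      rw [hsplitψ t]; ring
    rw [e1, e2] at core
    have g1 : (∫ s in (0:ℝ)..x, φ s) = -A := by rw [hA, intervalIntegral.integral_symm]
    have g2 : (∫ s in (0:ℝ)..x, ψ s) = -B := by rw [hB, intervalIntegral.integral_symm]
    have g3 : (∫ t in (0:ℝ)..x, (φ t * (∫ s in (0:ℝ)..t, ψ s) + ψ t * (∫ s in (0:ℝ)..t, φ s)))
        = -∫ t in x..(0:ℝ), (φ t * (∫ s in (0:ℝ)..t, ψ s) + ψ t * (∫ s in (0:ℝ)..t, φ s)) := by
      rw [intervalIntegral.integral_symm]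
    rw [g1, g2, g3, intervalIntegral.integral_add (hint1 x 0) (hint2 x 0)]
    linarith [core]

lemma primitive_mul' (F G φ ψ : ℝ → ℝ) (hφ : ∀ a b : ℝ, IntervalIntegrable φ volume a b)
    (hψ : ∀ a b : ℝ, IntervalIntegrable ψ volume a b)
    (hF : ∀ x : ℝ, F x = F 0 + ∫ t in (0:ℝ)..x, φ t)
    (hG : ∀ x : ℝ, G x = G 0 + ∫ t in (0:ℝ)..x, ψ t) (x : ℝ) :
    F x * G x = F 0 * G 0 + ∫ t in (0:ℝ)..x, (F t * ψ t + G t * φ t) := by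
  have hΦc : Continuous (fun t => ∫ s in (0:ℝ)..t, φ s) := intervalIntegral.continuous_primitive hφ 0
  have hΨc : Continuous (fun t => ∫ s in (0:ℝ)..t, ψ s) := intervalIntegral.continuous_primitive hψ 0
  have key := primitive_mul φ ψ hφ hψ x
  have e : (∫ t in (0:ℝ)..x, (F t * ψ t + G t * φ t)) =
      (F 0) * (∫ t in (0:ℝ)..x, ψ t) + (G 0) * (∫ t in (0:ℝ)..x, φ t) +
        ∫ t in (0:ℝ)..x, (φ t * (∫ s in (0:ℝ)..t, ψ s) + ψ t * (∫ s in (0:ℝ)..t, φ s)) := by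
    rw [← intervalIntegral.integral_const_mul, ← intervalIntegral.integral_const_mul,
      ← intervalIntegral.integral_add ((hψ 0 x).const_mul (F 0)) ((hφ 0 x).const_mul (G 0)),
      ← intervalIntegral.integral_add (((hψ 0 x).const_mul (F 0)).add ((hφ 0 x).const_mul (G 0)))
        (((hφ 0 x).mul_continuousOn hΨc.continuousOn).add ((hψ 0 x).mul_continuousOn hΦc.continuousOn))]
    refine intervalIntegral.integral_congr fun t _ => ?_
    rw [hF t, hG t]; ring
  rw [e, ← key, hF x, hG x]; ring


-- local integrability from MemLP
lemma MemLP.intervalIntegrable {f : ℝ → ℝ} {p : ℝ} (hp : 1 ≤ p) (hf : MemLP f p) (a b : ℝ) :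
    IntervalIntegrable f volume a b := by
  have h1 : (1 : ℝ≥0∞) ≤ ENNReal.ofReal p := by
    rw [show (1:ℝ≥0∞) = ENNReal.ofReal 1 by simp]
    exact ENNReal.ofReal_le_ofReal hp
  have : IntegrableOn f (uIcc a b) volume := by
    have hr : MemLp f (ENNReal.ofReal p) (volume.restrict (uIcc a b)) := hf.restrict _
    have : IsFiniteMeasure (volume.restrict (uIcc a b)) := by
      constructor
      rw [Measure.restrict_apply_univ]
      exact measure_Icc_lt_top
    exact hr.integrable h1
  exact this.intervalIntegrable

lemma not_memLP_of_large {g : ℝ → ℝ} {p : ℝ} (hp : 1 ≤ p) (S : Set ℝ) (hSm : MeasurableSet S)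
    (hS : volume S = ⊤) {ε : ℝ} (hε : 0 < ε) (hg : ∀ x ∈ S, ε ≤ |g x|) : ¬ MemLP g p := by
  intro hmem
  have hp0 : ENNReal.ofReal p ≠ 0 := by
    simp only [ne_eq, ENNReal.ofReal_eq_zero, not_le]; linarith
  have hptop : ENNReal.ofReal p ≠ ⊤ := ENNReal.ofReal_ne_top
  have hlt := hmem.2
  rw [eLpNorm_eq_lintegral_rpow_enorm_toReal hp0 hptop] at hlt
  simp only [enorm_eq_nnnorm] at hlt
  have hpr : (ENNReal.ofReal p).toReal = p := ENNReal.toReal_ofReal (by linarith)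
  rw [hpr] at hlt
  have hbound : (∫⁻ x, (‖g x‖₊ : ℝ≥0∞) ^ p) = ⊤ := by
    have h1 : (∫⁻ x in S, (‖g x‖₊ : ℝ≥0∞) ^ p) = ⊤ := by
      have h2 : ∀ x ∈ S, (ENNReal.ofReal ε) ^ p ≤ (‖g x‖₊ : ℝ≥0∞) ^ p := by
        intro x hx
        refine ENNReal.rpow_le_rpow ?_ (by linarith)
        rw [← enorm_eq_nnnorm, ← ofReal_norm]
        exact ENNReal.ofReal_le_ofReal ((hg x hx).trans_eq (Real.norm_eq_abs _).symm)
      have h3 : (∫⁻ x in S, (ENNReal.ofReal ε) ^ p) ≤ ∫⁻ x in S, (‖g x‖₊ : ℝ≥0∞) ^ p :=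
        setLIntegral_mono' hSm h2
      rw [lintegral_const, Measure.restrict_apply_univ, hS] at h3
      have hne : (ENNReal.ofReal ε) ^ p ≠ 0 :=
        (ENNReal.rpow_pos (by simp [hε]) ENNReal.ofReal_ne_top).ne'
      rw [ENNReal.mul_top hne] at h3
      exact top_le_iff.mp h3
    have := setLIntegral_le_lintegral (μ := volume) S (fun x => (‖g x‖₊ : ℝ≥0∞) ^ p)
    exact top_le_iff.mp (h1 ▸ this)
  rw [hbound] at hlt
  have : (⊤ : ℝ≥0∞) ^ (1 / p) = ⊤ := by
    apply ENNReal.top_rpow_of_pos; positivity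
  rw [this] at hlt
  exact (lt_irrefl _ hlt)



lemma IsSolutionWith.cont {r q f y y' : ℝ → ℝ} (hy : IsSolutionWith r q f y y') :
    Continuous y := by
  have h := intervalIntegral.continuous_primitive hy.1 0
  have : y = fun x => y 0 + ∫ t in (0:ℝ)..x, y' t := funext hy.2.1
  rw [this]
  exact continuous_const.add h

lemma IsSolutionWith.contDeriv {r q f y y' : ℝ → ℝ} (hy : IsSolutionWith r q f y y') :
    Continuous (fun x => r x * y' x) := by
  have h := intervalIntegral.continuous_primitive hy.2.2.1 0
  have : (fun x => r x * y' x) = fun x => r 0 * y' 0 + ∫ t in (0:ℝ)..x, (q t * y t - f t) :=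
    funext hy.2.2.2
  rw [this]
  exact continuous_const.add h

/-- The variation-of-constants coefficient: if `y` solves the equation with rhs `f` and
`z` solves the homogeneous equation, then `r(y z' - y' z)` is a primitive of `z f`. -/
lemma coef_rep {r q f y y' z z' : ℝ → ℝ} (hy : IsSolutionWith r q f y y')
    (hz : IsSolutionHom r q z z') (x : ℝ) :
    y x * (r x * z' x) - (r x * y' x) * z x
      = (y 0 * (r 0 * z' 0) - (r 0 * y' 0) * z 0) + ∫ t in (0:ℝ)..x, z t * f t := by
  obtain ⟨hy1, hy2, hy3, hy4⟩ := hy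
  obtain ⟨hz1, hz2, hz3, hz4⟩ := hz
  have hyc : Continuous y := IsSolutionWith.cont ⟨hy1, hy2, hy3, hy4⟩
  have hzc : Continuous z := IsSolutionWith.cont ⟨hz1, hz2, hz3, hz4⟩
  have hryc : Continuous (fun x => r x * y' x) := IsSolutionWith.contDeriv ⟨hy1, hy2, hy3, hy4⟩
  have hrzc : Continuous (fun x => r x * z' x) := IsSolutionWith.contDeriv ⟨hz1, hz2, hz3, hz4⟩
  have P1 := primitive_mul' y (fun x => r x * z' x) y'
    (fun t => q t * z t - (fun _ : ℝ => (0:ℝ)) t) hy1 hz3 hy2 hz4 x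
  have P2 := primitive_mul' (fun x => r x * y' x) z (fun t => q t * y t - f t) z' hy3 hz1 hy4 hz2 x
  have hintA : IntervalIntegrable
      (fun t => y t * (q t * z t - (fun _ : ℝ => (0:ℝ)) t) + r t * z' t * y' t) volume 0 x :=
    ((hz3 0 x).continuousOn_mul hyc.continuousOn).add
      ((hy1 0 x).continuousOn_mul hrzc.continuousOn)
  have hintB : IntervalIntegrable
      (fun t => r t * y' t * z' t + z t * (q t * y t - f t)) volume 0 x :=
    ((hz1 0 x).continuousOn_mul hryc.continuousOn).add
      ((hy3 0 x).continuousOn_mul hzc.continuousOn)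
  have keyI : (∫ t in (0:ℝ)..x, (y t * (q t * z t - (fun _ : ℝ => (0:ℝ)) t) + r t * z' t * y' t))
      - (∫ t in (0:ℝ)..x, (r t * y' t * z' t + z t * (q t * y t - f t)))
      = ∫ t in (0:ℝ)..x, z t * f t := by
    rw [← intervalIntegral.integral_sub hintA hintB]
    refine intervalIntegral.integral_congr fun t _ => ?_
    simp only
    ring
  linarith [P1, P2, keyI]


lemma monotone_of_rep {z z' : ℝ → ℝ} (hzi : ∀ a b : ℝ, IntervalIntegrable z' volume a b)
    (hrep : ∀ x : ℝ, z x = z 0 + ∫ t in (0:ℝ)..x, z' t) (hz' : ∀ t, 0 ≤ z' t) : Monotone z := by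
  intro s t hst
  have hadj := intervalIntegral.integral_add_adjacent_intervals (hzi 0 s) (hzi s t)
  have hnn : 0 ≤ ∫ τ in s..t, z' τ := intervalIntegral.integral_nonneg hst (fun τ _ => hz' τ)
  have hs := hrep s; have ht := hrep t
  linarith

lemma antitone_of_rep {z z' : ℝ → ℝ} (hzi : ∀ a b : ℝ, IntervalIntegrable z' volume a b)
    (hrep : ∀ x : ℝ, z x = z 0 + ∫ t in (0:ℝ)..x, z' t) (hz' : ∀ t, z' t ≤ 0) : Antitone z := by
  intro s t hst
  have hadj := intervalIntegral.integral_add_adjacent_intervals (hzi 0 s) (hzi s t)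
  have hnn : 0 ≤ ∫ τ in s..t, -z' τ := intervalIntegral.integral_nonneg hst (fun τ _ => by
    simpa using hz' τ)
  rw [intervalIntegral.integral_neg] at hnn
  have hs := hrep s; have ht := hrep t
  linarith

/-- Key elementary inequality: if `u` is positive antitone and `v` positive monotone, then
`u t * v s ≤ u s * v t` whenever `s ≤ t`. -/
lemma cross_ineq {u v : ℝ → ℝ} (hupos : ∀ x, 0 < u x) (hvpos : ∀ x, 0 < v x)
    (humono : Antitone u) (hvmono : Monotone v) {s t : ℝ} (hst : s ≤ t) :
    u t * v s ≤ u s * v t :=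
  mul_le_mul (humono hst) (hvmono hst) (hvpos s).le (hupos s).le


set_option maxHeartbeats 1000000 in
/-- Main estimate at `-∞`: if a nonnegative rhs `g` has an `L_p` solution `w`, then
`v·g` is integrable near `-∞`. -/
lemma integrable_vg_Iic {r q u u' v v' g w w' : ℝ → ℝ} {p : ℝ} (hp : 1 ≤ p)
    (hg0 : ∀ t, 0 ≤ g t) (hgi : ∀ a b : ℝ, IntervalIntegrable g volume a b)
    (hw : IsSolutionWith r q g w w') (hwLp : MemLP w p)
    (hu : IsSolutionHom r q u u') (hv : IsSolutionHom r q v v')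
    (hW : ∀ x : ℝ, r x * (v' x * u x - u' x * v x) = 1)
    (hupos : ∀ x, 0 < u x) (hvpos : ∀ x, 0 < v x)
    (humono : Antitone u) (hvmono : Monotone v)
    (hvu : Tendsto (fun x => v x / u x) atBot (nhds 0)) :
    IntegrableOn (fun t => v t * g t) (Iic 0) volume := by
  have hvc : Continuous v := IsSolutionWith.cont hv
  have huc : Continuous u := IsSolutionWith.cont hu
  have hvg : ∀ a b : ℝ, IntervalIntegrable (fun t => v t * g t) volume a b :=
    fun a b => (hgi a b).continuousOn_mul hvc.continuousOn
  have hug : ∀ a b : ℝ, IntervalIntegrable (fun t => u t * g t) volume a b :=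
    fun a b => (hgi a b).continuousOn_mul huc.continuousOn
  set aw : ℝ → ℝ := fun x => w x * (r x * v' x) - r x * w' x * v x with haw
  set cw : ℝ → ℝ := fun x => w x * (r x * u' x) - r x * w' x * u x with hcw
  have hawrep : ∀ x : ℝ, aw x = aw 0 + ∫ t in (0:ℝ)..x, v t * g t := fun x => coef_rep hw hv x
  have hcwrep : ∀ x : ℝ, cw x = cw 0 + ∫ t in (0:ℝ)..x, u t * g t := fun x => coef_rep hw hu x
  have hwid : ∀ x : ℝ, w x = aw x * u x - cw x * v x := by
    intro x
    have h := hW x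
    simp only [haw, hcw]
    linear_combination (-(w x)) * h
  have hbound : ∀ c : ℝ, c ≤ 0 → (∫ t in c..(0:ℝ), v t * g t) ≤ aw 0 + 2 := by
    intro c hc
    by_contra hIc
    push_neg at hIc
    set Ic := ∫ t in c..(0:ℝ), v t * g t with hIcdef
    set Jc := ∫ t in c..(0:ℝ), u t * g t with hJcdef
    have hJc0 : 0 ≤ Jc := intervalIntegral.integral_nonneg hc
      (fun t _ => mul_nonneg (hupos t).le (hg0 t))
    set δ : ℝ := 1 / (1 + |cw 0| + Jc) with hδ
    have hδpos : 0 < δ := by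
      have : 0 < 1 + |cw 0| + Jc := by positivity
      positivity
    have hδ1 : δ * (1 + |cw 0| + Jc) = 1 := by
      rw [hδ]; field_simp
    have hev : ∀ᶠ x in atBot, v x / u x < δ := hvu.eventually (gt_mem_nhds hδpos)
    obtain ⟨x₁, hx₁⟩ := eventually_atBot.mp hev
    set x₀ := min x₁ c with hx₀def
    have hx₀c : x₀ ≤ c := min_le_right _ _
    have hx₀1 : x₀ ≤ x₁ := min_le_left _ _
    have hest : ∀ x : ℝ, x ≤ x₀ → w x ≤ u x * (aw 0 + 2 - Ic) := by
      intro x hx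
      have hxc : x ≤ c := hx.trans hx₀c
      have ha : aw x = aw 0 - ∫ t in x..(0:ℝ), v t * g t := by
        rw [hawrep x, intervalIntegral.integral_symm]; ring
      have hb : cw x = cw 0 - ∫ t in x..(0:ℝ), u t * g t := by
        rw [hcwrep x, intervalIntegral.integral_symm]; ring
      have hui : u x * Ic - v x * Jc ≤
          u x * (∫ t in x..(0:ℝ), v t * g t) - v x * (∫ t in x..(0:ℝ), u t * g t) := by
        have e1 : u x * Ic - v x * Jc
            = ∫ t in c..(0:ℝ), (u x * (v t * g t) - v x * (u t * g t)) := by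
          rw [intervalIntegral.integral_sub ((hvg c 0).const_mul (u x))
            ((hug c 0).const_mul (v x)), intervalIntegral.integral_const_mul,
            intervalIntegral.integral_const_mul]
        have e2 : u x * (∫ t in x..(0:ℝ), v t * g t) - v x * (∫ t in x..(0:ℝ), u t * g t)
            = ∫ t in x..(0:ℝ), (u x * (v t * g t) - v x * (u t * g t)) := by
          rw [intervalIntegral.integral_sub ((hvg x 0).const_mul (u x))
            ((hug x 0).const_mul (v x)), intervalIntegral.integral_const_mul,
            intervalIntegral.integral_const_mul]
        rw [e1, e2]
        have hadj := intervalIntegral.integral_add_adjacent_intervals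
          (((hvg x c).const_mul (u x)).sub ((hug x c).const_mul (v x)))
          (((hvg c 0).const_mul (u x)).sub ((hug c 0).const_mul (v x)))
        have hnn : 0 ≤ ∫ t in x..c, (u x * (v t * g t) - v x * (u t * g t)) := by
          refine intervalIntegral.integral_nonneg hxc fun t ht => ?_
          have hcross : u t * v x ≤ u x * v t :=
            cross_ineq hupos hvpos humono hvmono ht.1
          have h' : u x * (v t * g t) - v x * (u t * g t) = (u x * v t - u t * v x) * g t := by
            ring
          rw [h']
          exact mul_nonneg (sub_nonneg.2 hcross) (hg0 t)
        linarith
      have hvx : v x < δ * u x := by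
        have h := hx₁ x (hx.trans hx₀1)
        rw [div_lt_iff₀ (hupos x)] at h
        linarith
      have hA0 : 0 ≤ δ * |cw 0| := mul_nonneg hδpos.le (abs_nonneg _)
      have hB0 : 0 ≤ δ * Jc := mul_nonneg hδpos.le hJc0
      have h3 : δ * |cw 0| ≤ 1 := by nlinarith
      have h5 : δ * Jc ≤ 1 := by nlinarith
      have h2 : v x * |cw 0| ≤ u x := by
        have ha1 : v x * |cw 0| ≤ δ * u x * |cw 0| :=
          mul_le_mul_of_nonneg_right hvx.le (abs_nonneg _)
        have ha2 : u x * (δ * |cw 0|) ≤ u x * 1 := mul_le_mul_of_nonneg_left h3 (hupos x).le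
        nlinarith
      have h4 : v x * Jc ≤ u x := by
        have ha1 : v x * Jc ≤ δ * u x * Jc := mul_le_mul_of_nonneg_right hvx.le hJc0
        have ha2 : u x * (δ * Jc) ≤ u x * 1 := mul_le_mul_of_nonneg_left h5 (hupos x).le
        nlinarith
      have h6 : -(cw 0) * v x ≤ |cw 0| * v x :=
        mul_le_mul_of_nonneg_right (neg_le_abs (cw 0)) (hvpos x).le
      have hwx := hwid x
      rw [ha, hb] at hwx
      nlinarith [hui, h2, h4, h6]
    have hη : 0 < Ic - (aw 0 + 2) := by linarith
    have hu00 : 0 < u 0 := hupos 0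
    refine absurd hwLp (not_memLP_of_large hp (Iic x₀) measurableSet_Iic Real.volume_Iic
      (ε := (Ic - (aw 0 + 2)) * u 0) (by positivity) ?_)
    intro x hx
    have hx' : x ≤ x₀ := hx
    have hx0 : x ≤ 0 := hx'.trans (hx₀c.trans hc)
    have hux : u 0 ≤ u x := humono hx0
    have hwx := hest x hx'
    have he : u x * (aw 0 + 2 - Ic) = -((Ic - (aw 0 + 2)) * u x) := by ring
    have hmul : (Ic - (aw 0 + 2)) * u 0 ≤ (Ic - (aw 0 + 2)) * u x :=
      mul_le_mul_of_nonneg_left hux hη.le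
    have h7 : (Ic - (aw 0 + 2)) * u 0 ≤ -w x := by linarith
    calc (Ic - (aw 0 + 2)) * u 0 ≤ -w x := h7
      _ ≤ |w x| := neg_le_abs _
  refine integrableOn_Iic_of_intervalIntegral_norm_bounded (aw 0 + 2) 0
    (a := fun c : ℝ => c) (l := atBot) (fun c => (hvg c 0).1) tendsto_id ?_
  filter_upwards [eventually_le_atBot (0:ℝ)] with c hc
  have : (∫ x in c..(0:ℝ), ‖v x * g x‖) = ∫ x in c..(0:ℝ), v x * g x := by
    refine intervalIntegral.integral_congr fun t _ => ?_
    rw [Real.norm_eq_abs, abs_of_nonneg (mul_nonneg (hvpos t).le (hg0 t))]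
  rw [this]
  exact hbound c hc


set_option maxHeartbeats 1000000 in
/-- Main estimate at `+∞`: if a nonnegative rhs `g` has an `L_p` solution `w`, then
`u·g` is integrable near `+∞`. -/
lemma integrable_ug_Ici {r q u u' v v' g w w' : ℝ → ℝ} {p : ℝ} (hp : 1 ≤ p)
    (hg0 : ∀ t, 0 ≤ g t) (hgi : ∀ a b : ℝ, IntervalIntegrable g volume a b)
    (hw : IsSolutionWith r q g w w') (hwLp : MemLP w p)
    (hu : IsSolutionHom r q u u') (hv : IsSolutionHom r q v v')
    (hW : ∀ x : ℝ, r x * (v' x * u x - u' x * v x) = 1)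
    (hupos : ∀ x, 0 < u x) (hvpos : ∀ x, 0 < v x)
    (humono : Antitone u) (hvmono : Monotone v)
    (huv : Tendsto (fun x => u x / v x) atTop (nhds 0)) :
    IntegrableOn (fun t => u t * g t) (Ici 0) volume := by
  have hvc : Continuous v := IsSolutionWith.cont hv
  have huc : Continuous u := IsSolutionWith.cont hu
  have hvg : ∀ a b : ℝ, IntervalIntegrable (fun t => v t * g t) volume a b :=
    fun a b => (hgi a b).continuousOn_mul hvc.continuousOn
  have hug : ∀ a b : ℝ, IntervalIntegrable (fun t => u t * g t) volume a b :=
    fun a b => (hgi a b).continuousOn_mul huc.continuousOn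
  set aw : ℝ → ℝ := fun x => w x * (r x * v' x) - r x * w' x * v x with haw
  set cw : ℝ → ℝ := fun x => w x * (r x * u' x) - r x * w' x * u x with hcw
  have hawrep : ∀ x : ℝ, aw x = aw 0 + ∫ t in (0:ℝ)..x, v t * g t := fun x => coef_rep hw hv x
  have hcwrep : ∀ x : ℝ, cw x = cw 0 + ∫ t in (0:ℝ)..x, u t * g t := fun x => coef_rep hw hu x
  have hwid : ∀ x : ℝ, w x = aw x * u x - cw x * v x := by
    intro x
    have h := hW x
    simp only [haw, hcw]
    linear_combination (-(w x)) * h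
  have hbound : ∀ c : ℝ, 0 ≤ c → (∫ t in (0:ℝ)..c, u t * g t) ≤ -(cw 0) + 2 := by
    intro c hc
    by_contra hJc
    push_neg at hJc
    set Ic := ∫ t in (0:ℝ)..c, v t * g t with hIcdef
    set Jc := ∫ t in (0:ℝ)..c, u t * g t with hJcdef
    have hIc0 : 0 ≤ Ic := intervalIntegral.integral_nonneg hc
      (fun t _ => mul_nonneg (hvpos t).le (hg0 t))
    set δ : ℝ := 1 / (1 + |aw 0| + Ic) with hδ
    have hδpos : 0 < δ := by
      have : 0 < 1 + |aw 0| + Ic := by positivity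
      positivity
    have hδ1 : δ * (1 + |aw 0| + Ic) = 1 := by
      rw [hδ]; field_simp
    have hev : ∀ᶠ x in atTop, u x / v x < δ := huv.eventually (gt_mem_nhds hδpos)
    obtain ⟨x₁, hx₁⟩ := eventually_atTop.mp hev
    set x₀ := max x₁ c with hx₀def
    have hx₀c : c ≤ x₀ := le_max_right _ _
    have hx₀1 : x₁ ≤ x₀ := le_max_left _ _
    have hest : ∀ x : ℝ, x₀ ≤ x → w x ≤ v x * (-(cw 0) + 2 - Jc) := by
      intro x hx
      have hxc : c ≤ x := hx₀c.trans hx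
      have hui : u x * (∫ t in (0:ℝ)..x, v t * g t) - v x * (∫ t in (0:ℝ)..x, u t * g t) ≤
          u x * Ic - v x * Jc := by
        have e1 : u x * Ic - v x * Jc
            = ∫ t in (0:ℝ)..c, (u x * (v t * g t) - v x * (u t * g t)) := by
          rw [intervalIntegral.integral_sub ((hvg 0 c).const_mul (u x))
            ((hug 0 c).const_mul (v x)), intervalIntegral.integral_const_mul,
            intervalIntegral.integral_const_mul]
        have e2 : u x * (∫ t in (0:ℝ)..x, v t * g t) - v x * (∫ t in (0:ℝ)..x, u t * g t)
            = ∫ t in (0:ℝ)..x, (u x * (v t * g t) - v x * (u t * g t)) := by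
          rw [intervalIntegral.integral_sub ((hvg 0 x).const_mul (u x))
            ((hug 0 x).const_mul (v x)), intervalIntegral.integral_const_mul,
            intervalIntegral.integral_const_mul]
        rw [e1, e2]
        have hadj := intervalIntegral.integral_add_adjacent_intervals
          (((hvg 0 c).const_mul (u x)).sub ((hug 0 c).const_mul (v x)))
          (((hvg c x).const_mul (u x)).sub ((hug c x).const_mul (v x)))
        have hnn : 0 ≤ ∫ t in c..x, (v x * (u t * g t) - u x * (v t * g t)) := by
          refine intervalIntegral.integral_nonneg hxc fun t ht => ?_
          have hcross : u x * v t ≤ u t * v x :=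
            cross_ineq hupos hvpos humono hvmono ht.2
          have h' : v x * (u t * g t) - u x * (v t * g t) = (u t * v x - u x * v t) * g t := by
            ring
          rw [h']
          exact mul_nonneg (sub_nonneg.2 hcross) (hg0 t)
        have hneg : (∫ t in c..x, (u x * (v t * g t) - v x * (u t * g t))) ≤ 0 := by
          have hcg : (∫ t in c..x, (u x * (v t * g t) - v x * (u t * g t)))
              = -∫ t in c..x, (v x * (u t * g t) - u x * (v t * g t)) := by
            rw [← intervalIntegral.integral_neg]
            refine intervalIntegral.integral_congr fun t _ => by ring
          rw [hcg]
          linarith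
        linarith
      have hux : u x < δ * v x := by
        have h := hx₁ x (hx₀1.trans hx)
        rw [div_lt_iff₀ (hvpos x)] at h
        linarith
      have hA0 : 0 ≤ δ * |aw 0| := mul_nonneg hδpos.le (abs_nonneg _)
      have hB0 : 0 ≤ δ * Ic := mul_nonneg hδpos.le hIc0
      have h3 : δ * |aw 0| ≤ 1 := by nlinarith
      have h5 : δ * Ic ≤ 1 := by nlinarith
      have h2 : u x * |aw 0| ≤ v x := by
        have ha1 : u x * |aw 0| ≤ δ * v x * |aw 0| :=
          mul_le_mul_of_nonneg_right hux.le (abs_nonneg _)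
        have ha2 : v x * (δ * |aw 0|) ≤ v x * 1 := mul_le_mul_of_nonneg_left h3 (hvpos x).le
        nlinarith
      have h4 : u x * Ic ≤ v x := by
        have ha1 : u x * Ic ≤ δ * v x * Ic := mul_le_mul_of_nonneg_right hux.le hIc0
        have ha2 : v x * (δ * Ic) ≤ v x * 1 := mul_le_mul_of_nonneg_left h5 (hvpos x).le
        nlinarith
      have h6 : aw 0 * u x ≤ |aw 0| * u x :=
        mul_le_mul_of_nonneg_right (le_abs_self (aw 0)) (hupos x).le
      have hwx := hwid x
      rw [hawrep x, hcwrep x] at hwx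
      have hexp : w x = aw 0 * u x + u x * (∫ t in (0:ℝ)..x, v t * g t)
          - cw 0 * v x - v x * (∫ t in (0:ℝ)..x, u t * g t) := by
        rw [hwx]; ring
      linarith [hui, h2, h4, h6]
    have hη : 0 < Jc - (-(cw 0) + 2) := by linarith
    have hv00 : 0 < v 0 := hvpos 0
    refine absurd hwLp (not_memLP_of_large hp (Ici x₀) measurableSet_Ici Real.volume_Ici
      (ε := (Jc - (-(cw 0) + 2)) * v 0) (by positivity) ?_)
    intro x hx
    have hx' : x₀ ≤ x := hx
    have hx0 : (0:ℝ) ≤ x := (hc.trans hx₀c).trans hx'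
    have hvx : v 0 ≤ v x := hvmono hx0
    have hwx := hest x hx'
    have hmul : (Jc - (-(cw 0) + 2)) * v 0 ≤ (Jc - (-(cw 0) + 2)) * v x :=
      mul_le_mul_of_nonneg_left hvx hη.le
    have he : v x * (-(cw 0) + 2 - Jc) = -((Jc - (-(cw 0) + 2)) * v x) := by ring
    have h7 : (Jc - (-(cw 0) + 2)) * v 0 ≤ -w x := by linarith
    calc (Jc - (-(cw 0) + 2)) * v 0 ≤ -w x := h7
      _ ≤ |w x| := neg_le_abs _
  rw [integrableOn_Ici_iff_integrableOn_Ioi]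
  refine integrableOn_Ioi_of_intervalIntegral_norm_bounded (-(cw 0) + 2) 0
    (b := fun c : ℝ => c) (l := atTop) (fun c => (hug 0 c).1) tendsto_id ?_
  filter_upwards [eventually_ge_atTop (0:ℝ)] with c hc
  have : (∫ x in (0:ℝ)..c, ‖u x * g x‖) = ∫ x in (0:ℝ)..c, u x * g x := by
    refine intervalIntegral.integral_congr fun t _ => ?_
    rw [Real.norm_eq_abs, abs_of_nonneg (mul_nonneg (hupos t).le (hg0 t))]
  rw [this]
  exact hbound c hc


lemma integrableOn_Iic_all {φ : ℝ → ℝ} (h0 : IntegrableOn φ (Iic 0) volume)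
    (hloc : ∀ a b : ℝ, IntervalIntegrable φ volume a b) (x : ℝ) :
    IntegrableOn φ (Iic x) volume := by
  rcases le_total x 0 with hx | hx
  · exact h0.mono_set (Iic_subset_Iic.mpr hx)
  · rw [← Iic_union_Ioc_eq_Iic hx]
    exact h0.union (hloc 0 x).1

lemma integrableOn_Ici_all {φ : ℝ → ℝ} (h0 : IntegrableOn φ (Ici 0) volume)
    (hloc : ∀ a b : ℝ, IntervalIntegrable φ volume a b) (x : ℝ) :
    IntegrableOn φ (Ici x) volume := by
  rcases le_total 0 x with hx | hx
  · exact h0.mono_set (Ici_subset_Ici.mpr hx)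
  · rw [← Ico_union_Ici_eq_Ici hx]
    refine IntegrableOn.union ?_ h0
    have := (intervalIntegrable_iff_integrableOn_Icc_of_le hx).mp (hloc x 0)
    exact this.mono_set Ico_subset_Icc_self

lemma integral_Iic_split {φ : ℝ → ℝ} (h0 : IntegrableOn φ (Iic 0) volume)
    (hloc : ∀ a b : ℝ, IntervalIntegrable φ volume a b) (x : ℝ) :
    ∫ t in Iic x, φ t = (∫ t in Iic 0, φ t) + ∫ t in (0:ℝ)..x, φ t := by
  rcases le_total 0 x with hx | hx
  · rw [← Iic_union_Ioc_eq_Iic hx, setIntegral_union (Iic_disjoint_Ioc le_rfl)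
      measurableSet_Ioc h0 (hloc 0 x).1, intervalIntegral.integral_of_le hx]
  · have key : ∫ t in Iic 0, φ t = (∫ t in Iic x, φ t) + ∫ t in Ioc x 0, φ t := by
      rw [← setIntegral_union (Iic_disjoint_Ioc le_rfl) measurableSet_Ioc
        (integrableOn_Iic_all h0 hloc x) (hloc x 0).1, Iic_union_Ioc_eq_Iic hx]
    have h2 : (∫ t in (0:ℝ)..x, φ t) = -∫ t in Ioc x 0, φ t := by
      rw [intervalIntegral.integral_symm, intervalIntegral.integral_of_le hx]
    rw [h2]; linarith

lemma integral_Ici_split {φ : ℝ → ℝ} (h0 : IntegrableOn φ (Ici 0) volume)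
    (hloc : ∀ a b : ℝ, IntervalIntegrable φ volume a b) (x : ℝ) :
    ∫ t in Ici x, φ t = (∫ t in Ici 0, φ t) - ∫ t in (0:ℝ)..x, φ t := by
  have hdisj : ∀ a b : ℝ, Disjoint (Ico a b) (Ici b) := by
    intro a b
    rw [Set.disjoint_left]
    rintro t ⟨_, h2⟩ h3
    exact absurd h3 (not_le.mpr h2)
  have hico : ∀ a b : ℝ, a ≤ b → IntegrableOn φ (Ico a b) volume := by
    intro a b hab
    exact ((intervalIntegrable_iff_integrableOn_Icc_of_le hab).mp
      (hloc a b)).mono_set Ico_subset_Icc_self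
  have hicoeq : ∀ a b : ℝ, a ≤ b → (∫ t in Ico a b, φ t) = ∫ t in a..b, φ t := by
    intro a b hab
    rw [integral_Ico_eq_integral_Ioo, intervalIntegral.integral_of_le hab,
      integral_Ioc_eq_integral_Ioo]
  rcases le_total 0 x with hx | hx
  · have key : ∫ t in Ici 0, φ t = (∫ t in Ico 0 x, φ t) + ∫ t in Ici x, φ t := by
      rw [← setIntegral_union (hdisj 0 x) measurableSet_Ici (hico 0 x hx)
        (integrableOn_Ici_all h0 hloc x), Ico_union_Ici_eq_Ici hx]
    rw [hicoeq 0 x hx] at key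
    linarith
  · have key : ∫ t in Ici x, φ t = (∫ t in Ico x 0, φ t) + ∫ t in Ici 0, φ t := by
      rw [← setIntegral_union (hdisj x 0) measurableSet_Ici (hico x 0 hx) h0,
        Ico_union_Ici_eq_Ici hx]
    rw [hicoeq x 0 hx] at key
    have h2 : (∫ t in (0:ℝ)..x, φ t) = -∫ t in x..(0:ℝ), φ t :=
      intervalIntegral.integral_symm x 0
    rw [h2]; linarith


set_option maxHeartbeats 1000000 in
/-- Identification of the first coefficient: `r(y v' - y' v)(x) = ∫_{-∞}^x v f`. -/
lemma coefA_formula {r q u u' v v' f y y' : ℝ → ℝ} {p : ℝ} (hp : 1 ≤ p)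
    (hfi : ∀ a b : ℝ, IntervalIntegrable f volume a b)
    (hy : IsSolutionWith r q f y y') (hyLp : MemLP y p)
    (hu : IsSolutionHom r q u u') (hv : IsSolutionHom r q v v')
    (hW : ∀ x : ℝ, r x * (v' x * u x - u' x * v x) = 1)
    (hupos : ∀ x, 0 < u x) (hvpos : ∀ x, 0 < v x)
    (humono : Antitone u) (hvmono : Monotone v)
    (hvu : Tendsto (fun x => v x / u x) atBot (nhds 0))
    (hvfi : IntegrableOn (fun t => v t * f t) (Iic 0) volume) :
    ∀ x : ℝ, y x * (r x * v' x) - r x * y' x * v x = ∫ t in Iic x, v t * f t := by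
  have hvc : Continuous v := IsSolutionWith.cont hv
  have huc : Continuous u := IsSolutionWith.cont hu
  have hvf : ∀ a b : ℝ, IntervalIntegrable (fun t => v t * f t) volume a b :=
    fun a b => (hfi a b).continuousOn_mul hvc.continuousOn
  have huf : ∀ a b : ℝ, IntervalIntegrable (fun t => u t * f t) volume a b :=
    fun a b => (hfi a b).continuousOn_mul huc.continuousOn
  have hfabs : ∀ a b : ℝ, IntervalIntegrable (fun t => |f t|) volume a b :=
    fun a b => (hfi a b).abs
  have hvfa : ∀ a b : ℝ, IntervalIntegrable (fun t => v t * |f t|) volume a b :=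
    fun a b => (hfabs a b).continuousOn_mul hvc.continuousOn
  have hufa : ∀ a b : ℝ, IntervalIntegrable (fun t => u t * |f t|) volume a b :=
    fun a b => (hfabs a b).continuousOn_mul huc.continuousOn
  have hvfabs : IntegrableOn (fun t => v t * |f t|) (Iic 0) volume := by
    have heq : (fun t => v t * |f t|) = (fun t => |v t * f t|) :=
      funext fun t => by rw [abs_mul, abs_of_pos (hvpos t)]
    rw [heq]
    exact hvfi.abs
  set aa : ℝ → ℝ := fun x => y x * (r x * v' x) - r x * y' x * v x with haa
  set bb : ℝ → ℝ := fun x => y x * (r x * u' x) - r x * y' x * u x with hbb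
  have haarep : ∀ x : ℝ, aa x = aa 0 + ∫ t in (0:ℝ)..x, v t * f t := fun x => coef_rep hy hv x
  have hbbrep : ∀ x : ℝ, bb x = bb 0 + ∫ t in (0:ℝ)..x, u t * f t := fun x => coef_rep hy hu x
  have hyid : ∀ x : ℝ, y x = aa x * u x - bb x * v x := by
    intro x
    have h := hW x
    simp only [haa, hbb]
    linear_combination (-(y x)) * h
  -- limit of `aa`
  have h1 : Tendsto (fun x : ℝ => ∫ t in x..(0:ℝ), v t * f t) atBot
      (nhds (∫ t in Iic (0:ℝ), v t * f t)) :=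
    intervalIntegral_tendsto_integral_Iic 0 hvfi tendsto_id
  set A : ℝ := aa 0 - ∫ t in Iic (0:ℝ), v t * f t with hA
  have ha_lim : Tendsto aa atBot (nhds A) := by
    refine (tendsto_const_nhds.sub h1).congr fun x => ?_
    rw [haarep x, intervalIntegral.integral_symm]
    ring
  -- tail of `v |f|`
  set T : ℝ → ℝ := fun c => ∫ t in Iic c, v t * |f t| with hT
  have hT0 : Tendsto T atBot (nhds 0) := by
    have h2 : Tendsto (fun c : ℝ => ∫ t in c..(0:ℝ), v t * |f t|) atBot
        (nhds (∫ t in Iic (0:ℝ), v t * |f t|)) :=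
      intervalIntegral_tendsto_integral_Iic 0 hvfabs tendsto_id
    have h3 := tendsto_const_nhds (x := (∫ t in Iic (0:ℝ), v t * |f t|)) (f := atBot (α := ℝ))
    have h4 := h3.sub h2
    rw [sub_self] at h4
    refine h4.congr fun c => ?_
    rw [hT]
    simp only
    rw [integral_Iic_split hvfabs hvfa c, intervalIntegral.integral_symm]
    ring
  -- the cross term tends to zero
  have hc_lim : Tendsto (fun x => bb x * (v x / u x)) atBot (nhds 0) := by
    rw [NormedAddCommGroup.tendsto_nhds_zero]
    intro ε hε
    have hc1 : ∀ᶠ c in atBot, T c < ε / 2 := hT0.eventually (gt_mem_nhds (by positivity))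
    obtain ⟨c, hcT, hc0⟩ : ∃ c : ℝ, T c < ε / 2 ∧ c ≤ 0 :=
      (hc1.and (eventually_le_atBot 0)).exists
    set J : ℝ := ∫ t in c..(0:ℝ), u t * |f t| with hJ
    have hJ0 : 0 ≤ J := intervalIntegral.integral_nonneg hc0
      (fun t _ => mul_nonneg (hupos t).le (abs_nonneg _))
    set D : ℝ := 1 + |bb 0| + J with hD
    have hDpos : 0 < D := by positivity
    set δ : ℝ := ε / 2 / D with hδ
    have hδpos : 0 < δ := by positivity
    have hδD : δ * D = ε / 2 := by
      rw [hδ]; field_simp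
    filter_upwards [hvu.eventually (gt_mem_nhds hδpos), eventually_le_atBot c] with x hx1 hx2
    have hxc : x ≤ c := hx2
    have hx0 : x ≤ 0 := hxc.trans hc0
    have hs_pos : 0 < v x / u x := div_pos (hvpos x) (hupos x)
    rw [Real.norm_eq_abs, abs_mul, abs_of_pos hs_pos]
    -- bound |bb x|
    have hbbx : |bb x| ≤ |bb 0| + ∫ t in x..(0:ℝ), u t * |f t| := by
      have h5 : bb x = bb 0 - ∫ t in x..(0:ℝ), u t * f t := by
        rw [hbbrep x, intervalIntegral.integral_symm]; ring
      have h6 : |∫ t in x..(0:ℝ), u t * f t| ≤ ∫ t in x..(0:ℝ), |u t * f t| :=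
        intervalIntegral.abs_integral_le_integral_abs hx0
      have h7 : (∫ t in x..(0:ℝ), |u t * f t|) = ∫ t in x..(0:ℝ), u t * |f t| :=
        intervalIntegral.integral_congr fun t _ => by rw [abs_mul, abs_of_pos (hupos t)]
      calc |bb x| = |bb 0 - ∫ t in x..(0:ℝ), u t * f t| := by rw [h5]
        _ ≤ |bb 0| + |∫ t in x..(0:ℝ), u t * f t| := abs_sub _ _
        _ ≤ |bb 0| + ∫ t in x..(0:ℝ), u t * |f t| := by rw [← h7]; linarith
    have hsplit : (∫ t in x..(0:ℝ), u t * |f t|) = (∫ t in x..c, u t * |f t|) + J :=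
      (intervalIntegral.integral_add_adjacent_intervals (hufa x c) (hufa c 0)).symm
    set j2 : ℝ := ∫ t in x..c, u t * |f t| with hj2
    have hj20 : 0 ≤ j2 := intervalIntegral.integral_nonneg hxc
      (fun t _ => mul_nonneg (hupos t).le (abs_nonneg _))
    -- key pointwise comparison on [x, c]
    have key1 : v x / u x * j2 ≤ ∫ t in x..c, v t * |f t| := by
      rw [hj2, ← intervalIntegral.integral_const_mul]
      refine intervalIntegral.integral_mono_on hxc ((hufa x c).const_mul _) (hvfa x c)
        fun t ht => ?_
      have hcross : u t * v x ≤ u x * v t := cross_ineq hupos hvpos humono hvmono ht.1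
      have h8 : v x / u x * u t ≤ v t := by
        rw [div_mul_eq_mul_div, div_le_iff₀ (hupos x)]
        nlinarith
      calc v x / u x * (u t * |f t|) = (v x / u x * u t) * |f t| := by ring
        _ ≤ v t * |f t| := mul_le_mul_of_nonneg_right h8 (abs_nonneg _)
    have key2 : (∫ t in x..c, v t * |f t|) ≤ T c := by
      rw [intervalIntegral.integral_of_le hxc, hT]
      refine setIntegral_mono_set (integrableOn_Iic_all hvfabs hvfa c)
        (Eventually.of_forall fun t => mul_nonneg (hvpos t).le (abs_nonneg _))
        (HasSubset.Subset.eventuallyLE fun t ht => le_trans ht.2 (le_refl c))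
    -- assemble
    have hstep1 : |bb x| * (v x / u x) ≤ (|bb 0| + J) * (v x / u x) + v x / u x * j2 := by
      have := mul_le_mul_of_nonneg_right hbbx hs_pos.le
      rw [hsplit] at this
      nlinarith
    have hstep2 : (|bb 0| + J) * (v x / u x) ≤ (|bb 0| + J) * δ :=
      mul_le_mul_of_nonneg_left hx1.le (by positivity)
    have hstep3 : (|bb 0| + J) * δ < ε / 2 := by
      have : δ * D = δ * 1 + δ * |bb 0| + δ * J := by rw [hD]; ring
      nlinarith
    have hstep4 : v x / u x * j2 < ε / 2 := lt_of_le_of_lt (key1.trans key2) hcT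
    linarith
  -- conclude A = 0
  have hyu : ∀ x : ℝ, y x / u x = aa x - bb x * (v x / u x) := by
    intro x
    rw [hyid x]
    field_simp [(hupos x).ne']
  have hlim : Tendsto (fun x => y x / u x) atBot (nhds A) := by
    have h9 := ha_lim.sub hc_lim
    rw [sub_zero] at h9
    exact h9.congr fun x => (hyu x).symm
  have hA0 : A = 0 := by
    by_contra hA0
    have habs : 0 < |A| / 2 := by positivity
    have hev := (Metric.tendsto_nhds.mp hlim (|A| / 2) habs)
    obtain ⟨x₀, hx₀⟩ := eventually_atBot.mp hev
    refine absurd hyLp (not_memLP_of_large hp (Iic (min x₀ 0)) measurableSet_Iic Real.volume_Iic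
      (ε := |A| / 2 * u 0) (mul_pos habs (hupos 0)) ?_)
    intro x hx
    have hxm : x ≤ min x₀ 0 := hx
    have h10 := hx₀ x (hxm.trans (min_le_left _ _))
    rw [Real.dist_eq] at h10
    have h11 : |A| / 2 ≤ |y x / u x| := by
      have := abs_sub_abs_le_abs_sub (A) (y x / u x)
      rw [abs_sub_comm] at h10
      linarith
    have h12 : y x = y x / u x * u x := (div_mul_cancel₀ (y x) (hupos x).ne').symm
    have hx0' : x ≤ 0 := hxm.trans (min_le_right _ _)
    have hux : u 0 ≤ u x := humono hx0'
    calc |A| / 2 * u 0 ≤ |y x / u x| * u x :=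
          mul_le_mul h11 hux (hupos 0).le (abs_nonneg _)
      _ = |y x| := by
          rw [show |y x / u x| * u x = |y x / u x| * |u x| by rw [abs_of_pos (hupos x)],
            ← abs_mul, ← h12]
  -- final formula
  intro x
  have ha00 : aa 0 = ∫ t in Iic (0:ℝ), v t * f t := by
    rw [hA] at hA0; linarith
  have hsplit := integral_Iic_split hvfi hvf x
  have hid : y x * (r x * v' x) - r x * y' x * v x = aa x := rfl
  rw [hid, haarep x, ha00, hsplit]


set_option maxHeartbeats 1000000 in
/-- Identification of the second coefficient: `r(y' u - y u')(x) = ∫_x^∞ u f`. -/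
lemma coefB_formula {r q u u' v v' f y y' : ℝ → ℝ} {p : ℝ} (hp : 1 ≤ p)
    (hfi : ∀ a b : ℝ, IntervalIntegrable f volume a b)
    (hy : IsSolutionWith r q f y y') (hyLp : MemLP y p)
    (hu : IsSolutionHom r q u u') (hv : IsSolutionHom r q v v')
    (hW : ∀ x : ℝ, r x * (v' x * u x - u' x * v x) = 1)
    (hupos : ∀ x, 0 < u x) (hvpos : ∀ x, 0 < v x)
    (humono : Antitone u) (hvmono : Monotone v)
    (huv : Tendsto (fun x => u x / v x) atTop (nhds 0))
    (hufi : IntegrableOn (fun t => u t * f t) (Ici 0) volume) :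
    ∀ x : ℝ, -(y x * (r x * u' x) - r x * y' x * u x) = ∫ t in Ici x, u t * f t := by
  have hvc : Continuous v := IsSolutionWith.cont hv
  have huc : Continuous u := IsSolutionWith.cont hu
  have hvf : ∀ a b : ℝ, IntervalIntegrable (fun t => v t * f t) volume a b :=
    fun a b => (hfi a b).continuousOn_mul hvc.continuousOn
  have huf : ∀ a b : ℝ, IntervalIntegrable (fun t => u t * f t) volume a b :=
    fun a b => (hfi a b).continuousOn_mul huc.continuousOn
  have hfabs : ∀ a b : ℝ, IntervalIntegrable (fun t => |f t|) volume a b :=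
    fun a b => (hfi a b).abs
  have hvfa : ∀ a b : ℝ, IntervalIntegrable (fun t => v t * |f t|) volume a b :=
    fun a b => (hfabs a b).continuousOn_mul hvc.continuousOn
  have hufa : ∀ a b : ℝ, IntervalIntegrable (fun t => u t * |f t|) volume a b :=
    fun a b => (hfabs a b).continuousOn_mul huc.continuousOn
  have hufabs : IntegrableOn (fun t => u t * |f t|) (Ici 0) volume := by
    have heq : (fun t => u t * |f t|) = (fun t => |u t * f t|) :=
      funext fun t => by rw [abs_mul, abs_of_pos (hupos t)]
    rw [heq]
    exact hufi.abs
  set aa : ℝ → ℝ := fun x => y x * (r x * v' x) - r x * y' x * v x with haa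
  set bb : ℝ → ℝ := fun x => y x * (r x * u' x) - r x * y' x * u x with hbb
  have haarep : ∀ x : ℝ, aa x = aa 0 + ∫ t in (0:ℝ)..x, v t * f t := fun x => coef_rep hy hv x
  have hbbrep : ∀ x : ℝ, bb x = bb 0 + ∫ t in (0:ℝ)..x, u t * f t := fun x => coef_rep hy hu x
  have hyid : ∀ x : ℝ, y x = aa x * u x - bb x * v x := by
    intro x
    have h := hW x
    simp only [haa, hbb]
    linear_combination (-(y x)) * h
  -- limit of `bb`
  have h1 : Tendsto (fun x : ℝ => ∫ t in (0:ℝ)..x, u t * f t) atTop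
      (nhds (∫ t in Ioi (0:ℝ), u t * f t)) :=
    intervalIntegral_tendsto_integral_Ioi 0 (hufi.mono_set Ioi_subset_Ici_self) tendsto_id
  set B : ℝ := bb 0 + ∫ t in Ici (0:ℝ), u t * f t with hB
  have hb_lim : Tendsto bb atTop (nhds B) := by
    have h1' := tendsto_const_nhds (x := bb 0) (f := atTop (α := ℝ)) |>.add h1
    rw [← integral_Ici_eq_integral_Ioi] at h1'
    exact h1'.congr fun x => (hbbrep x).symm
  -- tail of `u |f|`
  set T : ℝ → ℝ := fun c => ∫ t in Ici c, u t * |f t| with hT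
  have hT0 : Tendsto T atTop (nhds 0) := by
    have h2 : Tendsto (fun c : ℝ => ∫ t in (0:ℝ)..c, u t * |f t|) atTop
        (nhds (∫ t in Ioi (0:ℝ), u t * |f t|)) :=
      intervalIntegral_tendsto_integral_Ioi 0 (hufabs.mono_set Ioi_subset_Ici_self) tendsto_id
    rw [← integral_Ici_eq_integral_Ioi] at h2
    have h3 := tendsto_const_nhds (x := (∫ t in Ici (0:ℝ), u t * |f t|)) (f := atTop (α := ℝ))
    have h4 := h3.sub h2
    rw [sub_self] at h4
    refine h4.congr fun c => ?_
    rw [hT]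
    simp only
    rw [integral_Ici_split hufabs hufa c]
  -- the cross term tends to zero
  have hc_lim : Tendsto (fun x => aa x * (u x / v x)) atTop (nhds 0) := by
    rw [NormedAddCommGroup.tendsto_nhds_zero]
    intro ε hε
    have hc1 : ∀ᶠ c in atTop, T c < ε / 2 := hT0.eventually (gt_mem_nhds (by positivity))
    obtain ⟨c, hcT, hc0⟩ : ∃ c : ℝ, T c < ε / 2 ∧ 0 ≤ c :=
      (hc1.and (eventually_ge_atTop 0)).exists
    set J : ℝ := ∫ t in (0:ℝ)..c, v t * |f t| with hJ
    have hJ0 : 0 ≤ J := intervalIntegral.integral_nonneg hc0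
      (fun t _ => mul_nonneg (hvpos t).le (abs_nonneg _))
    set D : ℝ := 1 + |aa 0| + J with hD
    have hDpos : 0 < D := by positivity
    set δ : ℝ := ε / 2 / D with hδ
    have hδpos : 0 < δ := by positivity
    have hδD : δ * D = ε / 2 := by
      rw [hδ]; field_simp
    filter_upwards [huv.eventually (gt_mem_nhds hδpos), eventually_ge_atTop c] with x hx1 hx2
    have hxc : c ≤ x := hx2
    have hx0 : (0:ℝ) ≤ x := hc0.trans hxc
    have hs_pos : 0 < u x / v x := div_pos (hupos x) (hvpos x)
    rw [Real.norm_eq_abs, abs_mul, abs_of_pos hs_pos]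
    have haax : |aa x| ≤ |aa 0| + ∫ t in (0:ℝ)..x, v t * |f t| := by
      have h6 : |∫ t in (0:ℝ)..x, v t * f t| ≤ ∫ t in (0:ℝ)..x, |v t * f t| :=
        intervalIntegral.abs_integral_le_integral_abs hx0
      have h7 : (∫ t in (0:ℝ)..x, |v t * f t|) = ∫ t in (0:ℝ)..x, v t * |f t| :=
        intervalIntegral.integral_congr fun t _ => by rw [abs_mul, abs_of_pos (hvpos t)]
      calc |aa x| = |aa 0 + ∫ t in (0:ℝ)..x, v t * f t| := by rw [haarep x]
        _ ≤ |aa 0| + |∫ t in (0:ℝ)..x, v t * f t| := abs_add_le _ _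
        _ ≤ |aa 0| + ∫ t in (0:ℝ)..x, v t * |f t| := by rw [← h7]; linarith
    have hsplit : (∫ t in (0:ℝ)..x, v t * |f t|) = J + ∫ t in c..x, v t * |f t| :=
      (intervalIntegral.integral_add_adjacent_intervals (hvfa 0 c) (hvfa c x)).symm
    set j2 : ℝ := ∫ t in c..x, v t * |f t| with hj2
    have hj20 : 0 ≤ j2 := intervalIntegral.integral_nonneg hxc
      (fun t _ => mul_nonneg (hvpos t).le (abs_nonneg _))
    have key1 : u x / v x * j2 ≤ ∫ t in c..x, u t * |f t| := by
      rw [hj2, ← intervalIntegral.integral_const_mul]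
      refine intervalIntegral.integral_mono_on hxc ((hvfa c x).const_mul _) (hufa c x)
        fun t ht => ?_
      have hcross : u x * v t ≤ u t * v x := cross_ineq hupos hvpos humono hvmono ht.2
      have h8 : u x / v x * v t ≤ u t := by
        rw [div_mul_eq_mul_div, div_le_iff₀ (hvpos x)]
        nlinarith
      calc u x / v x * (v t * |f t|) = (u x / v x * v t) * |f t| := by ring
        _ ≤ u t * |f t| := mul_le_mul_of_nonneg_right h8 (abs_nonneg _)
    have key2 : (∫ t in c..x, u t * |f t|) ≤ T c := by
      rw [intervalIntegral.integral_of_le hxc, hT]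
      refine setIntegral_mono_set (integrableOn_Ici_all hufabs hufa c)
        (Eventually.of_forall fun t => mul_nonneg (hupos t).le (abs_nonneg _))
        (HasSubset.Subset.eventuallyLE fun t ht => le_of_lt ht.1)
    have hstep1 : |aa x| * (u x / v x) ≤ (|aa 0| + J) * (u x / v x) + u x / v x * j2 := by
      have := mul_le_mul_of_nonneg_right haax hs_pos.le
      rw [hsplit] at this
      nlinarith
    have hstep2 : (|aa 0| + J) * (u x / v x) ≤ (|aa 0| + J) * δ :=
      mul_le_mul_of_nonneg_left hx1.le (by positivity)
    have hstep3 : (|aa 0| + J) * δ < ε / 2 := by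
      have : δ * D = δ * 1 + δ * |aa 0| + δ * J := by rw [hD]; ring
      nlinarith
    have hstep4 : u x / v x * j2 < ε / 2 := lt_of_le_of_lt (key1.trans key2) hcT
    linarith
  -- conclude B = 0
  have hyv : ∀ x : ℝ, y x / v x = aa x * (u x / v x) - bb x := by
    intro x
    rw [hyid x]
    field_simp [(hvpos x).ne']
  have hlim : Tendsto (fun x => y x / v x) atTop (nhds (-B)) := by
    have h9 := hc_lim.sub hb_lim
    rw [zero_sub] at h9
    exact h9.congr fun x => (hyv x).symm
  have hB0 : B = 0 := by
    by_contra hB0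
    have habs : 0 < |B| / 2 := by positivity
    have hev := (Metric.tendsto_nhds.mp hlim (|B| / 2) habs)
    obtain ⟨x₀, hx₀⟩ := eventually_atTop.mp hev
    refine absurd hyLp (not_memLP_of_large hp (Ici (max x₀ 0)) measurableSet_Ici Real.volume_Ici
      (ε := |B| / 2 * v 0) (mul_pos habs (hvpos 0)) ?_)
    intro x hx
    have hxm : max x₀ 0 ≤ x := hx
    have h10 := hx₀ x ((le_max_left _ _).trans hxm)
    rw [Real.dist_eq] at h10
    have h11 : |B| / 2 ≤ |y x / v x| := by
      have h12 := abs_sub_abs_le_abs_sub (-B) (y x / v x)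
      rw [abs_sub_comm, abs_neg] at h12
      have h13 : |y x / v x - -B| < |B| / 2 := h10
      linarith
    have h12 : y x = y x / v x * v x := (div_mul_cancel₀ (y x) (hvpos x).ne').symm
    have hx0' : (0:ℝ) ≤ x := (le_max_right _ _).trans hxm
    have hvx : v 0 ≤ v x := hvmono hx0'
    calc |B| / 2 * v 0 ≤ |y x / v x| * v x :=
          mul_le_mul h11 hvx (hvpos 0).le (abs_nonneg _)
      _ = |y x| := by
          rw [show |y x / v x| * v x = |y x / v x| * |v x| by rw [abs_of_pos (hvpos x)],
            ← abs_mul, ← h12]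
  -- final formula
  intro x
  have hb00 : bb 0 = -(∫ t in Ici (0:ℝ), u t * f t) := by
    rw [hB] at hB0; linarith
  have hsplit := integral_Ici_split hufi huf x
  have hid : y x * (r x * u' x) - r x * y' x * u x = bb x := rfl
  rw [hid]
  rw [hsplit, hbbrep x, hb00]
  ring

/-- Corollary 1.5: under (1.2), (1.5) and correct solvability in `L_p`,
for every `f ∈ L_p` the unique solution `y ∈ L_p` equals `(G f)(x) = ∫_ℝ G(x,t)f(t)dt`. -/
theorem stmt_3 (r q u u' v v' : ℝ → ℝ) (h12 : Cond12 r q) (h15 : Cond15 q)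
    (hFSS : IsFSS r q u u' v v') (p : ℝ) (hp : 1 ≤ p)
    (hcs : CorrectlySolvable r q p) :
    ∀ f : ℝ → ℝ, MemLP f p → ∀ y : ℝ → ℝ, IsSolution r q f y → MemLP y p →
      ∀ x : ℝ, y x = greenOp u v f x := by
  intro f hf y hysol hyLp x
  obtain ⟨y', hy⟩ := hysol
  obtain ⟨hu, hv, hupos, hvpos, hv'pos, hu'neg, hW, hvu, huv, -, -, -, -⟩ := hFSS
  have hfi : ∀ a b : ℝ, IntervalIntegrable f volume a b := MemLP.intervalIntegrable hp hf
  have humono : Antitone u := antitone_of_rep hu.1 hu.2.1 hu'neg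
  have hvmono : Monotone v := monotone_of_rep hv.1 hv.2.1 hv'pos
  have hvc : Continuous v := IsSolutionWith.cont hv
  have huc : Continuous u := IsSolutionWith.cont hu
  -- a solution for |f|
  have hfabs : MemLP (fun t => |f t|) p := by
    have : (fun t => |f t|) = fun t => ‖f t‖ := funext fun t => (Real.norm_eq_abs (f t)).symm
    rw [MemLP, this]
    exact hf.norm
  obtain ⟨w, ⟨⟨w', hw⟩, hwLp⟩, -⟩ := hcs.1 (fun t => |f t|) hfabs
  have hfa_i : ∀ a b : ℝ, IntervalIntegrable (fun t => |f t|) volume a b :=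
    fun a b => (hfi a b).abs
  have hvfiabs : IntegrableOn (fun t => v t * |f t|) (Iic 0) volume :=
    integrable_vg_Iic hp (fun t => abs_nonneg (f t)) hfa_i hw hwLp hu hv hW hupos hvpos
      humono hvmono hvu
  have hufiabs : IntegrableOn (fun t => u t * |f t|) (Ici 0) volume :=
    integrable_ug_Ici hp (fun t => abs_nonneg (f t)) hfa_i hw hwLp hu hv hW hupos hvpos
      humono hvmono huv
  -- transfer to `f`
  have hvfi : IntegrableOn (fun t => v t * f t) (Iic 0) volume := by
    refine Integrable.mono' hvfiabs ((hvc.aestronglyMeasurable.restrict).mul hf.1.restrict)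
      (Eventually.of_forall fun t => ?_)
    rw [Real.norm_eq_abs, abs_mul, abs_of_pos (hvpos t)]
  have hufi : IntegrableOn (fun t => u t * f t) (Ici 0) volume := by
    refine Integrable.mono' hufiabs ((huc.aestronglyMeasurable.restrict).mul hf.1.restrict)
      (Eventually.of_forall fun t => ?_)
    rw [Real.norm_eq_abs, abs_mul, abs_of_pos (hupos t)]
  -- coefficient formulas
  have hA := coefA_formula hp hfi hy hyLp hu hv hW hupos hvpos humono hvmono hvu hvfi x
  have hB := coefB_formula hp hfi hy hyLp hu hv hW hupos hvpos humono hvmono huv hufi x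
  have hyid : y x = (y x * (r x * v' x) - r x * y' x * v x) * u x
      - (y x * (r x * u' x) - r x * y' x * u x) * v x := by
    linear_combination (-(y x)) * hW x
  rw [greenOp, G1op, G2op]
  rw [hA] at hyid
  have hB' : y x * (r x * u' x) - r x * y' x * u x = -(∫ t in Ici x, u t * f t) := by
    linarith [hB]
  rw [hB'] at hyid
  rw [hyid]
  ring

end
end

section
/- Suppose conditions (1.2) and (1.6) hold. Then: (i) for every x ∈ ℝ, each of the equations (∫_{x-d}^x dt/r(t))·(∫_{x-d}^x q(t)dt) = 1 and (∫_x^{x+d} dt/r(t))·(∫_x^{x+d} q(t)dt) = 1 has a unique finite positive solution d ≥ 0, denoted d₁(x) and d₂(x) respectively; (ii) setting φ(x) = ∫_{x-d₁(x)}^x dt/r(t), ψ(x) = ∫_x^{x+d₂(x)} dt/r(t), and h(x) = φ(x)ψ(x)/(φ(x)+ψ(x)), for every x ∈ ℝ the equation ∫_{x-d}^{x+d} dt/(r(t)h(t)) = 1 has a unique finite positive solution d ≥ 0, denoted d(x); (iii) the function d(x) is continuous on ℝ; and (iv) x + d(x) → −∞ as x → −∞ and x − d(x) → +∞ as x → +∞.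 -/
open MeasureTheory Set Filter
open scoped ENNReal

noncomputable section

namespace CS4


def P (w : ℝ → ℝ) (x : ℝ) : ℝ := ∫ t in (0:ℝ)..x, w t

theorem II_of_loc {w : ℝ → ℝ} (hw : LocallyIntegrable w volume) (a b : ℝ) :
    IntervalIntegrable w volume a b := by
  rw [intervalIntegrable_iff]
  exact (hw.integrableOn_isCompact isCompact_uIcc).mono_set Set.uIoc_subset_uIcc

theorem P_diff {w : ℝ → ℝ} (hI : ∀ a b, IntervalIntegrable w volume a b) (a b : ℝ) :
    (∫ t in a..b, w t) = P w b - P w a := by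
  have h := intervalIntegral.integral_add_adjacent_intervals (hI 0 a) (hI a b)
  simp only [P]; linarith

theorem P_cont {w : ℝ → ℝ} (hI : ∀ a b, IntervalIntegrable w volume a b) :
    Continuous (P w) := intervalIntegral.continuous_primitive hI 0

theorem P_mono {w : ℝ → ℝ} (hI : ∀ a b, IntervalIntegrable w volume a b)
    (hnn : ∀ t, 0 ≤ w t) : Monotone (P w) := by
  intro a b hab
  have h : 0 ≤ ∫ t in a..b, w t := intervalIntegral.integral_nonneg (μ := volume) hab (fun u _ => hnn u)
  rw [P_diff hI a b] at h; linarith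

theorem P_strictMono {w : ℝ → ℝ} (hI : ∀ a b, IntervalIntegrable w volume a b)
    (hpos : ∀ t, 0 < w t) : StrictMono (P w) := by
  intro a b hab
  have h := intervalIntegral.intervalIntegral_pos_of_pos (hI a b) hpos hab
  rw [P_diff hI a b] at h; linarith

theorem aux_mul_lt {a b a' b' : ℝ} (ha : 0 < a) (h1 : a * b = 1) (haa' : a < a')
    (hbb' : b ≤ b') : 1 < a' * b' := by
  have hb : 0 < b := by nlinarith
  calc (1:ℝ) = a * b := h1.symm
    _ < a' * b := by nlinarith
    _ ≤ a' * b' := by nlinarith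

theorem aux_mul_lt' {a b a' b' : ℝ} (ha : 0 ≤ a) (hb : 0 ≤ b) (h1 : a' * b' = 1)
    (haa' : a < a') (hbb' : b ≤ b') : a * b < 1 := by
  have hb' : 0 < b' := by nlinarith
  calc a * b ≤ a * b' := by nlinarith
    _ < a' * b' := by nlinarith
    _ = 1 := h1

theorem unbounded_of_step {P : ℝ → ℝ} {x0 : ℝ}
    (hstep : ∀ y, x0 ≤ y → ∃ z, x0 ≤ z ∧ P y + 1/2 ≤ P z) :
    ¬ BddAbove (Set.range P) := by
  rintro ⟨B, hB⟩
  have key : ∀ n : ℕ, ∃ y, x0 ≤ y ∧ P x0 + n * (1/2) ≤ P y := by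
    intro n; induction n with
    | zero => exact ⟨x0, le_rfl, by simp⟩
    | succ n ih =>
      obtain ⟨y, hy, hPy⟩ := ih
      obtain ⟨z, hz, hPz⟩ := hstep y hy
      exact ⟨z, hz, by push_cast; linarith⟩
  obtain ⟨n, hn⟩ := exists_nat_gt (2 * (B - P x0))
  obtain ⟨y, _, hPy⟩ := key n
  have hy2 : P y ≤ B := hB ⟨y, rfl⟩
  linarith

theorem bounded_below_of_step {P : ℝ → ℝ} {x0 : ℝ}
    (hstep : ∀ y, y ≤ x0 → ∃ z, z ≤ x0 ∧ P z ≤ P y - 1/2) :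
    ¬ BddBelow (Set.range P) := by
  rintro ⟨B, hB⟩
  have key : ∀ n : ℕ, ∃ y, y ≤ x0 ∧ P y ≤ P x0 - n * (1/2) := by
    intro n; induction n with
    | zero => exact ⟨x0, le_rfl, by simp⟩
    | succ n ih =>
      obtain ⟨y, hy, hPy⟩ := ih
      obtain ⟨z, hz, hPz⟩ := hstep y hy
      exact ⟨z, hz, by push_cast; linarith⟩
  obtain ⟨n, hn⟩ := exists_nat_gt (2 * (P x0 - B))
  obtain ⟨y, _, hPy⟩ := key n
  have hy2 : B ≤ P y := hB ⟨y, rfl⟩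
  linarith






variable {r q : ℝ → ℝ}

def Rf (r : ℝ → ℝ) : ℝ → ℝ := P fun t => (r t)⁻¹
def Qf (q : ℝ → ℝ) : ℝ → ℝ := P q

theorem F1_eq (hIr : ∀ a b, IntervalIntegrable (fun t => (r t)⁻¹) volume a b)
    (hIq : ∀ a b, IntervalIntegrable q volume a b) (x d : ℝ) :
    F1 r q x d = (Rf r x - Rf r (x - d)) * (Qf q x - Qf q (x - d)) := by
  rw [F1, P_diff hIr, P_diff hIq]; rfl

theorem F2_eq (hIr : ∀ a b, IntervalIntegrable (fun t => (r t)⁻¹) volume a b)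
    (hIq : ∀ a b, IntervalIntegrable q volume a b) (x d : ℝ) :
    F2 r q x d = (Rf r (x + d) - Rf r x) * (Qf q (x + d) - Qf q x) := by
  rw [F2, P_diff hIr, P_diff hIq]; rfl

theorem F1_cont_d (hIr : ∀ a b, IntervalIntegrable (fun t => (r t)⁻¹) volume a b)
    (hIq : ∀ a b, IntervalIntegrable q volume a b) (x : ℝ) :
    Continuous fun d : ℝ => F1 r q x d := by
  have : (fun d : ℝ => F1 r q x d)
      = fun d : ℝ => (Rf r x - Rf r (x - d)) * (Qf q x - Qf q (x - d)) :=
    funext fun d => F1_eq hIr hIq x d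
  rw [this]
  have hR := P_cont hIr; have hQ := P_cont hIq
  exact ((continuous_const).sub (hR.comp (continuous_const.sub continuous_id))).mul
    ((continuous_const).sub (hQ.comp (continuous_const.sub continuous_id)))

theorem F1_cont_x (hIr : ∀ a b, IntervalIntegrable (fun t => (r t)⁻¹) volume a b)
    (hIq : ∀ a b, IntervalIntegrable q volume a b) (c : ℝ) :
    Continuous fun x : ℝ => F1 r q x c := by
  have : (fun x : ℝ => F1 r q x c)
      = fun x : ℝ => (Rf r x - Rf r (x - c)) * (Qf q x - Qf q (x - c)) :=
    funext fun x => F1_eq hIr hIq x c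
  rw [this]
  have hR := P_cont hIr; have hQ := P_cont hIq
  exact (hR.sub (hR.comp (continuous_id.sub continuous_const))).mul
    (hQ.sub (hQ.comp (continuous_id.sub continuous_const)))

theorem F2_cont_d (hIr : ∀ a b, IntervalIntegrable (fun t => (r t)⁻¹) volume a b)
    (hIq : ∀ a b, IntervalIntegrable q volume a b) (x : ℝ) :
    Continuous fun d : ℝ => F2 r q x d := by
  have : (fun d : ℝ => F2 r q x d)
      = fun d : ℝ => (Rf r (x + d) - Rf r x) * (Qf q (x + d) - Qf q x) :=
    funext fun d => F2_eq hIr hIq x d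
  rw [this]
  have hR := P_cont hIr; have hQ := P_cont hIq
  exact ((hR.comp (continuous_const.add continuous_id)).sub continuous_const).mul
    ((hQ.comp (continuous_const.add continuous_id)).sub continuous_const)

theorem F2_cont_x (hIr : ∀ a b, IntervalIntegrable (fun t => (r t)⁻¹) volume a b)
    (hIq : ∀ a b, IntervalIntegrable q volume a b) (c : ℝ) :
    Continuous fun x : ℝ => F2 r q x c := by
  have : (fun x : ℝ => F2 r q x c)
      = fun x : ℝ => (Rf r (x + c) - Rf r x) * (Qf q (x + c) - Qf q x) :=
    funext fun x => F2_eq hIr hIq x c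
  rw [this]
  have hR := P_cont hIr; have hQ := P_cont hIq
  exact ((hR.comp (continuous_id.add continuous_const)).sub hR).mul
    ((hQ.comp (continuous_id.add continuous_const)).sub hQ)

section parti
variable (hr : ∀ t, 0 < r t) (hq : ∀ t, 0 ≤ q t)
    (hIr : ∀ a b, IntervalIntegrable (fun t => (r t)⁻¹) volume a b)
    (hIq : ∀ a b, IntervalIntegrable q volume a b)
include hr hq hIr hIq

theorem F1_mono (x : ℝ) {a b : ℝ} (ha : 0 ≤ a) (hab : a ≤ b) :
    F1 r q x a ≤ F1 r q x b := by
  have hR := P_strictMono hIr fun t => inv_pos.2 (hr t)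
  have hQ := P_mono hIq hq
  rw [F1_eq hIr hIq, F1_eq hIr hIq]
  apply mul_le_mul (sub_le_sub_left (hR.monotone (by linarith)) _)
    (sub_le_sub_left (hQ (by linarith)) _)
    (sub_nonneg.2 (hQ (by linarith))) (sub_nonneg.2 (hR.monotone (by linarith)))

theorem F1_one_lt (x : ℝ) {a b : ℝ} (ha : 0 < a) (hab : a < b) (h1 : F1 r q x a = 1) :
    1 < F1 r q x b := by
  have hR := P_strictMono hIr fun t => inv_pos.2 (hr t)
  have hQ := P_mono hIq hq
  rw [F1_eq hIr hIq] at h1 ⊢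
  exact aux_mul_lt (sub_pos.2 (hR (by linarith))) h1
    (sub_lt_sub_left (hR (by linarith)) _) (sub_le_sub_left (hQ (by linarith)) _)

theorem F1_lt_one (x : ℝ) {a b : ℝ} (ha : 0 < a) (hab : a < b) (h1 : F1 r q x b = 1) :
    F1 r q x a < 1 := by
  have hR := P_strictMono hIr fun t => inv_pos.2 (hr t)
  have hQ := P_mono hIq hq
  rw [F1_eq hIr hIq] at h1 ⊢
  exact aux_mul_lt' (sub_nonneg.2 (hR.monotone (by linarith)))
    (sub_nonneg.2 (hQ (by linarith))) h1
    (sub_lt_sub_left (hR (by linarith)) _) (sub_le_sub_left (hQ (by linarith)) _)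

theorem F2_mono (x : ℝ) {a b : ℝ} (ha : 0 ≤ a) (hab : a ≤ b) :
    F2 r q x a ≤ F2 r q x b := by
  have hR := P_strictMono hIr fun t => inv_pos.2 (hr t)
  have hQ := P_mono hIq hq
  rw [F2_eq hIr hIq, F2_eq hIr hIq]
  apply mul_le_mul (sub_le_sub_right (hR.monotone (by linarith)) _)
    (sub_le_sub_right (hQ (by linarith)) _)
    (sub_nonneg.2 (hQ (by linarith))) (sub_nonneg.2 (hR.monotone (by linarith)))

theorem F2_one_lt (x : ℝ) {a b : ℝ} (ha : 0 < a) (hab : a < b) (h1 : F2 r q x a = 1) :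
    1 < F2 r q x b := by
  have hR := P_strictMono hIr fun t => inv_pos.2 (hr t)
  have hQ := P_mono hIq hq
  rw [F2_eq hIr hIq] at h1 ⊢
  exact aux_mul_lt (sub_pos.2 (hR (by linarith))) h1
    (sub_lt_sub_right (hR (by linarith)) _) (sub_le_sub_right (hQ (by linarith)) _)

theorem F2_lt_one (x : ℝ) {a b : ℝ} (ha : 0 < a) (hab : a < b) (h1 : F2 r q x b = 1) :
    F2 r q x a < 1 := by
  have hR := P_strictMono hIr fun t => inv_pos.2 (hr t)
  have hQ := P_mono hIq hq
  rw [F2_eq hIr hIq] at h1 ⊢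
  exact aux_mul_lt' (sub_nonneg.2 (hR.monotone (by linarith)))
    (sub_nonneg.2 (hQ (by linarith))) h1
    (sub_lt_sub_right (hR (by linarith)) _) (sub_le_sub_right (hQ (by linarith)) _)

theorem F1_big (h16 : Cond16 r q) (x : ℝ) : ∃ D, 0 < D ∧ 1 < F1 r q x D := by
  have h1 := (h16 x).mono_left le_sup_left
  have h2 : ∀ᶠ d : ℝ in atTop, 1 < F1 r q x d := by
    filter_upwards [h1.eventually_gt_atTop 1, eventually_gt_atTop (0:ℝ)] with d hd hd0
    have he : x - d ≤ x := by linarith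
    have : F1 r q x d = (∫ t in uIoc (x - d) x, (r t)⁻¹) * ∫ t in uIoc (x - d) x, q t := by
      rw [F1, intervalIntegral.integral_of_le he, intervalIntegral.integral_of_le he,
        uIoc_of_le he]
    rw [this]; exact hd
  obtain ⟨D, hD⟩ := (h2.and (eventually_gt_atTop (0:ℝ))).exists
  exact ⟨D, hD.2, hD.1⟩

theorem F2_big (h16 : Cond16 r q) (x : ℝ) : ∃ D, 0 < D ∧ 1 < F2 r q x D := by
  have h1 : Tendsto (fun d : ℝ =>
      (∫ t in uIoc (x - d) x, (r t)⁻¹) * ∫ t in uIoc (x - d) x, q t) atBot atTop :=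
    (h16 x).mono_left le_sup_right
  have h1' := h1.comp tendsto_neg_atTop_atBot
  have h2 : ∀ᶠ d : ℝ in atTop, 1 < F2 r q x d := by
    filter_upwards [h1'.eventually_gt_atTop 1, eventually_gt_atTop (0:ℝ)] with d hd hd0
    have he : x ≤ x + d := by linarith
    have hu : uIoc (x - -d) x = Ioc x (x + d) := by
      rw [uIoc_comm]
      rw [show x - -d = x + d by ring, uIoc_of_le he]
    have : F2 r q x d = (∫ t in uIoc (x - -d) x, (r t)⁻¹) * ∫ t in uIoc (x - -d) x, q t := by
      rw [F2, intervalIntegral.integral_of_le he, intervalIntegral.integral_of_le he, hu]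
    rw [this]; exact hd
  obtain ⟨D, hD⟩ := (h2.and (eventually_gt_atTop (0:ℝ))).exists
  exact ⟨D, hD.2, hD.1⟩

theorem exists_unique_F1 (h16 : Cond16 r q) (x : ℝ) : ∃! d : ℝ, 0 < d ∧ F1 r q x d = 1 := by
  obtain ⟨D, hD0, hD⟩ := F1_big hr hq hIr hIq h16 x
  have hc : Continuous fun d => F1 r q x d := F1_cont_d hIr hIq x
  have h0 : F1 r q x 0 = 0 := by rw [F1_eq hIr hIq]; simp
  have h1 : (1:ℝ) ∈ Icc (F1 r q x 0) (F1 r q x D) := by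
    rw [h0]; exact ⟨zero_le_one, hD.le⟩
  obtain ⟨c, hcmem, hceq0⟩ := intermediate_value_Icc hD0.le hc.continuousOn h1
  have hceq : F1 r q x c = 1 := hceq0
  have hcpos : 0 < c := by
    rcases eq_or_lt_of_le hcmem.1 with h | h
    · exfalso; rw [← h, h0] at hceq; norm_num at hceq
    · exact h
  refine ⟨c, ⟨hcpos, hceq⟩, fun y hy => ?_⟩
  rcases lt_trichotomy y c with h | h | h
  · exact absurd (F1_one_lt hr hq hIr hIq x hy.1 h hy.2) (by rw [hceq]; norm_num)
  · exact h
  · exact absurd (F1_one_lt hr hq hIr hIq x hcpos h hceq) (by rw [hy.2]; norm_num)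

theorem exists_unique_F2 (h16 : Cond16 r q) (x : ℝ) : ∃! d : ℝ, 0 < d ∧ F2 r q x d = 1 := by
  obtain ⟨D, hD0, hD⟩ := F2_big hr hq hIr hIq h16 x
  have hc : Continuous fun d => F2 r q x d := F2_cont_d hIr hIq x
  have h0 : F2 r q x 0 = 0 := by rw [F2_eq hIr hIq]; simp
  have h1 : (1:ℝ) ∈ Icc (F2 r q x 0) (F2 r q x D) := by
    rw [h0]; exact ⟨zero_le_one, hD.le⟩
  obtain ⟨c, hcmem, hceq0⟩ := intermediate_value_Icc hD0.le hc.continuousOn h1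
  have hceq : F2 r q x c = 1 := hceq0
  have hcpos : 0 < c := by
    rcases eq_or_lt_of_le hcmem.1 with h | h
    · exfalso; rw [← h, h0] at hceq; norm_num at hceq
    · exact h
  refine ⟨c, ⟨hcpos, hceq⟩, fun y hy => ?_⟩
  rcases lt_trichotomy y c with h | h | h
  · exact absurd (F2_one_lt hr hq hIr hIq x hy.1 h hy.2) (by rw [hceq]; norm_num)
  · exact h
  · exact absurd (F2_one_lt hr hq hIr hIq x hcpos h hceq) (by rw [hy.2]; norm_num)

end parti

theorem half_step {r w : ℝ → ℝ}
    (hIr : ∀ a b, IntervalIntegrable (fun t => (r t)⁻¹) volume a b)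
    (hIw : ∀ a b, IntervalIntegrable w volume a b)
    {y z K : ℝ} (hyz : y ≤ z) (hK : 0 < K)
    (hb : ∀ t ∈ Icc y z, K⁻¹ * (r t)⁻¹ ≤ w t)
    (hgap : Rf r z - Rf r y = K / 2) : P w y + 1/2 ≤ P w z := by
  have h1 : (∫ t in y..z, K⁻¹ * (r t)⁻¹) ≤ ∫ t in y..z, w t :=
    intervalIntegral.integral_mono_on hyz ((hIr y z).const_mul _) (hIw y z) hb
  have h2 : (∫ t in y..z, K⁻¹ * (r t)⁻¹) = K⁻¹ * (Rf r z - Rf r y) := by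
    rw [intervalIntegral.integral_const_mul]
    congr 1
    exact P_diff hIr y z
  have h3 : (∫ t in y..z, w t) = P w z - P w y := P_diff hIw y z
  rw [h2, h3, hgap] at h1
  have h4 : K⁻¹ * (K / 2) = 1/2 := by field_simp
  linarith

section partii
variable {r q d1 d2 : ℝ → ℝ}

theorem phi_eq (hIr : ∀ a b, IntervalIntegrable (fun t => (r t)⁻¹) volume a b)
    (x : ℝ) : phiF r d1 x = Rf r x - Rf r (x - d1 x) := P_diff hIr _ _

theorem psi_eq (hIr : ∀ a b, IntervalIntegrable (fun t => (r t)⁻¹) volume a b)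
    (x : ℝ) : psiF r d2 x = Rf r (x + d2 x) - Rf r x := P_diff hIr _ _

theorem phi_pos (hr : ∀ t, 0 < r t) (hIr : ∀ a b, IntervalIntegrable (fun t => (r t)⁻¹) volume a b) (hd1 : IsD1 r q d1)
    (x : ℝ) : 0 < phiF r d1 x := by
  rw [phi_eq hIr x]
  exact sub_pos.2 ((P_strictMono hIr fun t => inv_pos.2 (hr t)) (by linarith [(hd1 x).1]))

theorem psi_pos (hr : ∀ t, 0 < r t) (hIr : ∀ a b, IntervalIntegrable (fun t => (r t)⁻¹) volume a b) (hd2 : IsD2 r q d2)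
    (x : ℝ) : 0 < psiF r d2 x := by
  rw [psi_eq hIr x]
  exact sub_pos.2 ((P_strictMono hIr fun t => inv_pos.2 (hr t)) (by linarith [(hd2 x).1]))

theorem h_pos (hr : ∀ t, 0 < r t) (hIr : ∀ a b, IntervalIntegrable (fun t => (r t)⁻¹) volume a b) (hd1 : IsD1 r q d1) (hd2 : IsD2 r q d2)
    (x : ℝ) : 0 < hF r d1 d2 x :=
  div_pos (mul_pos (phi_pos hr hIr hd1 x) (psi_pos hr hIr hd2 x))
    (add_pos (phi_pos hr hIr hd1 x) (psi_pos hr hIr hd2 x))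

theorem h_le_phi (hr : ∀ t, 0 < r t) (hIr : ∀ a b, IntervalIntegrable (fun t => (r t)⁻¹) volume a b) (hd1 : IsD1 r q d1) (hd2 : IsD2 r q d2)
    (x : ℝ) : hF r d1 d2 x ≤ phiF r d1 x := by
  have h1 := phi_pos hr hIr hd1 x; have h2 := psi_pos hr hIr hd2 x
  rw [hF, div_le_iff₀ (by linarith)]
  nlinarith

theorem h_le_psi (hr : ∀ t, 0 < r t) (hIr : ∀ a b, IntervalIntegrable (fun t => (r t)⁻¹) volume a b) (hd1 : IsD1 r q d1) (hd2 : IsD2 r q d2)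
    (x : ℝ) : hF r d1 d2 x ≤ psiF r d2 x := by
  have h1 := phi_pos hr hIr hd1 x; have h2 := psi_pos hr hIr hd2 x
  rw [hF, div_le_iff₀ (by linarith)]
  nlinarith

theorem mono1 (hr : ∀ t, 0 < r t) (hq : ∀ t, 0 ≤ q t) (hIr : ∀ a b, IntervalIntegrable (fun t => (r t)⁻¹) volume a b) (hIq : ∀ a b, IntervalIntegrable q volume a b) (hd1 : IsD1 r q d1)
    : Monotone fun x => x - d1 x := by
  intro x y hxy
  show x - d1 x ≤ y - d1 y
  by_contra hcon; push_neg at hcon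
  have hR : StrictMono (Rf r) := P_strictMono hIr fun t => inv_pos.2 (hr t)
  have hQ : Monotone (Qf q) := P_mono hIq hq
  have e1 : F1 r q x (d1 x) = 1 := (hd1 x).2
  have e2 : F1 r q y (d1 y) = 1 := (hd1 y).2
  rw [F1_eq hIr hIq] at e1 e2
  have hA : Rf r x - Rf r (x - d1 x) < Rf r y - Rf r (y - d1 y) := by
    have h1 : Rf r (y - d1 y) < Rf r (x - d1 x) := hR hcon
    have h2 : Rf r x ≤ Rf r y := hR.monotone hxy
    linarith
  have hApos : 0 < Rf r x - Rf r (x - d1 x) :=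
    sub_pos.2 (hR (by linarith [(hd1 x).1]))
  have hB : Qf q x - Qf q (x - d1 x) ≤ Qf q y - Qf q (y - d1 y) := by
    have h1 : Qf q x ≤ Qf q y := hQ hxy
    have h2 : Qf q (y - d1 y) ≤ Qf q (x - d1 x) := hQ hcon.le
    linarith
  have := aux_mul_lt hApos e1 hA hB
  linarith

theorem mono2 (hr : ∀ t, 0 < r t) (hq : ∀ t, 0 ≤ q t) (hIr : ∀ a b, IntervalIntegrable (fun t => (r t)⁻¹) volume a b) (hIq : ∀ a b, IntervalIntegrable q volume a b) (hd2 : IsD2 r q d2)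
    : Monotone fun x => x + d2 x := by
  intro x y hxy
  show x + d2 x ≤ y + d2 y
  by_contra hcon; push_neg at hcon
  have hR : StrictMono (Rf r) := P_strictMono hIr fun t => inv_pos.2 (hr t)
  have hQ : Monotone (Qf q) := P_mono hIq hq
  have e1 : F2 r q x (d2 x) = 1 := (hd2 x).2
  have e2 : F2 r q y (d2 y) = 1 := (hd2 y).2
  rw [F2_eq hIr hIq] at e1 e2
  have hA : Rf r (y + d2 y) - Rf r y < Rf r (x + d2 x) - Rf r x := by
    have h1 : Rf r (y + d2 y) < Rf r (x + d2 x) := hR hcon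
    have h2 : Rf r x ≤ Rf r y := hR.monotone hxy
    linarith
  have hApos : 0 < Rf r (y + d2 y) - Rf r y :=
    sub_pos.2 (hR (by linarith [(hd2 y).1]))
  have hB : Qf q (y + d2 y) - Qf q y ≤ Qf q (x + d2 x) - Qf q x := by
    have h1 : Qf q x ≤ Qf q y := hQ hxy
    have h2 : Qf q (y + d2 y) ≤ Qf q (x + d2 x) := hQ hcon.le
    linarith
  have := aux_mul_lt hApos e2 hA hB
  linarith

theorem cont_d1 (hr : ∀ t, 0 < r t) (hq : ∀ t, 0 ≤ q t) (hIr : ∀ a b, IntervalIntegrable (fun t => (r t)⁻¹) volume a b) (hIq : ∀ a b, IntervalIntegrable q volume a b) (hd1 : IsD1 r q d1)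
    : Continuous d1 := by
  rw [continuous_iff_continuousAt]
  intro x
  rw [ContinuousAt, Metric.tendsto_nhds]
  intro ε hε
  have hd1x := hd1 x
  have hup : 1 < F1 r q x (d1 x + ε) :=
    F1_one_lt hr hq hIr hIq x hd1x.1 (by linarith) hd1x.2
  have h1 : {y : ℝ | 1 < F1 r q y (d1 x + ε)} ∈ nhds x :=
    (isOpen_lt continuous_const (F1_cont_x hIr hIq (d1 x + ε))).mem_nhds hup
  by_cases hcase : 0 < d1 x - ε
  · have hlow : F1 r q x (d1 x - ε) < 1 :=
      F1_lt_one hr hq hIr hIq x hcase (by linarith) hd1x.2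
    have h2 : {y : ℝ | F1 r q y (d1 x - ε) < 1} ∈ nhds x :=
      (isOpen_lt (F1_cont_x hIr hIq (d1 x - ε)) continuous_const).mem_nhds hlow
    filter_upwards [h1, h2] with y hy1 hy2
    rw [Real.dist_eq, abs_sub_lt_iff]
    constructor
    · by_contra hcon; push_neg at hcon
      have h3 : F1 r q y (d1 x + ε) ≤ F1 r q y (d1 y) :=
        F1_mono hr hq hIr hIq y (by linarith) (by linarith)
      rw [(hd1 y).2] at h3
      exact absurd (lt_of_lt_of_le hy1 h3) (by norm_num)
    · by_contra hcon; push_neg at hcon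
      have h3 : F1 r q y (d1 y) ≤ F1 r q y (d1 x - ε) :=
        F1_mono hr hq hIr hIq y (hd1 y).1.le (by linarith)
      rw [(hd1 y).2] at h3
      exact absurd (lt_of_le_of_lt h3 hy2) (by norm_num)
  · push_neg at hcase
    filter_upwards [h1] with y hy1
    rw [Real.dist_eq, abs_sub_lt_iff]
    constructor
    · by_contra hcon; push_neg at hcon
      have h3 : F1 r q y (d1 x + ε) ≤ F1 r q y (d1 y) :=
        F1_mono hr hq hIr hIq y (by linarith) (by linarith)
      rw [(hd1 y).2] at h3
      exact absurd (lt_of_lt_of_le hy1 h3) (by norm_num)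
    · have := (hd1 y).1; linarith

theorem cont_d2 (hr : ∀ t, 0 < r t) (hq : ∀ t, 0 ≤ q t) (hIr : ∀ a b, IntervalIntegrable (fun t => (r t)⁻¹) volume a b) (hIq : ∀ a b, IntervalIntegrable q volume a b) (hd2 : IsD2 r q d2)
    : Continuous d2 := by
  rw [continuous_iff_continuousAt]
  intro x
  rw [ContinuousAt, Metric.tendsto_nhds]
  intro ε hε
  have hd2x := hd2 x
  have hup : 1 < F2 r q x (d2 x + ε) :=
    F2_one_lt hr hq hIr hIq x hd2x.1 (by linarith) hd2x.2
  have h1 : {y : ℝ | 1 < F2 r q y (d2 x + ε)} ∈ nhds x :=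
    (isOpen_lt continuous_const (F2_cont_x hIr hIq (d2 x + ε))).mem_nhds hup
  by_cases hcase : 0 < d2 x - ε
  · have hlow : F2 r q x (d2 x - ε) < 1 :=
      F2_lt_one hr hq hIr hIq x hcase (by linarith) hd2x.2
    have h2 : {y : ℝ | F2 r q y (d2 x - ε) < 1} ∈ nhds x :=
      (isOpen_lt (F2_cont_x hIr hIq (d2 x - ε)) continuous_const).mem_nhds hlow
    filter_upwards [h1, h2] with y hy1 hy2
    rw [Real.dist_eq, abs_sub_lt_iff]
    constructor
    · by_contra hcon; push_neg at hcon
      have h3 : F2 r q y (d2 x + ε) ≤ F2 r q y (d2 y) :=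
        F2_mono hr hq hIr hIq y (by linarith) (by linarith)
      rw [(hd2 y).2] at h3
      exact absurd (lt_of_lt_of_le hy1 h3) (by norm_num)
    · by_contra hcon; push_neg at hcon
      have h3 : F2 r q y (d2 y) ≤ F2 r q y (d2 x - ε) :=
        F2_mono hr hq hIr hIq y (hd2 y).1.le (by linarith)
      rw [(hd2 y).2] at h3
      exact absurd (lt_of_le_of_lt h3 hy2) (by norm_num)
  · push_neg at hcase
    filter_upwards [h1] with y hy1
    rw [Real.dist_eq, abs_sub_lt_iff]
    constructor
    · by_contra hcon; push_neg at hcon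
      have h3 : F2 r q y (d2 x + ε) ≤ F2 r q y (d2 y) :=
        F2_mono hr hq hIr hIq y (by linarith) (by linarith)
      rw [(hd2 y).2] at h3
      exact absurd (lt_of_lt_of_le hy1 h3) (by norm_num)
    · have := (hd2 y).1; linarith

theorem cont_h (hr : ∀ t, 0 < r t) (hq : ∀ t, 0 ≤ q t) (hIr : ∀ a b, IntervalIntegrable (fun t => (r t)⁻¹) volume a b) (hIq : ∀ a b, IntervalIntegrable q volume a b) (hd1 : IsD1 r q d1) (hd2 : IsD2 r q d2)
    : Continuous (hF r d1 d2) := by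
  have hphi : Continuous (phiF r d1) := by
    have : phiF r d1 = fun x => Rf r x - Rf r (x - d1 x) := funext fun x => phi_eq hIr x
    rw [this]
    exact (P_cont hIr).sub
      ((P_cont hIr).comp (continuous_id.sub (cont_d1 hr hq hIr hIq hd1)))
  have hpsi : Continuous (psiF r d2) := by
    have : psiF r d2 = fun x => Rf r (x + d2 x) - Rf r x := funext fun x => psi_eq hIr x
    rw [this]
    exact ((P_cont hIr).comp (continuous_id.add (cont_d2 hr hq hIr hIq hd2))).sub (P_cont hIr)
  have : hF r d1 d2 = fun x => phiF r d1 x * psiF r d2 x / (phiF r d1 x + psiF r d2 x) :=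
    funext fun x => rfl
  rw [this]
  exact (hphi.mul hpsi).div (hphi.add hpsi)
    (fun x => ne_of_gt (add_pos (phi_pos hr hIr hd1 x) (psi_pos hr hIr hd2 x)))

theorem hIw (hr : ∀ t, 0 < r t) (hq : ∀ t, 0 ≤ q t) (hIr : ∀ a b, IntervalIntegrable (fun t => (r t)⁻¹) volume a b) (hIq : ∀ a b, IntervalIntegrable q volume a b) (hd1 : IsD1 r q d1) (hd2 : IsD2 r q d2)
    : ∀ a b, IntervalIntegrable (fun t => (r t * hF r d1 d2 t)⁻¹) volume a b := by
  have hw : (fun t => (r t * hF r d1 d2 t)⁻¹)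
      = fun t => (r t)⁻¹ * (hF r d1 d2 t)⁻¹ := funext fun t => mul_inv _ _
  rw [hw]
  intro a b
  exact (hIr a b).mul_continuousOn
    (((cont_h hr hq hIr hIq hd1 hd2).inv₀
      (fun t => ne_of_gt (h_pos hr hIr hd1 hd2 t))).continuousOn)

theorem Ph_top (hr : ∀ t, 0 < r t) (hq : ∀ t, 0 ≤ q t) (hIr : ∀ a b, IntervalIntegrable (fun t => (r t)⁻¹) volume a b) (hIq : ∀ a b, IntervalIntegrable q volume a b) (hd1 : IsD1 r q d1) (hd2 : IsD2 r q d2)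
    : Tendsto (P fun t => (r t * hF r d1 d2 t)⁻¹) atTop atTop := by
  set W : ℝ → ℝ := (fun t => (r t * hF r d1 d2 t)⁻¹) with hW
  have hIW : ∀ a b, IntervalIntegrable W volume a b := hIw hr hq hIr hIq hd1 hd2
  have hWpos : ∀ t, 0 < W t := fun t => inv_pos.2 (mul_pos (hr t) (h_pos hr hIr hd1 hd2 t))
  have hR : StrictMono (Rf r) := P_strictMono hIr fun t => inv_pos.2 (hr t)
  refine tendsto_atTop_atTop_of_monotone' (P_mono hIW fun t => (hWpos t).le) ?_
  refine unbounded_of_step (x0 := (0:ℝ)) ?_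
  intro y hy
  by_cases hbdd : BddAbove (Set.range (Rf r))
  · set L := sSup (Set.range (Rf r)) with hL
    have hlt : ∀ t, Rf r t < L := fun t =>
      lt_of_lt_of_le (hR (lt_add_one t)) (le_csSup hbdd ⟨t + 1, rfl⟩)
    set v : ℝ := (Rf r y + L) / 2 with hv
    have hv1 : Rf r y < v := by have := hlt y; rw [hv]; linarith
    have hv2 : v < L := by have := hlt y; rw [hv]; linarith
    obtain ⟨a, ⟨z₀, rfl⟩, hz₀⟩ := exists_lt_of_lt_csSup (s := Set.range (Rf r)) ⟨Rf r 0, ⟨0, rfl⟩⟩ hv2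
    have hyz₀ : y ≤ z₀ := (hR.lt_iff_lt.1 (hv1.trans hz₀)).le
    obtain ⟨z, hzmem, hz⟩ :=
      intermediate_value_Icc hyz₀ (P_cont hIr).continuousOn ⟨hv1.le, hz₀.le⟩
    have hz' : Rf r z = v := hz
    refine ⟨z, le_trans hy hzmem.1, ?_⟩
    have hKpos : 0 < L - Rf r y := by have := hlt y; linarith
    refine half_step hIr hIW hzmem.1 hKpos ?_ ?_
    · intro t ht
      have h1 : hF r d1 d2 t ≤ L - Rf r y := by
        have h2 : hF r d1 d2 t ≤ psiF r d2 t := h_le_psi hr hIr hd1 hd2 t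
        have h3 : psiF r d2 t = Rf r (t + d2 t) - Rf r t := psi_eq hIr t
        have h4 : Rf r (t + d2 t) ≤ L := (hlt _).le
        have h5 : Rf r y ≤ Rf r t := hR.monotone ht.1
        linarith
      have h6 := h_pos hr hIr hd1 hd2 t
      have h7 : (L - Rf r y)⁻¹ ≤ (hF r d1 d2 t)⁻¹ := inv_anti₀ h6 h1
      calc (L - Rf r y)⁻¹ * (r t)⁻¹ ≤ (hF r d1 d2 t)⁻¹ * (r t)⁻¹ :=
            mul_le_mul_of_nonneg_right h7 (inv_nonneg.2 (hr t).le)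
        _ = W t := by rw [show W t = (r t * hF r d1 d2 t)⁻¹ from rfl, mul_inv]; ring
    · rw [hz', hv]; ring
  · set c := Rf r (0 - d1 0) with hc
    have hmono1 := mono1 hr hq hIr hIq hd1
    have hcy : ∀ t : ℝ, 0 ≤ t → c ≤ Rf r (t - d1 t) := fun t ht => hR.monotone (hmono1 ht)
    have hcylt : c < Rf r y :=
      lt_of_le_of_lt (hcy y hy) (hR (by linarith [(hd1 y).1]))
    set v : ℝ := 2 * Rf r y - c with hv
    have hv1 : Rf r y < v := by rw [hv]; linarith
    obtain ⟨a, ⟨z₀, rfl⟩, hz₀⟩ := not_bddAbove_iff.1 hbdd v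
    have hyz₀ : y ≤ z₀ := (hR.lt_iff_lt.1 (hv1.trans hz₀)).le
    obtain ⟨z, hzmem, hz⟩ :=
      intermediate_value_Icc hyz₀ (P_cont hIr).continuousOn ⟨hv1.le, hz₀.le⟩
    have hz' : Rf r z = v := hz
    refine ⟨z, le_trans hy hzmem.1, ?_⟩
    have hKpos : 0 < 2 * (Rf r y - c) := by linarith
    refine half_step hIr hIW hzmem.1 hKpos ?_ ?_
    · intro t ht
      have h1 : hF r d1 d2 t ≤ 2 * (Rf r y - c) := by
        have h2 : hF r d1 d2 t ≤ phiF r d1 t := h_le_phi hr hIr hd1 hd2 t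
        have h3 : phiF r d1 t = Rf r t - Rf r (t - d1 t) := phi_eq hIr t
        have h4 : c ≤ Rf r (t - d1 t) := hcy t (le_trans hy ht.1)
        have h5 : Rf r t ≤ v := le_of_le_of_eq (hR.monotone ht.2) hz'
        rw [hv] at h5
        linarith
      have h6 := h_pos hr hIr hd1 hd2 t
      have h7 : (2 * (Rf r y - c))⁻¹ ≤ (hF r d1 d2 t)⁻¹ := inv_anti₀ h6 h1
      calc (2 * (Rf r y - c))⁻¹ * (r t)⁻¹ ≤ (hF r d1 d2 t)⁻¹ * (r t)⁻¹ :=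
            mul_le_mul_of_nonneg_right h7 (inv_nonneg.2 (hr t).le)
        _ = W t := by rw [show W t = (r t * hF r d1 d2 t)⁻¹ from rfl, mul_inv]; ring
    · rw [hz', hv]; ring

theorem Ph_bot (hr : ∀ t, 0 < r t) (hq : ∀ t, 0 ≤ q t) (hIr : ∀ a b, IntervalIntegrable (fun t => (r t)⁻¹) volume a b) (hIq : ∀ a b, IntervalIntegrable q volume a b) (hd1 : IsD1 r q d1) (hd2 : IsD2 r q d2)
    : Tendsto (P fun t => (r t * hF r d1 d2 t)⁻¹) atBot atBot := by
  set W : ℝ → ℝ := (fun t => (r t * hF r d1 d2 t)⁻¹) with hW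
  have hIW : ∀ a b, IntervalIntegrable W volume a b := hIw hr hq hIr hIq hd1 hd2
  have hWpos : ∀ t, 0 < W t := fun t => inv_pos.2 (mul_pos (hr t) (h_pos hr hIr hd1 hd2 t))
  have hR : StrictMono (Rf r) := P_strictMono hIr fun t => inv_pos.2 (hr t)
  refine tendsto_atBot_atBot_of_monotone' (P_mono hIW fun t => (hWpos t).le) ?_
  refine bounded_below_of_step (x0 := (0:ℝ)) ?_
  intro y hy
  by_cases hbdd : BddBelow (Set.range (Rf r))
  · set L := sInf (Set.range (Rf r)) with hL
    have hlt : ∀ t, L < Rf r t := fun t =>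
      lt_of_le_of_lt (csInf_le hbdd ⟨t - 1, rfl⟩) (hR (by linarith))
    set v : ℝ := (Rf r y + L) / 2 with hv
    have hv1 : v < Rf r y := by have := hlt y; rw [hv]; linarith
    have hv2 : L < v := by have := hlt y; rw [hv]; linarith
    obtain ⟨a, ⟨z₀, rfl⟩, hz₀⟩ := exists_lt_of_csInf_lt (s := Set.range (Rf r)) ⟨Rf r 0, ⟨0, rfl⟩⟩ hv2
    have hz₀y : z₀ ≤ y := (hR.lt_iff_lt.1 (hz₀.trans hv1)).le
    obtain ⟨z, hzmem, hz⟩ :=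
      intermediate_value_Icc hz₀y (P_cont hIr).continuousOn ⟨hz₀.le, hv1.le⟩
    have hz' : Rf r z = v := hz
    refine ⟨z, le_trans hzmem.2 hy, ?_⟩
    have hKpos : 0 < Rf r y - L := by have := hlt y; linarith
    have hstep := half_step hIr hIW hzmem.2 hKpos ?_ ?_
    · linarith
    · intro t ht
      have h1 : hF r d1 d2 t ≤ Rf r y - L := by
        have h2 : hF r d1 d2 t ≤ phiF r d1 t := h_le_phi hr hIr hd1 hd2 t
        have h3 : phiF r d1 t = Rf r t - Rf r (t - d1 t) := phi_eq hIr t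
        have h4 : L ≤ Rf r (t - d1 t) := (hlt _).le
        have h5 : Rf r t ≤ Rf r y := hR.monotone ht.2
        linarith
      have h6 := h_pos hr hIr hd1 hd2 t
      have h7 : (Rf r y - L)⁻¹ ≤ (hF r d1 d2 t)⁻¹ := inv_anti₀ h6 h1
      calc (Rf r y - L)⁻¹ * (r t)⁻¹ ≤ (hF r d1 d2 t)⁻¹ * (r t)⁻¹ :=
            mul_le_mul_of_nonneg_right h7 (inv_nonneg.2 (hr t).le)
        _ = W t := by rw [show W t = (r t * hF r d1 d2 t)⁻¹ from rfl, mul_inv]; ring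
    · rw [hz', hv]; ring
  · set c := Rf r (0 + d2 0) with hc
    have hmono2 := mono2 hr hq hIr hIq hd2
    have hcy : ∀ t : ℝ, t ≤ 0 → Rf r (t + d2 t) ≤ c := fun t ht => hR.monotone (hmono2 ht)
    have hcylt : Rf r y < c :=
      lt_of_lt_of_le (hR (by linarith [(hd2 y).1])) (hcy y hy)
    set v : ℝ := 2 * Rf r y - c with hv
    have hv1 : v < Rf r y := by rw [hv]; linarith
    obtain ⟨a, ⟨z₀, rfl⟩, hz₀⟩ := not_bddBelow_iff.1 hbdd v
    have hz₀y : z₀ ≤ y := (hR.lt_iff_lt.1 (hz₀.trans hv1)).le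
    obtain ⟨z, hzmem, hz⟩ :=
      intermediate_value_Icc hz₀y (P_cont hIr).continuousOn ⟨hz₀.le, hv1.le⟩
    have hz' : Rf r z = v := hz
    refine ⟨z, le_trans hzmem.2 hy, ?_⟩
    have hKpos : 0 < 2 * (c - Rf r y) := by linarith
    have hstep := half_step hIr hIW hzmem.2 hKpos ?_ ?_
    · linarith
    · intro t ht
      have h1 : hF r d1 d2 t ≤ 2 * (c - Rf r y) := by
        have h2 : hF r d1 d2 t ≤ psiF r d2 t := h_le_psi hr hIr hd1 hd2 t
        have h3 : psiF r d2 t = Rf r (t + d2 t) - Rf r t := psi_eq hIr t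
        have h4 : Rf r (t + d2 t) ≤ c := hcy t (le_trans ht.2 hy)
        have h5 : v ≤ Rf r t := le_of_eq_of_le hz'.symm (hR.monotone ht.1)
        rw [hv] at h5
        linarith
      have h6 := h_pos hr hIr hd1 hd2 t
      have h7 : (2 * (c - Rf r y))⁻¹ ≤ (hF r d1 d2 t)⁻¹ := inv_anti₀ h6 h1
      calc (2 * (c - Rf r y))⁻¹ * (r t)⁻¹ ≤ (hF r d1 d2 t)⁻¹ * (r t)⁻¹ :=
            mul_le_mul_of_nonneg_right h7 (inv_nonneg.2 (hr t).le)
        _ = W t := by rw [show W t = (r t * hF r d1 d2 t)⁻¹ from rfl, mul_inv]; ring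
    · rw [hz', hv]; ring

end partii


end CS4

/-- Lemma 1.6: under (1.2) and (1.6), the equations (1.15) have unique
positive solutions `d₁(x)`, `d₂(x)`; with `φ, ψ, h` built from them, equation (1.18) has
a unique positive solution `d(x)`; `d` is continuous, and `x + d(x) → -∞` as `x → -∞`,
`x - d(x) → +∞` as `x → +∞`. -/
theorem stmt_4 (r q : ℝ → ℝ) (h12 : Cond12 r q) (h16 : Cond16 r q) :
    (∀ x : ℝ, (∃! d : ℝ, 0 < d ∧ F1 r q x d = 1) ∧ (∃! d : ℝ, 0 < d ∧ F2 r q x d = 1)) ∧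
    ∀ d1 d2 : ℝ → ℝ, IsD1 r q d1 → IsD2 r q d2 →
      (∀ x : ℝ, ∃! d : ℝ, 0 < d ∧ (∫ t in (x - d)..(x + d), (r t * hF r d1 d2 t)⁻¹) = 1) ∧
      ∀ d : ℝ → ℝ, IsD r (hF r d1 d2) d →
        Continuous d ∧ Tendsto (fun x => x + d x) atBot atBot ∧
          Tendsto (fun x => x - d x) atTop atTop := by
  obtain ⟨hr, hq, hlocr, hlocq⟩ := h12
  have hIr : ∀ a b, IntervalIntegrable (fun t => (r t)⁻¹) volume a b :=
    CS4.II_of_loc hlocr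
  have hIq : ∀ a b, IntervalIntegrable q volume a b := CS4.II_of_loc hlocq
  constructor
  · intro x
    exact ⟨CS4.exists_unique_F1 hr hq hIr hIq h16 x,
           CS4.exists_unique_F2 hr hq hIr hIq h16 x⟩
  intro d1 d2 hd1 hd2
  set W : ℝ → ℝ := (fun t => (r t * hF r d1 d2 t)⁻¹) with hW
  have hIW : ∀ a b, IntervalIntegrable W volume a b := CS4.hIw hr hq hIr hIq hd1 hd2
  have hWpos : ∀ t, 0 < W t :=
    fun t => inv_pos.2 (mul_pos (hr t) (CS4.h_pos hr hIr hd1 hd2 t))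
  have hPh : StrictMono (CS4.P W) := CS4.P_strictMono hIW hWpos
  have hPhc : Continuous (CS4.P W) := CS4.P_cont hIW
  have htop : Tendsto (CS4.P W) atTop atTop := CS4.Ph_top hr hq hIr hIq hd1 hd2
  have hbot : Tendsto (CS4.P W) atBot atBot := CS4.Ph_bot hr hq hIr hIq hd1 hd2
  have hint : ∀ a b : ℝ, (∫ t in a..b, (r t * hF r d1 d2 t)⁻¹) = CS4.P W b - CS4.P W a :=
    CS4.P_diff hIW
  -- the two-sided primitive gap function
  have hGmono : ∀ y : ℝ, StrictMono fun e : ℝ => CS4.P W (y + e) - CS4.P W (y - e) := by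
    intro y e e' hee'
    have h1 := hPh (show y + e < y + e' by linarith)
    have h2 := hPh (show y - e' < y - e by linarith)
    simp only []
    linarith
  constructor
  · -- existence and uniqueness of d(x)
    intro x
    obtain ⟨z, hz⟩ := (htop.eventually_ge_atTop (CS4.P W x + 2)).exists
    set D : ℝ := max (z - x) 1 with hD
    have hD1 : (0:ℝ) < D := lt_of_lt_of_le one_pos (le_max_right _ _)
    have hbig : 2 ≤ CS4.P W (x + D) - CS4.P W (x - D) := by
      have h1 : z ≤ x + D := by
        have := le_max_left (z - x) 1; rw [hD]; linarith [le_max_left (z - x) 1]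
      have h2 : CS4.P W z ≤ CS4.P W (x + D) := hPh.monotone h1
      have h3 : CS4.P W (x - D) ≤ CS4.P W x := hPh.monotone (by linarith)
      linarith
    have hgc : Continuous fun e : ℝ => CS4.P W (x + e) - CS4.P W (x - e) :=
      (hPhc.comp (continuous_const.add continuous_id)).sub
        (hPhc.comp (continuous_const.sub continuous_id))
    have h0 : CS4.P W (x + 0) - CS4.P W (x - 0) = 0 := by norm_num
    have h1mem : (1:ℝ) ∈ Icc (CS4.P W (x + 0) - CS4.P W (x - 0))
        (CS4.P W (x + D) - CS4.P W (x - D)) := by rw [h0]; exact ⟨zero_le_one, by linarith⟩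
    obtain ⟨e, hemem, heeq0⟩ := intermediate_value_Icc hD1.le hgc.continuousOn h1mem
    have heeq : CS4.P W (x + e) - CS4.P W (x - e) = 1 := heeq0
    have hepos : 0 < e := by
      rcases eq_or_lt_of_le hemem.1 with h | h
      · exfalso; rw [← h] at heeq; rw [h0] at heeq; norm_num at heeq
      · exact h
    refine ⟨e, ⟨hepos, by rw [hint]; linarith⟩, ?_⟩
    intro y hy
    have hy2 : CS4.P W (x + y) - CS4.P W (x - y) = 1 := by
      have := hy.2; rw [hint] at this; linarith
    rcases lt_trichotomy y e with h | h | h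
    · exfalso
      have h4 : CS4.P W (x + y) - CS4.P W (x - y) < CS4.P W (x + e) - CS4.P W (x - e) :=
        hGmono x h
      rw [hy2, heeq] at h4; exact lt_irrefl _ h4
    · exact h
    · exfalso
      have h4 : CS4.P W (x + e) - CS4.P W (x - e) < CS4.P W (x + y) - CS4.P W (x - y) :=
        hGmono x h
      rw [heeq, hy2] at h4; exact lt_irrefl _ h4
  · -- properties of d
    intro d hd
    have hdeq : ∀ x : ℝ, CS4.P W (x + d x) - CS4.P W (x - d x) = 1 := by
      intro x
      have := (hd x).2; rw [hint] at this; linarith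
    refine ⟨?_, ?_, ?_⟩
    · -- continuity
      rw [continuous_iff_continuousAt]
      intro x
      rw [ContinuousAt, Metric.tendsto_nhds]
      intro ε hε
      have hdx := hd x
      have hup : 1 < CS4.P W (x + (d x + ε)) - CS4.P W (x - (d x + ε)) := by
        have h4 : CS4.P W (x + d x) - CS4.P W (x - d x)
            < CS4.P W (x + (d x + ε)) - CS4.P W (x - (d x + ε)) :=
          hGmono x (show d x < d x + ε by linarith)
        rw [hdeq x] at h4; exact h4
      have hGc : ∀ e : ℝ, Continuous fun y : ℝ => CS4.P W (y + e) - CS4.P W (y - e) := by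
        intro e
        exact (hPhc.comp (continuous_id.add continuous_const)).sub
          (hPhc.comp (continuous_id.sub continuous_const))
      have h1 : {y : ℝ | 1 < CS4.P W (y + (d x + ε)) - CS4.P W (y - (d x + ε))} ∈ nhds x :=
        (isOpen_lt continuous_const (hGc (d x + ε))).mem_nhds hup
      by_cases hcase : 0 < d x - ε
      · have hlow : CS4.P W (x + (d x - ε)) - CS4.P W (x - (d x - ε)) < 1 := by
          have h4 : CS4.P W (x + (d x - ε)) - CS4.P W (x - (d x - ε))
              < CS4.P W (x + d x) - CS4.P W (x - d x) :=
            hGmono x (show d x - ε < d x by linarith)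
          rw [hdeq x] at h4; exact h4
        have h2 : {y : ℝ | CS4.P W (y + (d x - ε)) - CS4.P W (y - (d x - ε)) < 1} ∈ nhds x :=
          (isOpen_lt (hGc (d x - ε)) continuous_const).mem_nhds hlow
        filter_upwards [h1, h2] with y hy1 hy2
        rw [Real.dist_eq, abs_sub_lt_iff]
        constructor
        · by_contra hcon; push_neg at hcon
          have h3 : CS4.P W (y + (d x + ε)) - CS4.P W (y - (d x + ε))
              ≤ CS4.P W (y + d y) - CS4.P W (y - d y) :=
            (hGmono y).monotone (show d x + ε ≤ d y by linarith)
          rw [hdeq y] at h3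
          exact absurd (lt_of_lt_of_le hy1 h3) (by norm_num)
        · by_contra hcon; push_neg at hcon
          have h3 : CS4.P W (y + d y) - CS4.P W (y - d y)
              ≤ CS4.P W (y + (d x - ε)) - CS4.P W (y - (d x - ε)) :=
            (hGmono y).monotone (show d y ≤ d x - ε by linarith)
          rw [hdeq y] at h3
          exact absurd (lt_of_le_of_lt h3 hy2) (by norm_num)
      · push_neg at hcase
        filter_upwards [h1] with y hy1
        rw [Real.dist_eq, abs_sub_lt_iff]
        constructor
        · by_contra hcon; push_neg at hcon
          have h3 : CS4.P W (y + (d x + ε)) - CS4.P W (y - (d x + ε))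
              ≤ CS4.P W (y + d y) - CS4.P W (y - d y) :=
            (hGmono y).monotone (show d x + ε ≤ d y by linarith)
          rw [hdeq y] at h3
          exact absurd (lt_of_lt_of_le hy1 h3) (by norm_num)
        · have := (hd y).1; linarith
    · -- x + d x → -∞
      rw [tendsto_atBot]
      intro b
      have hev : ∀ᶠ x in atBot, CS4.P W x ≤ CS4.P W b - 2 := hbot.eventually_le_atBot _
      filter_upwards [hev] with x hx
      by_contra hcon; push_neg at hcon
      have h1 : CS4.P W b ≤ CS4.P W (x + d x) := hPh.monotone hcon.le
      have h2 : CS4.P W (x - d x) ≤ CS4.P W x := hPh.monotone (by linarith [(hd x).1])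
      have h3 := hdeq x
      linarith
    · -- x - d x → ∞
      rw [tendsto_atTop]
      intro b
      have hev : ∀ᶠ x in atTop, CS4.P W b + 2 ≤ CS4.P W x := htop.eventually_ge_atTop _
      filter_upwards [hev] with x hx
      by_contra hcon; push_neg at hcon
      have h1 : CS4.P W (x - d x) ≤ CS4.P W b := hPh.monotone hcon.le
      have h2 : CS4.P W x ≤ CS4.P W (x + d x) := hPh.monotone (by linarith [(hd x).1])
      have h3 := hdeq x
      linarith

end
end
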